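/- arXiv:2210.02215 — 8 statements merged into one kernel-verified Lean document; each statement's English description precedes it below -/
import Mathlib

section
/- Global anchoring: let M : X^n → Y be an (ε,δ)-differentially private mechanism, let Ψ : Y → {1,…,N} be a test function, and let X_1,…,X_N ∈ X^n be datasets. Then for any anchor dataset Λ ∈ X^n, (1/N) Σ_{i=1}^N P(Ψ(M(X_i)) ≠ i) ≥ ((N−1)/N) · e^{−ε·max_i d_H(X_i,Λ)} − e^{−ε} · δ · max_i d_H(X_i,Λ). -/
open MeasureTheory ProbabilityTheory Real
open scoped ENNReal NNReal

variable {𝓧 𝓨 : Type*} [MeasurableSpace 𝓧] [MeasurableSpace 𝓨]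

/-- A randomized mechanism `M : 𝓧^n → 𝓨` (a Markov kernel) is `(ε, δ)`-differentially
private if for any two datasets at Hamming distance at most `1` and any measurable event `S`,
`P(M(x) ∈ S) ≤ e^ε P(M(y) ∈ S) + δ`. -/
def IsDP [DecidableEq 𝓧] {n : ℕ} (M : Kernel (Fin n → 𝓧) 𝓨) (ε δ : ℝ) : Prop :=
  ∀ x y : Fin n → 𝓧, hammingDist x y ≤ 1 →
    ∀ S : Set 𝓨, MeasurableSet S →
      M x S ≤ ENNReal.ofReal (Real.exp ε) * M y S + ENNReal.ofReal δ

lemma group_dp [DecidableEq 𝓧] {n : ℕ} (M : Kernel (Fin n → 𝓧) 𝓨) (ε δ : ℝ)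
    (hδ0 : 0 ≤ δ) (hDP : IsDP M ε δ) (S : Set 𝓨) (hS : MeasurableSet S) :
    ∀ (k : ℕ) (x y : Fin n → 𝓧), hammingDist x y = k →
      M x S ≤ ENNReal.ofReal (Real.exp (k * ε)) * M y S
        + ENNReal.ofReal (δ * ∑ j ∈ Finset.range k, Real.exp (j * ε)) := by
  intro k
  induction k with
  | zero =>
    intro x y h
    have hxy : x = y := hammingDist_eq_zero.mp h
    simp [hxy]
  | succ k ih =>
    intro x y h
    have hone : ∃ i, x i ≠ y i := by
      by_contra hc
      push_neg at hc
      have : x = y := funext hc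
      rw [this, hammingDist_self] at h
      omega
    obtain ⟨i, hi⟩ := hone
    set z := Function.update x i (y i) with hzdef
    have hxz : hammingDist x z ≤ 1 := by
      have hsub : ({j | x j ≠ z j} : Finset (Fin n)) ⊆ {i} := by
        intro j hj
        simp only [Finset.mem_filter, Finset.mem_univ, true_and] at hj
        simp only [Finset.mem_singleton]
        by_contra hji
        exact hj (by simp [hzdef, Function.update_of_ne hji])
      calc hammingDist x z = ({j | x j ≠ z j} : Finset (Fin n)).card := rfl
        _ ≤ ({i} : Finset (Fin n)).card := Finset.card_le_card hsub
        _ = 1 := Finset.card_singleton i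
    have hzy : hammingDist z y = k := by
      have heq : ({j | z j ≠ y j} : Finset (Fin n)) = ({j | x j ≠ y j} : Finset (Fin n)).erase i := by
        ext j
        simp only [Finset.mem_filter, Finset.mem_univ, true_and, Finset.mem_erase]
        constructor
        · intro hj
          have hji : j ≠ i := by
            intro he; subst he; exact hj (by simp [hzdef])
          exact ⟨hji, by rwa [hzdef, Function.update_of_ne hji] at hj⟩
        · intro ⟨hji, hj⟩
          rwa [hzdef, Function.update_of_ne hji]
      have hmem : i ∈ ({j | x j ≠ y j} : Finset (Fin n)) := by
        simp only [Finset.mem_filter, Finset.mem_univ, true_and]; exact hi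
      have : hammingDist z y = (({j | x j ≠ y j} : Finset (Fin n)).erase i).card := by
        rw [← heq]; rfl
      rw [this, Finset.card_erase_of_mem hmem]
      have : ({j | x j ≠ y j} : Finset (Fin n)).card = k + 1 := h
      omega
    have step1 := hDP x z hxz S hS
    have step2 := ih z y hzy
    have hsum0 : 0 ≤ ∑ j ∈ Finset.range k, Real.exp (j * ε) :=
      Finset.sum_nonneg fun j _ => (Real.exp_pos _).le
    calc M x S ≤ ENNReal.ofReal (Real.exp ε) * M z S + ENNReal.ofReal δ := step1
      _ ≤ ENNReal.ofReal (Real.exp ε) *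
            (ENNReal.ofReal (Real.exp (k * ε)) * M y S
              + ENNReal.ofReal (δ * ∑ j ∈ Finset.range k, Real.exp (j * ε)))
            + ENNReal.ofReal δ := by gcongr
      _ = ENNReal.ofReal (Real.exp ((k + 1 : ℕ) * ε)) * M y S
            + ENNReal.ofReal (δ * ∑ j ∈ Finset.range (k + 1), Real.exp (j * ε)) := by
        rw [mul_add, ← mul_assoc, ← ENNReal.ofReal_mul (Real.exp_pos _).le,
          ← Real.exp_add, add_assoc,
          ← ENNReal.ofReal_mul (Real.exp_pos _).le,
          ← ENNReal.ofReal_add (by positivity) hδ0]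
        congr 2
        · push_cast; ring
        · rw [Finset.sum_range_succ']
          have : ∀ j ∈ Finset.range k, Real.exp (((j : ℕ) + 1 : ℕ) * ε)
              = Real.exp ε * Real.exp (j * ε) := by
            intro j _
            rw [← Real.exp_add]; congr 1; push_cast; ring
          rw [Finset.sum_congr rfl this, ← Finset.mul_sum]
          simp [mul_add, mul_comm, mul_left_comm]

lemma group_dp_real [DecidableEq 𝓧] {n : ℕ} (M : Kernel (Fin n → 𝓧) 𝓨) [IsMarkovKernel M]
    (ε δ : ℝ) (hε : 0 < ε) (hδ0 : 0 ≤ δ) (hDP : IsDP M ε δ) (S : Set 𝓨) (hS : MeasurableSet S)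
    (x y : Fin n → 𝓧) :
    Real.exp (-ε * hammingDist x y) * (M x S).toReal
      - δ * hammingDist x y * Real.exp (-ε) ≤ (M y S).toReal := by
  set k : ℕ := hammingDist x y with hk
  have h := group_dp M ε δ hδ0 hDP S hS k x y rfl
  have hsum0 : 0 ≤ ∑ j ∈ Finset.range k, Real.exp (j * ε) :=
    Finset.sum_nonneg fun j _ => (Real.exp_pos _).le
  have hfin1 : ENNReal.ofReal (Real.exp (k * ε)) * M y S
      + ENNReal.ofReal (δ * ∑ j ∈ Finset.range k, Real.exp (j * ε)) ≠ ⊤ := by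
    refine ENNReal.add_ne_top.mpr ⟨?_, ENNReal.ofReal_ne_top⟩
    exact ENNReal.mul_ne_top ENNReal.ofReal_ne_top (measure_ne_top _ _)
  have hreal : (M x S).toReal ≤ Real.exp (k * ε) * (M y S).toReal
      + δ * ∑ j ∈ Finset.range k, Real.exp (j * ε) := by
    have := ENNReal.toReal_mono hfin1 h
    rwa [ENNReal.toReal_add (ENNReal.mul_ne_top ENNReal.ofReal_ne_top (measure_ne_top _ _))
      ENNReal.ofReal_ne_top, ENNReal.toReal_mul, ENNReal.toReal_ofReal (Real.exp_pos _).le,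
      ENNReal.toReal_ofReal (by positivity)] at this
  -- bound e^{-kε} * δ * Σ ≤ δ * k * e^{-ε}
  have hbound : Real.exp (-(k * ε)) * (δ * ∑ j ∈ Finset.range k, Real.exp (j * ε))
      ≤ δ * k * Real.exp (-ε) := by
    rw [Finset.mul_sum, Finset.mul_sum]
    have hterm : ∀ j ∈ Finset.range k,
        Real.exp (-(k * ε)) * Real.exp (j * ε) ≤ Real.exp (-ε) := by
      intro j hj
      rw [← Real.exp_add]
      apply Real.exp_le_exp.mpr
      have hjk : (j : ℝ) + 1 ≤ (k : ℝ) := by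
        have := Finset.mem_range.mp hj
        exact_mod_cast this
      nlinarith [hε]
    calc ∑ j ∈ Finset.range k, Real.exp (-(k * ε)) * (δ * Real.exp (j * ε))
        ≤ ∑ j ∈ Finset.range k, δ * Real.exp (-ε) := by
          apply Finset.sum_le_sum
          intro j hj
          calc Real.exp (-(k * ε)) * (δ * Real.exp (j * ε))
              = δ * (Real.exp (-(k * ε)) * Real.exp (j * ε)) := by ring
            _ ≤ δ * Real.exp (-ε) := mul_le_mul_of_nonneg_left (hterm j hj) hδ0
      _ = δ * k * Real.exp (-ε) := by
          rw [Finset.sum_const, Finset.card_range]; ring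
  have hexp : (0:ℝ) < Real.exp (k * ε) := Real.exp_pos _
  have key : Real.exp (-(k * ε)) * (M x S).toReal
      ≤ (M y S).toReal + Real.exp (-(k * ε)) * (δ * ∑ j ∈ Finset.range k, Real.exp (j * ε)) := by
    have h2 := mul_le_mul_of_nonneg_left hreal (Real.exp_pos (-(k * ε))).le
    rw [mul_add, ← mul_assoc, ← Real.exp_add] at h2
    simp only [neg_add_cancel, Real.exp_zero, one_mul] at h2
    exact h2
  have : Real.exp (-(k * ε)) * (M x S).toReal - δ * k * Real.exp (-ε) ≤ (M y S).toReal := by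
    linarith [hbound]
  calc Real.exp (-ε * k) * (M x S).toReal - δ * k * Real.exp (-ε)
      = Real.exp (-(k * ε)) * (M x S).toReal - δ * k * Real.exp (-ε) := by ring_nf
    _ ≤ (M y S).toReal := this


/-- **Global anchoring**: if `M` is `(ε, δ)`-DP, `Ψ` is a test function with `N` outcomes and
`X 1, …, X N` are datasets, then for any anchor dataset `Λ`,
`(1/N) ∑ i, P(Ψ(M(X i)) ≠ i) ≥ ((N-1)/N) e^{-ε max_i d_H(X i, Λ)}
  - e^{-ε} δ max_i d_H(X i, Λ)`. -/
theorem global_anchoring [DecidableEq 𝓧] {n N : ℕ} (hN : 0 < N)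
    (M : Kernel (Fin n → 𝓧) 𝓨) [IsMarkovKernel M]
    (ε δ : ℝ) (hε : 0 < ε) (hδ0 : 0 ≤ δ) (hδ1 : δ < 1) (hDP : IsDP M ε δ)
    (Ψ : 𝓨 → Fin N) (hΨ : Measurable Ψ)
    (X : Fin N → Fin n → 𝓧) (Λ : Fin n → 𝓧) :
    ((N : ℝ) - 1) / N *
        Real.exp (-ε * ((Finset.univ.sup fun i => hammingDist (X i) Λ : ℕ) : ℝ))
      - Real.exp (-ε) * δ * ((Finset.univ.sup fun i => hammingDist (X i) Λ : ℕ) : ℝ)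
    ≤ (N : ℝ)⁻¹ * ∑ i : Fin N, (M (X i) {y | Ψ y ≠ i}).toReal := by
  set D : ℕ := Finset.univ.sup fun i => hammingDist (X i) Λ with hD
  have hNr : (0:ℝ) < N := by exact_mod_cast hN
  have hScompl : ∀ i : Fin N, {y | Ψ y ≠ i} = (Ψ ⁻¹' {i})ᶜ := by
    intro i; ext y; simp
  have hSm : ∀ i : Fin N, MeasurableSet {y | Ψ y ≠ i} := by
    intro i; rw [hScompl i]; exact (hΨ (measurableSet_singleton i)).compl
  -- per-index bound
  have key : ∀ i : Fin N,
      Real.exp (-ε * D) * (M Λ {y | Ψ y ≠ i}).toReal - δ * D * Real.exp (-ε)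
        ≤ (M (X i) {y | Ψ y ≠ i}).toReal := by
    intro i
    have h1 := group_dp_real M ε δ hε hδ0 hDP _ (hSm i) Λ (X i)
    rw [hammingDist_comm Λ (X i)] at h1
    have hle : hammingDist (X i) Λ ≤ D :=
      Finset.le_sup (f := fun i => hammingDist (X i) Λ) (Finset.mem_univ i)
    have hler : (hammingDist (X i) Λ : ℝ) ≤ (D : ℝ) := by exact_mod_cast hle
    have hb0 : 0 ≤ (M Λ {y | Ψ y ≠ i}).toReal := ENNReal.toReal_nonneg
    have hexple : Real.exp (-ε * D) ≤ Real.exp (-ε * hammingDist (X i) Λ) := by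
      apply Real.exp_le_exp.mpr
      nlinarith
    have h2 : Real.exp (-ε * D) * (M Λ {y | Ψ y ≠ i}).toReal
        ≤ Real.exp (-ε * hammingDist (X i) Λ) * (M Λ {y | Ψ y ≠ i}).toReal :=
      mul_le_mul_of_nonneg_right hexple hb0
    have h3 : δ * hammingDist (X i) Λ * Real.exp (-ε) ≤ δ * D * Real.exp (-ε) :=
      mul_le_mul_of_nonneg_right (mul_le_mul_of_nonneg_left hler hδ0) (Real.exp_pos (-ε)).le
    linarith
  -- sum over the anchor
  have hsum1 : ∑ i : Fin N, (M Λ) (Ψ ⁻¹' {i}) = 1 := by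
    rw [sum_measure_preimage_singleton]
    · simp
    · intro i _; exact hΨ (measurableSet_singleton i)
  have hb : ∑ i : Fin N, (M Λ {y | Ψ y ≠ i}).toReal = (N : ℝ) - 1 := by
    have hbi : ∀ i : Fin N, (M Λ {y | Ψ y ≠ i}).toReal
        = 1 - ((M Λ) (Ψ ⁻¹' {i})).toReal := by
      intro i
      rw [hScompl i, prob_compl_eq_one_sub (hΨ (measurableSet_singleton i))]
      rw [ENNReal.toReal_sub_of_le prob_le_one ENNReal.one_ne_top, ENNReal.toReal_one]
    rw [Finset.sum_congr rfl fun i _ => hbi i, Finset.sum_sub_distrib,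
      Finset.sum_const, Finset.card_univ, ← ENNReal.toReal_sum
        (fun i _ => measure_ne_top _ _), hsum1]
    simp
  have hsumge : ((N : ℝ) - 1) * Real.exp (-ε * D) - N * (δ * D * Real.exp (-ε))
      ≤ ∑ i : Fin N, (M (X i) {y | Ψ y ≠ i}).toReal := by
    calc ((N : ℝ) - 1) * Real.exp (-ε * D) - N * (δ * D * Real.exp (-ε))
        = ∑ i : Fin N, (Real.exp (-ε * D) * (M Λ {y | Ψ y ≠ i}).toReal
            - δ * D * Real.exp (-ε)) := by
          rw [Finset.sum_sub_distrib, ← Finset.mul_sum, hb, Finset.sum_const,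
            Finset.card_univ]
          simp [mul_comm]
      _ ≤ _ := Finset.sum_le_sum fun i _ => key i
  have hfinal := mul_le_mul_of_nonneg_left hsumge (inv_nonneg.mpr hNr.le)
  calc ((N : ℝ) - 1) / N * Real.exp (-ε * D) - Real.exp (-ε) * δ * D
      = (N : ℝ)⁻¹ * (((N : ℝ) - 1) * Real.exp (-ε * D) - N * (δ * D * Real.exp (-ε))) := by
        have hN0 : (N:ℝ) ≠ 0 := ne_of_gt hNr
        rw [mul_sub]
        have h4 : ((N:ℝ))⁻¹ * ((N:ℝ) * (δ * (D:ℝ) * Real.exp (-ε)))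
            = δ * (D:ℝ) * Real.exp (-ε) := by
          rw [← mul_assoc, inv_mul_cancel₀ hN0, one_mul]
        rw [h4, div_eq_mul_inv]
        ring
    _ ≤ _ := hfinal
end

section
/- (ε,δ)-DP Le Cam matching: let M : X^n → Y be an (ε,δ)-differentially private mechanism and Ψ : Y → {1,2} a test function. Then for any two datasets X_1, X_2 ∈ X^n, (1/2)·(P(Ψ(M(X_1)) ≠ 1) + P(Ψ(M(X_2)) ≠ 2)) ≥ (1/2)·e^{−ε·⌈d_H(X_1,X_2)/2⌉} − e^{−ε}·δ·⌈d_H(X_1,X_2)/2⌉. -/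
/-!
Group privacy: chaining the DP inequality along `m` single-coordinate changes gives
`P(M(x) ∈ S) ≤ e^{mε} P(M(y) ∈ S) + m e^{(m-1)ε} δ` whenever `d_H(x, y) ≤ m`.
Two datasets at Hamming distance `d` have a midpoint `z` within `k = ⌈d/2⌉` of both, and the two
rejection regions of `Ψ` are complementary, so `1 = P(M(z) ∈ S) + P(M(z) ∉ S)` is bounded by
`e^{kε}` times the sum of the two error probabilities plus `2k e^{(k-1)ε} δ`.
-/

open MeasureTheory ProbabilityTheory Real
open scoped ENNReal NNReal

variable {𝓧 𝓨 : Type*} [MeasurableSpace 𝓧] [MeasurableSpace 𝓨]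

open Finset in
theorem exists_hammingDist_le_of_le_add {ι : Type*} {β : ι → Type*} [Fintype ι]
    [∀ i, DecidableEq (β i)]
    {x y : ∀ i, β i} {a b : ℕ} (h : hammingDist x y ≤ a + b) :
    ∃ z, hammingDist x z ≤ a ∧ hammingDist z y ≤ b := by
  classical
  set D : Finset ι := {i | x i ≠ y i}
  obtain ⟨A, hAD, hA⟩ := exists_subset_card_eq (min_le_right a #D)
  refine ⟨A.piecewise y x, ?_, ?_⟩
  · calc hammingDist x (A.piecewise y x) ≤ #A := card_le_card fun i hi => by
          by_contra hiA
          simp [hiA] at hi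
      _ ≤ a := hA ▸ min_le_left a #D
  · calc hammingDist (A.piecewise y x) y ≤ #(D \ A) := card_le_card fun i hi => by
          by_cases hiA : i ∈ A <;> simp_all [D]
      _ ≤ b := by
        rw [card_sdiff_of_subset hAD, hA]
        have hD : hammingDist x y = #D := rfl
        omega

namespace IsDP

variable [DecidableEq 𝓧] {n : ℕ} {M : Kernel (Fin n → 𝓧) 𝓨} {ε δ : ℝ}

theorem toReal_le [IsFiniteKernel M] (hδ : 0 ≤ δ) (hM : IsDP M ε δ) {x y : Fin n → 𝓧}
    (hxy : hammingDist x y ≤ 1) {S : Set 𝓨} (hS : MeasurableSet S) :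
    (M x S).toReal ≤ exp ε * (M y S).toReal + δ := by
  have hfin : ENNReal.ofReal (exp ε) * M y S ≠ ⊤ :=
    ENNReal.mul_ne_top ENNReal.ofReal_ne_top (measure_ne_top _ _)
  calc (M x S).toReal
      ≤ (ENNReal.ofReal (exp ε) * M y S + ENNReal.ofReal δ).toReal :=
        ENNReal.toReal_mono (ENNReal.add_ne_top.2 ⟨hfin, ENNReal.ofReal_ne_top⟩) (hM x y hxy S hS)
    _ = exp ε * (M y S).toReal + δ := by
        rw [ENNReal.toReal_add hfin ENNReal.ofReal_ne_top, ENNReal.toReal_mul,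
          ENNReal.toReal_ofReal (exp_pos ε).le, ENNReal.toReal_ofReal hδ]

theorem toReal_le_of_hammingDist_le [IsFiniteKernel M] (hε : 0 ≤ ε) (hδ : 0 ≤ δ)
    (hM : IsDP M ε δ) {S : Set 𝓨} (hS : MeasurableSet S) :
    ∀ {m : ℕ} {x y : Fin n → 𝓧}, hammingDist x y ≤ m →
      (M x S).toReal ≤ exp (m * ε) * (M y S).toReal + m * δ * exp ((m - 1) * ε)
  | 0, x, y, hxy => by simp [hammingDist_eq_zero.1 (Nat.le_zero.1 hxy)]
  | m + 1, x, y, hxy => by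
    obtain ⟨z, hxz, hzy⟩ := exists_hammingDist_le_of_le_add (hxy.trans (Nat.add_comm m 1).le)
    have hexp : exp ε * exp (m * ε) = exp ((m + 1 : ℕ) * ε) := by
      rw [← exp_add]; push_cast; ring_nf
    have hexp_pred : exp ε * exp ((m - 1) * ε) = exp (((m + 1 : ℕ) - 1) * ε) := by
      rw [← exp_add]; push_cast; ring_nf
    have hδexp : δ ≤ δ * exp (m * ε) := le_mul_of_one_le_right hδ (one_le_exp (by positivity))
    calc (M x S).toReal
        ≤ exp ε * (M z S).toReal + δ := hM.toReal_le hδ hxz hS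
      _ ≤ exp ε * (exp (m * ε) * (M y S).toReal + m * δ * exp ((m - 1) * ε)) + δ := by
        gcongr; exact toReal_le_of_hammingDist_le hε hδ hM hS hzy
      _ = exp ((m + 1 : ℕ) * ε) * (M y S).toReal + m * δ * exp (((m + 1 : ℕ) - 1) * ε) + δ := by
        rw [← hexp, ← hexp_pred]; ring
      _ ≤ exp ((m + 1 : ℕ) * ε) * (M y S).toReal
          + (m + 1 : ℕ) * δ * exp (((m + 1 : ℕ) - 1) * ε) := by
        push_cast; simp only [add_sub_cancel_right]; linarith

theorem exp_neg_mul_le_toReal_add_toReal_compl [IsMarkovKernel M] (hε : 0 ≤ ε) (hδ : 0 ≤ δ)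
    (hM : IsDP M ε δ) {k : ℕ} {x y : Fin n → 𝓧} (hxy : hammingDist x y ≤ k + k) {S : Set 𝓨}
    (hS : MeasurableSet S) :
    exp (-ε * k) ≤ (M x S).toReal + (M y Sᶜ).toReal + 2 * k * δ * exp (-ε) := by
  obtain ⟨z, hxz, hzy⟩ := exists_hammingDist_le_of_le_add hxy
  have hzS := toReal_le_of_hammingDist_le hε hδ hM hS (hammingDist_comm x z ▸ hxz)
  have hzSc := toReal_le_of_hammingDist_le hε hδ hM hS.compl hzy
  have hcancel : exp (-ε * k) * exp (k * ε) = 1 := by rw [← exp_add]; ring_nf; exact exp_zero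
  have hshift : exp (-ε * k) * exp ((k - 1) * ε) = exp (-ε) := by rw [← exp_add]; ring_nf
  calc exp (-ε * k) = exp (-ε * k) * ((M z S).toReal + (M z Sᶜ).toReal) := by
        rw [← Measure.real_def, ← Measure.real_def, probReal_add_probReal_compl hS, mul_one]
    _ ≤ exp (-ε * k) * (exp (k * ε) * ((M x S).toReal + (M y Sᶜ).toReal)
          + 2 * k * δ * exp ((k - 1) * ε)) := by gcongr exp (-ε * k) * ?_; linarith
    _ = (M x S).toReal + (M y Sᶜ).toReal + 2 * k * δ * exp (-ε) := by
        linear_combination ((M x S).toReal + (M y Sᶜ).toReal) * hcancel + 2 * k * δ * hshift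

end IsDP

theorem dp_lecam_matching_general [DecidableEq 𝓧] {n : ℕ}
    (M : Kernel (Fin n → 𝓧) 𝓨) [IsMarkovKernel M]
    (ε δ : ℝ) (hε : 0 < ε) (hδ0 : 0 ≤ δ) (hDP : IsDP M ε δ)
    (Ψ : 𝓨 → Fin 2) (hΨ : Measurable Ψ) (X₁ X₂ : Fin n → 𝓧) :
    (1 / 2 : ℝ) * Real.exp (-ε * (⌈(hammingDist X₁ X₂ : ℝ) / 2⌉₊ : ℝ))
      - Real.exp (-ε) * δ * (⌈(hammingDist X₁ X₂ : ℝ) / 2⌉₊ : ℝ)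
    ≤ (1 / 2 : ℝ) * ((M X₁ {y | Ψ y ≠ 0}).toReal + (M X₂ {y | Ψ y ≠ 1}).toReal) := by
  set k := ⌈(hammingDist X₁ X₂ : ℝ) / 2⌉₊
  have hk : hammingDist X₁ X₂ ≤ k + k := by
    have := Nat.le_ceil ((hammingDist X₁ X₂ : ℝ) / 2)
    exact_mod_cast (by linarith : (hammingDist X₁ X₂ : ℝ) ≤ k + k)
  have hcompl : {y | Ψ y ≠ 0}ᶜ = {y | Ψ y ≠ 1} := by
    ext y
    simp only [Set.mem_compl_iff, Set.mem_ofPred_eq, not_not, Fin.ext_iff]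
    omega
  have hS : MeasurableSet {y | Ψ y ≠ 0} := hΨ (measurableSet_singleton 0).compl
  have hbound := hDP.exp_neg_mul_le_toReal_add_toReal_compl hε.le hδ0 hk hS
  rw [hcompl] at hbound
  linarith

/-- **`(ε, δ)`-DP Le Cam matching**: if `M` is `(ε, δ)`-DP and `Ψ` is a binary test, then for
any two datasets `X₁, X₂`,
`(1/2)(P(Ψ(M(X₁)) ≠ 1) + P(Ψ(M(X₂)) ≠ 2))
  ≥ (1/2) e^{-ε ⌈d_H(X₁,X₂)/2⌉} - e^{-ε} δ ⌈d_H(X₁,X₂)/2⌉`. -/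
theorem dp_lecam_matching [DecidableEq 𝓧] {n : ℕ}
    (M : Kernel (Fin n → 𝓧) 𝓨) [IsMarkovKernel M]
    (ε δ : ℝ) (hε : 0 < ε) (hδ0 : 0 ≤ δ) (hδ1 : δ < 1) (hDP : IsDP M ε δ)
    (Ψ : 𝓨 → Fin 2) (hΨ : Measurable Ψ) (X₁ X₂ : Fin n → 𝓧) :
    (1 / 2 : ℝ) * Real.exp (-ε * (⌈(hammingDist X₁ X₂ : ℝ) / 2⌉₊ : ℝ))
      - Real.exp (-ε) * δ * (⌈(hammingDist X₁ X₂ : ℝ) / 2⌉₊ : ℝ)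
    ≤ (1 / 2 : ℝ) * ((M X₁ {y | Ψ y ≠ 0}).toReal + (M X₂ {y | Ψ y ≠ 1}).toReal) :=
  dp_lecam_matching_general M ε δ hε hδ0 hDP Ψ hΨ X₁ X₂
end

section
/- (ε,0)-DP Fano matching: let M : X^n → Y be an (ε,0)-differentially private mechanism, Ψ : Y → {1,…,N} a test function, and X_1,…,X_N ∈ X^n datasets. Then (1/N) Σ_{i=1}^N P(Ψ(M(X_i)) ≠ i) ≥ 1 − (1 + (ε/N²) Σ_{i=1}^N Σ_{j=1}^N d_H(X_i,X_j)) / ln(N). -/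
open MeasureTheory ProbabilityTheory Real
open scoped ENNReal NNReal

variable {𝓧 𝓨 : Type*} [MeasurableSpace 𝓧] [MeasurableSpace 𝓨]

lemma dp_group_privacy [DecidableEq 𝓧] {n : ℕ} (M : Kernel (Fin n → 𝓧) 𝓨) {ε : ℝ}
    (hDP : IsDP M ε 0) (S : Set 𝓨) (hS : MeasurableSet S) :
    ∀ (k : ℕ) (x y : Fin n → 𝓧), hammingDist x y = k →
      M x S ≤ ENNReal.ofReal (Real.exp (ε * k)) * M y S := by
  intro k
  induction k with
  | zero =>
    intro x y h
    rw [hammingDist_eq_zero.mp h]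
    simp
  | succ k ih =>
    intro x y h
    have hne : x ≠ y := by
      intro hxy; rw [hxy, hammingDist_self] at h; exact Nat.succ_ne_zero k h.symm
    obtain ⟨t, ht⟩ := Function.ne_iff.mp hne
    set x' := Function.update x t (y t) with hx'
    have hx't : x' t = y t := Function.update_self t (y t) x
    have hx'i : ∀ i, i ≠ t → x' i = x i := fun i hi => Function.update_of_ne hi (y t) x
    have h1 : hammingDist x x' ≤ 1 := by
      have hsub : ({i | x i ≠ x' i} : Finset (Fin n)) ⊆ {t} := by
        intro i hi
        simp only [Finset.mem_filter, Finset.mem_univ, true_and, ne_eq] at hi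
        simp only [Finset.mem_singleton]
        by_contra hit
        exact hi (hx'i i hit).symm
      calc hammingDist x x' ≤ ({t} : Finset (Fin n)).card := Finset.card_le_card hsub
        _ = 1 := Finset.card_singleton t
    have h2 : hammingDist x' y = k := by
      have heq : ({i | x' i ≠ y i} : Finset (Fin n)) =
          ({i | x i ≠ y i} : Finset (Fin n)).erase t := by
        ext i
        simp only [Finset.mem_filter, Finset.mem_univ, true_and, Finset.mem_erase, ne_eq]
        constructor
        · intro hi
          have hit : i ≠ t := by rintro rfl; exact hi hx't
          exact ⟨hit, by rwa [hx'i i hit] at hi⟩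
        · rintro ⟨hit, hi⟩
          rwa [hx'i i hit]
      have hmem : t ∈ ({i | x i ≠ y i} : Finset (Fin n)) := by
        simp only [Finset.mem_filter, Finset.mem_univ, true_and, ne_eq]; exact ht
      have : hammingDist x' y = hammingDist x y - 1 := by
        rw [hammingDist, hammingDist, heq, Finset.card_erase_of_mem hmem]
      rw [this, h]
      rfl
    rw [Nat.cast_add, Nat.cast_one]
    calc M x S ≤ ENNReal.ofReal (Real.exp ε) * M x' S + ENNReal.ofReal 0 := hDP x x' h1 S hS
      _ = ENNReal.ofReal (Real.exp ε) * M x' S := by simp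
      _ ≤ ENNReal.ofReal (Real.exp ε) * (ENNReal.ofReal (Real.exp (ε * k)) * M y S) :=
          mul_le_mul_right (ih x' y h2) _
      _ = ENNReal.ofReal (Real.exp (ε * (k+1))) * M y S := by
          rw [← mul_assoc, ← ENNReal.ofReal_mul (Real.exp_nonneg _), ← Real.exp_add]
          congr 2
          ring

/-- **`(ε, 0)`-DP Fano matching**: if `M` is `(ε, 0)`-DP, `Ψ` is a test function with `N`
outcomes and `X 1, …, X N` are datasets, then
`(1/N) ∑ i, P(Ψ(M(X i)) ≠ i) ≥ 1 - (1 + (ε/N²) ∑ i, ∑ j, d_H(X i, X j)) / ln N`. -/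
theorem dp_fano_matching [DecidableEq 𝓧] {n N : ℕ} (hN : 2 ≤ N)
    (M : Kernel (Fin n → 𝓧) 𝓨) [IsMarkovKernel M]
    (ε : ℝ) (hε : 0 < ε) (hDP : IsDP M ε 0)
    (Ψ : 𝓨 → Fin N) (hΨ : Measurable Ψ) (X : Fin N → Fin n → 𝓧) :
    1 - (1 + ε / (N : ℝ) ^ 2 *
          ∑ i : Fin N, ∑ j : Fin N, (hammingDist (X i) (X j) : ℝ)) / Real.log N
    ≤ (N : ℝ)⁻¹ * ∑ i : Fin N, (M (X i) {y | Ψ y ≠ i}).toReal := by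
  have hN0 : (0:ℝ) < N := by positivity
  have hN1 : (1:ℝ) < N := by exact_mod_cast Nat.lt_of_lt_of_le one_lt_two hN
  have hlogN : 0 < Real.log N := Real.log_pos hN1
  set S : Fin N → Set 𝓨 := fun i => Ψ ⁻¹' {i} with hSdef
  have hSm : ∀ i, MeasurableSet (S i) := fun i => hΨ (measurableSet_singleton i)
  set q : Fin N → ℝ := fun i => (M (X i) (S i)).toReal with hqdef
  set r : Fin N → Fin N → ℝ := fun i j => (M (X j) (S i)).toReal with hrdef
  set D : ℝ := ∑ i : Fin N, ∑ j : Fin N, (hammingDist (X i) (X j) : ℝ) with hDdef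
  -- basic positivity
  have hq0 : ∀ i, 0 ≤ q i := fun i => ENNReal.toReal_nonneg
  have hq1 : ∀ i, q i ≤ 1 := by
    intro i
    have := prob_le_one (μ := M (X i)) (s := S i)
    simpa [hqdef] using ENNReal.toReal_mono ENNReal.one_ne_top this
  have hr0 : ∀ i j, 0 ≤ r i j := fun i j => ENNReal.toReal_nonneg
  -- group privacy, real version
  have hgp : ∀ i j, q i ≤ Real.exp (ε * (hammingDist (X i) (X j) : ℝ)) * r i j := by
    intro i j
    have h := dp_group_privacy M hDP (S i) (hSm i) (hammingDist (X i) (X j)) (X i) (X j) rfl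
    have hfin : ENNReal.ofReal (Real.exp (ε * (hammingDist (X i) (X j) : ℝ))) * M (X j) (S i)
        ≠ ∞ := by
      apply ENNReal.mul_ne_top ENNReal.ofReal_ne_top (measure_ne_top _ _)
    have := ENNReal.toReal_mono hfin h
    rwa [ENNReal.toReal_mul, ENNReal.toReal_ofReal (Real.exp_nonneg _)] at this
  -- rows of r sum to one
  have hrsum : ∀ j, ∑ i : Fin N, r i j = 1 := by
    intro j
    have hdisj : Pairwise (Function.onFun Disjoint S) := by
      intro a b hab
      exact (Set.disjoint_singleton.mpr hab).preimage Ψ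
    have hunion : ⋃ i, S i = Set.univ := by
      ext y; simp [hSdef]
    have h1 : M (X j) (⋃ i, S i) = ∑' i, M (X j) (S i) := measure_iUnion hdisj hSm
    rw [hunion, measure_univ, tsum_fintype] at h1
    rw [hrdef]
    rw [← ENNReal.toReal_sum (fun i _ => measure_ne_top _ _), ← h1]
    simp
  -- key pointwise inequality
  have key : ∀ i j, q i * Real.log N ≤ N * r i j + ε * (hammingDist (X i) (X j) : ℝ) := by
    intro i j
    set d : ℝ := (hammingDist (X i) (X j) : ℝ) with hd
    have hd0 : 0 ≤ d := Nat.cast_nonneg _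
    rcases eq_or_lt_of_le (hq0 i) with hq | hq
    · rw [← hq]
      have : 0 ≤ (N:ℝ) * r i j := mul_nonneg hN0.le (hr0 i j)
      nlinarith [mul_nonneg hε.le hd0]
    · have hrpos : 0 < r i j := by
        by_contra hrp
        push_neg at hrp
        have : r i j = 0 := le_antisymm hrp (hr0 i j)
        have hg := hgp i j
        rw [this, mul_zero] at hg
        linarith
      have hratio : 0 < (N:ℝ) * r i j / q i := by positivity
      have hlog1 : Real.log ((N:ℝ) * r i j / q i) ≤ (N:ℝ) * r i j / q i - 1 :=
        Real.log_le_sub_one_of_pos hratio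
      have hlog2 : Real.log N - ε * d ≤ Real.log ((N:ℝ) * r i j / q i) := by
        rw [Real.log_div (by positivity) (ne_of_gt hq), Real.log_mul (ne_of_gt hN0)
          (ne_of_gt hrpos)]
        have hlogqr : Real.log (q i) ≤ ε * d + Real.log (r i j) := by
          have := Real.log_le_log hq (hgp i j)
          rwa [Real.log_mul (ne_of_gt (Real.exp_pos _)) (ne_of_gt hrpos),
            Real.log_exp] at this
        linarith
      have hmain : Real.log N - ε * d ≤ (N:ℝ) * r i j / q i - 1 := le_trans hlog2 hlog1
      have hcancel : q i * ((N:ℝ) * r i j / q i) = (N:ℝ) * r i j := by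
        field_simp
      have hthis := mul_le_mul_of_nonneg_left hmain (hq0 i)
      rw [mul_sub, mul_sub, mul_one, hcancel] at hthis
      have hqed : q i * (ε * d) ≤ ε * d := by
        nlinarith [hq1 i, hq0 i, mul_nonneg hε.le hd0]
      linarith [hq0 i]
  -- sum it up
  set Q : ℝ := ∑ i : Fin N, q i with hQdef
  have hsum : (N:ℝ) * (Q * Real.log N) ≤ (N:ℝ) * N + ε * D := by
    have h := Finset.sum_le_sum (fun i (_ : i ∈ Finset.univ) =>
      Finset.sum_le_sum (fun j (_ : j ∈ Finset.univ) => key i j))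
    have hlhs : ∑ i : Fin N, ∑ _j : Fin N, q i * Real.log N = (N:ℝ) * (Q * Real.log N) := by
      simp only [Finset.sum_const, Finset.card_univ, Fintype.card_fin, nsmul_eq_mul]
      rw [← Finset.mul_sum, ← Finset.sum_mul]
    have hrhs : ∑ i : Fin N, ∑ j : Fin N, ((N:ℝ) * r i j + ε * (hammingDist (X i) (X j) : ℝ))
        = (N:ℝ) * N + ε * D := by
      have h1 : ∑ i : Fin N, ∑ j : Fin N, (N:ℝ) * r i j = (N:ℝ) * N := by
        rw [Finset.sum_comm]
        have hin : ∀ j : Fin N, ∑ i : Fin N, (N:ℝ) * r i j = N := by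
          intro j; rw [← Finset.mul_sum, hrsum j, mul_one]
        rw [Finset.sum_congr rfl (fun j _ => hin j)]
        simp [Finset.sum_const, Finset.card_univ, mul_comm]
      have h2 : ∑ i : Fin N, ∑ j : Fin N, ε * (hammingDist (X i) (X j) : ℝ) = ε * D := by
        rw [hDdef, Finset.mul_sum]
        exact Finset.sum_congr rfl (fun i _ => by rw [Finset.mul_sum])
      simp only [Finset.sum_add_distrib]
      rw [h1, h2]
    calc (N:ℝ) * (Q * Real.log N) = ∑ i : Fin N, ∑ _j : Fin N, q i * Real.log N := hlhs.symm
      _ ≤ _ := h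
      _ = (N:ℝ) * N + ε * D := hrhs
  -- complement probabilities
  have hcompl : ∀ i, (M (X i) {y | Ψ y ≠ i}).toReal = 1 - q i := by
    intro i
    have hset : {y | Ψ y ≠ i} = (S i)ᶜ := by ext y; simp [hSdef]
    rw [hset, prob_compl_eq_one_sub (hSm i),
      ENNReal.toReal_sub_of_le prob_le_one ENNReal.one_ne_top]
    simp [hqdef]
  simp only [hcompl, Finset.sum_sub_distrib, Finset.sum_const, Finset.card_univ,
    Fintype.card_fin, nsmul_eq_mul, mul_one]
  -- goal: 1 - (1 + ε/N^2*D)/log N ≤ N⁻¹ * (N - Q)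
  have hQle : Q / N ≤ (1 + ε / (N:ℝ)^2 * D) / Real.log N := by
    rw [div_le_div_iff₀ hN0 hlogN]
    have heq : (1 + ε / (N:ℝ)^2 * D) * N = ((N:ℝ) * N + ε * D) / N := by
      field_simp
    rw [heq, le_div_iff₀ hN0]
    nlinarith [hsum]
  have : (N:ℝ)⁻¹ * ((N:ℝ) - Q) = 1 - Q / N := by field_simp
  rw [this]
  linarith [hQle]
end

section
/- ρ-zCDP Le Cam matching: let M : X^n → Y be a ρ-zero-concentrated differentially private mechanism and Ψ : Y → {1,2} a test function. Then for any two datasets X_1, X_2 ∈ X^n, (1/2)·(P(Ψ(M(X_1)) ≠ 1) + P(Ψ(M(X_2)) ≠ 2)) ≥ (1/2)·(1 − sqrt(ρ/2)·d_H(X_1,X_2)). -/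
open MeasureTheory ProbabilityTheory Real
open scoped ENNReal NNReal

variable {𝓧 𝓨 : Type*} [MeasurableSpace 𝓧] [MeasurableSpace 𝓨]

open scoped Classical in
/-- The Renyi divergence of order `a`:
`D_a(P ‖ Q) = (a - 1)⁻¹ log ∫ (dP/dQ)^a dQ`, with value `∞` when `P` is not absolutely
continuous w.r.t. `Q` or the integral is infinite. -/
noncomputable def renyiDiv {α : Type*} [MeasurableSpace α] (a : ℝ) (P Q : Measure α) : ℝ≥0∞ :=
  if P ≪ Q ∧ ∫⁻ x, (P.rnDeriv Q x) ^ a ∂Q ≠ ⊤ then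
    ENNReal.ofReal ((a - 1)⁻¹ * Real.log (∫⁻ x, (P.rnDeriv Q x) ^ a ∂Q).toReal)
  else ⊤

/-- A randomized mechanism `M : 𝓧^n → 𝓨` is `ρ`-zero-concentrated differentially private if
for any two datasets at Hamming distance at most `1` and any order `a ∈ (1, ∞)`,
`D_a(M(x) ‖ M(y)) ≤ ρ a`. -/
def IsZCDP [DecidableEq 𝓧] {n : ℕ} (M : Kernel (Fin n → 𝓧) 𝓨) (ρ : ℝ) : Prop :=
  ∀ x y : Fin n → 𝓧, hammingDist x y ≤ 1 → ∀ a : ℝ, 1 < a →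
    renyiDiv a (M x) (M y) ≤ ENNReal.ofReal (ρ * a)


private lemma logit_mono : MonotoneOn (fun x : ℝ => log x - log (1-x) - 4*x) (Set.Ioo 0 1) := by
  have hderiv : ∀ x ∈ Set.Ioo (0:ℝ) 1, HasDerivAt (fun x : ℝ => log x - log (1-x) - 4*x)
      (x⁻¹ + (1-x)⁻¹ - 4) x := by
    intro x hx
    have h1 : HasDerivAt (fun x : ℝ => log x) x⁻¹ x := Real.hasDerivAt_log hx.1.ne'
    have h2 : HasDerivAt (fun x : ℝ => log (1-x)) ((1-x)⁻¹ * (-1)) x :=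
      (Real.hasDerivAt_log (by linarith [hx.2] : (1:ℝ)-x ≠ 0)).comp x
        ((hasDerivAt_id x).const_sub 1)
    have h3 : HasDerivAt (fun x : ℝ => 4*x) 4 x := by
      simpa using (hasDerivAt_id x).const_mul 4
    exact ((h1.sub h2).sub h3).congr_deriv (by ring)
  apply monotoneOn_of_deriv_nonneg (convex_Ioo 0 1)
  · exact fun x hx => ((hderiv x hx).continuousAt).continuousWithinAt
  · intro x hx
    rw [interior_Ioo] at hx
    exact (hderiv x hx).differentiableAt.differentiableWithinAt
  · intro x hx
    rw [interior_Ioo] at hx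
    rw [(hderiv x hx).deriv]
    have hx0 := hx.1
    have hx1 : (0:ℝ) < 1 - x := by linarith [hx.2]
    have e1 : x * x⁻¹ = 1 := mul_inv_cancel₀ hx0.ne'
    have e2 : (1-x) * (1-x)⁻¹ = 1 := mul_inv_cancel₀ hx1.ne'
    nlinarith [sq_nonneg (2*x-1), mul_pos hx0 hx1, inv_pos.mpr hx0, inv_pos.mpr hx1,
      mul_pos (mul_pos hx0 hx1) (add_pos (inv_pos.mpr hx0) (inv_pos.mpr hx1))]

private lemma binary_pinsker {p q : ℝ} (hp : p ∈ Set.Icc (0:ℝ) 1) (hq : q ∈ Set.Ioo (0:ℝ) 1) :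
    2*(p-q)^2 ≤ p*(log p - log q) + (1-p)*(log (1-p) - log (1-q)) := by
  set f : ℝ → ℝ := fun x => x*log x - x*log q + ((1-x)*log (1-x) - (1-x)*log (1-q)) - 2*(x-q)^2
    with hf
  have hcont : Continuous f := by
    apply Continuous.sub
    · exact (Real.continuous_mul_log.sub (continuous_id.mul continuous_const)).add
        ((Real.continuous_mul_log.comp (continuous_const.sub continuous_id)).sub
          ((continuous_const.sub continuous_id).mul continuous_const))
    · continuity
  have hderiv : ∀ x ∈ Set.Ioo (0:ℝ) 1, HasDerivAt f
      ((log x - log (1-x) - 4*x) - (log q - log (1-q) - 4*q)) x := by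
    intro x hx
    have hx1 : (1:ℝ) - x ≠ 0 := by have := hx.2; intro h; linarith [h]
    have h1 : HasDerivAt (fun x : ℝ => x * log x) (log x + 1) x :=
      Real.hasDerivAt_mul_log hx.1.ne'
    have h2 : HasDerivAt (fun x : ℝ => x * log q) (log q) x := by
      simpa using (hasDerivAt_id x).mul_const (log q)
    have h3 : HasDerivAt (fun x : ℝ => (1-x) * log (1-x)) ((log (1-x) + 1) * (-1)) x :=
      (Real.hasDerivAt_mul_log hx1).comp x ((hasDerivAt_id x).const_sub 1)
    have h4 : HasDerivAt (fun x : ℝ => (1-x) * log (1-q)) (-log (1-q)) x := by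
      simpa using ((hasDerivAt_id x).const_sub 1).mul_const (log (1-q))
    have h5 : HasDerivAt (fun x : ℝ => 2*(x-q)^2) (2*(2*(x-q))) x := by
      simpa using (((hasDerivAt_id x).sub_const q).pow 2).const_mul 2
    exact (((h1.sub h2).add (h3.sub h4)).sub h5).congr_deriv (by ring)
  have hfq : f q = 0 := by simp [hf]
  have key : ∀ x ∈ Set.Icc (0:ℝ) 1, 0 ≤ f x := by
    intro x hx
    rcases le_total x q with hxq | hxq
    ·
      have hanti : AntitoneOn f (Set.Icc 0 q) := by
        apply antitoneOn_of_deriv_nonpos (convex_Icc 0 q) hcont.continuousOn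
        · intro y hy
          rw [interior_Icc] at hy
          exact (hderiv y ⟨hy.1, lt_trans hy.2 hq.2⟩).differentiableAt.differentiableWithinAt
        · intro y hy
          rw [interior_Icc] at hy
          have hy' : y ∈ Set.Ioo (0:ℝ) 1 := ⟨hy.1, lt_trans hy.2 hq.2⟩
          rw [(hderiv y hy').deriv]
          have := logit_mono hy' hq (le_of_lt hy.2)
          dsimp only at this
          linarith
      have := hanti ⟨hx.1, hxq⟩ ⟨hq.1.le, le_refl q⟩ hxq
      linarith [hfq ▸ this]
    · have hmono : MonotoneOn f (Set.Icc q 1) := by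
        apply monotoneOn_of_deriv_nonneg (convex_Icc q 1) hcont.continuousOn
        · intro y hy
          rw [interior_Icc] at hy
          exact (hderiv y ⟨lt_trans hq.1 hy.1, hy.2⟩).differentiableAt.differentiableWithinAt
        · intro y hy
          rw [interior_Icc] at hy
          have hy' : y ∈ Set.Ioo (0:ℝ) 1 := ⟨lt_trans hq.1 hy.1, hy.2⟩
          rw [(hderiv y hy').deriv]
          have := logit_mono hq hy' (le_of_lt hy.1)
          dsimp only at this
          linarith
      have := hmono ⟨le_refl q, hq.2.le⟩ ⟨hxq, hx.2⟩ hxq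
      linarith [hfq ▸ this]
  have := key p hp
  simp only [hf] at this
  nlinarith [this]

private lemma binary_renyi {p q a : ℝ} (hp : p ∈ Set.Icc (0:ℝ) 1) (hq : q ∈ Set.Ioo (0:ℝ) 1)
    (ha : 1 < a) :
    Real.exp (2*(a-1)*(p-q)^2) ≤ p ^ a * q ^ (1-a) + (1-p) ^ a * (1-q) ^ (1-a) := by
  have ha1 : (0:ℝ) < a - 1 := by linarith
  have hq1 : (0:ℝ) < 1 - q := by linarith [hq.2]
  have ha0 : a ≠ 0 := by linarith
  rcases eq_or_lt_of_le hp.1 with hp0 | hp0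
  · -- p = 0
    have hP := binary_pinsker hp hq
    rw [← hp0]
    rw [Real.zero_rpow ha0]
    norm_num
    rw [Real.rpow_def_of_pos hq1, Real.exp_le_exp]
    rw [← hp0] at hP
    simp only [zero_mul, Real.log_one, zero_sub, sub_zero, one_mul, zero_add] at hP
    nlinarith [hP]
  rcases eq_or_lt_of_le hp.2 with hp1 | hp1
  · -- p = 1
    have hP := binary_pinsker hp hq
    rw [hp1]
    rw [Real.one_rpow, one_mul, sub_self, Real.zero_rpow ha0, zero_mul, add_zero,
      Real.rpow_def_of_pos hq.1, Real.exp_le_exp]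
    rw [hp1] at hP
    simp only [Real.log_one, sub_self, zero_mul, zero_sub, sub_zero, one_mul, add_zero,
      zero_add] at hP
    nlinarith [hP]
  -- interior
  have hp1' : (0:ℝ) < 1 - p := by linarith
  have e1 : p ^ a * q ^ (1-a) = p * Real.exp ((a-1) * (log p - log q)) := by
    calc p ^ a * q ^ (1-a) = Real.exp (log p * a + log q * (1-a)) := by
          rw [Real.rpow_def_of_pos hp0, Real.rpow_def_of_pos hq.1, Real.exp_add]
      _ = Real.exp (log p) * Real.exp ((a-1) * (log p - log q)) := by
          rw [← Real.exp_add]; congr 1; ring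
      _ = p * Real.exp ((a-1) * (log p - log q)) := by rw [Real.exp_log hp0]
  have e2 : (1-p) ^ a * (1-q) ^ (1-a) = (1-p) * Real.exp ((a-1) * (log (1-p) - log (1-q))) := by
    calc (1-p) ^ a * (1-q) ^ (1-a) = Real.exp (log (1-p) * a + log (1-q) * (1-a)) := by
          rw [Real.rpow_def_of_pos hp1', Real.rpow_def_of_pos hq1, Real.exp_add]
      _ = Real.exp (log (1-p)) * Real.exp ((a-1) * (log (1-p) - log (1-q))) := by
          rw [← Real.exp_add]; congr 1; ring
      _ = (1-p) * Real.exp ((a-1) * (log (1-p) - log (1-q))) := by rw [Real.exp_log hp1']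
  rw [e1, e2]
  have jensen : Real.exp (p * ((a-1) * (log p - log q)) + (1-p) * ((a-1) * (log (1-p) - log (1-q))))
      ≤ p * Real.exp ((a-1) * (log p - log q)) + (1-p) * Real.exp ((a-1) * (log (1-p) - log (1-q))) := by
    have := convexOn_exp.2 (Set.mem_univ ((a-1) * (log p - log q)))
      (Set.mem_univ ((a-1) * (log (1-p) - log (1-q)))) hp0.le hp1'.le (by ring)
    simpa [smul_eq_mul] using this
  refine le_trans ?_ jensen
  rw [Real.exp_le_exp]
  have hP := binary_pinsker hp hq
  nlinarith [hP]

private lemma step_bound {P Q : Measure 𝓨} [IsProbabilityMeasure P] [IsProbabilityMeasure Q]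
    {ρ : ℝ} (hρ : 0 < ρ)
    (h : ∀ a : ℝ, 1 < a → renyiDiv a P Q ≤ ENNReal.ofReal (ρ * a))
    {S : Set 𝓨} (hS : MeasurableSet S) :
    (P S).toReal - (Q S).toReal ≤ Real.sqrt (ρ / 2) := by
  -- extract absolute continuity and integral facts for each a
  have extract : ∀ a : ℝ, 1 < a → P ≪ Q ∧ (∫⁻ x, (P.rnDeriv Q x) ^ a ∂Q) ≠ ⊤ ∧
      (∫⁻ x, (P.rnDeriv Q x) ^ a ∂Q).toReal ≤ Real.exp ((a-1) * (ρ * a)) := by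
    intro a ha
    have hle := h a ha
    rw [renyiDiv] at hle
    split_ifs at hle with hc
    · obtain ⟨hac, hI⟩ := hc
      refine ⟨hac, hI, ?_⟩
      have hρa : (0:ℝ) ≤ ρ * a := by positivity
      have h1 : (a - 1)⁻¹ * Real.log (∫⁻ x, (P.rnDeriv Q x) ^ a ∂Q).toReal ≤ ρ * a :=
        (ENNReal.ofReal_le_ofReal_iff hρa).mp hle
      have ha1 : (0:ℝ) < a - 1 := by linarith
      have h2 : Real.log (∫⁻ x, (P.rnDeriv Q x) ^ a ∂Q).toReal ≤ (a-1) * (ρ * a) := by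
        rw [inv_mul_le_iff₀ ha1] at h1
        exact h1
      rcases le_or_gt (∫⁻ x, (P.rnDeriv Q x) ^ a ∂Q).toReal 0 with h0 | h0
      · exact h0.trans (Real.exp_pos _).le
      · exact (Real.log_le_iff_le_exp h0).mp h2
    · exact absurd (top_le_iff.mp hle) ENNReal.ofReal_ne_top
  have hac : P ≪ Q := (extract 2 one_lt_two).1
  by_cases hq0 : Q S = 0
  · have hp0 : P S = 0 := hac hq0
    rw [hp0, hq0]
    simp only [ENNReal.toReal_zero, sub_zero]
    positivity
  by_cases hq1 : Q Sᶜ = 0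
  · have hp1 : P Sᶜ = 0 := hac hq1
    have e1 : P S = 1 := by
      have := measure_add_measure_compl (μ := P) hS
      rw [hp1, add_zero] at this
      simp [this]
    have e2 : Q S = 1 := by
      have := measure_add_measure_compl (μ := Q) hS
      rw [hq1, add_zero] at this
      simp [this]
    rw [e1, e2]
    simp only [ENNReal.toReal_one, sub_self]
    positivity
  -- main case
  set p : ℝ := (P S).toReal with hp
  set q : ℝ := (Q S).toReal with hq
  have hPS1 : P S ≤ 1 := prob_le_one
  have hQS1 : Q S ≤ 1 := prob_le_one
  have hpmem : p ∈ Set.Icc (0:ℝ) 1 := ⟨ENNReal.toReal_nonneg, by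
    simpa using ENNReal.toReal_mono ENNReal.one_ne_top hPS1⟩
  have hq_lt1 : Q S < 1 := by
    rcases lt_or_eq_of_le hQS1 with h | h
    · exact h
    · exfalso; apply hq1
      rw [prob_compl_eq_one_sub hS, h, tsub_self]
  have hqmem : q ∈ Set.Ioo (0:ℝ) 1 := by
    constructor
    · exact ENNReal.toReal_pos hq0 (measure_ne_top _ _)
    · exact (ENNReal.toReal_lt_toReal (measure_ne_top _ _) ENNReal.one_ne_top).mpr hq_lt1
      |>.trans_eq ENNReal.toReal_one
  -- complements in real terms
  have hpc : (P Sᶜ).toReal = 1 - p := by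
    rw [prob_compl_eq_one_sub hS, ENNReal.toReal_sub_of_le hPS1 ENNReal.one_ne_top,
      ENNReal.toReal_one]
  have hqc : (Q Sᶜ).toReal = 1 - q := by
    rw [prob_compl_eq_one_sub hS, ENNReal.toReal_sub_of_le hQS1 ENNReal.one_ne_top,
      ENNReal.toReal_one]
  -- key inequality for each a > 1
  have key : ∀ a : ℝ, 1 < a → 2 * (p - q)^2 ≤ ρ * a := by
    intro a ha
    obtain ⟨-, hIfin, hIle⟩ := extract a ha
    have ha1 : (0:ℝ) < a - 1 := by linarith
    have ha0 : a ≠ 0 := by linarith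
    set r : 𝓨 → ℝ≥0∞ := P.rnDeriv Q with hr
    -- Hölder on a measurable set T
    have holder : ∀ T : Set 𝓨, MeasurableSet T → Q T ≠ 0 →
        (P T).toReal ^ a * (Q T).toReal ^ (1-a) ≤ (∫⁻ x in T, r x ^ a ∂Q).toReal := by
      intro T hT hQT0
      have hconj : a.HolderConjugate (a / (a-1)) := by
        rw [Real.holderConjugate_iff]
        constructor
        · exact ha
        · field_simp
          ring
      have hH := ENNReal.lintegral_mul_le_Lp_mul_Lq (Q.restrict T) hconj
        (Measure.measurable_rnDeriv P Q).aemeasurable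
        (aemeasurable_const (b := (1:ℝ≥0∞)))
      simp only [Pi.mul_apply, mul_one, ENNReal.one_rpow, lintegral_const,
        Measure.restrict_apply_univ, one_mul] at hH
      rw [Measure.setLIntegral_rnDeriv hac T] at hH
      -- hH : P T ≤ (∫⁻ x in T, r x ^ a ∂Q) ^ (1/a) * Q T ^ (1/(a/(a-1)))
      have hAfin : (∫⁻ x in T, r x ^ a ∂Q) ≠ ⊤ := by
        refine ne_top_of_le_ne_top hIfin ?_
        exact lintegral_mono' Measure.restrict_le_self le_rfl
      have hQTfin : Q T ≠ ⊤ := measure_ne_top _ _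
      have hRHSfin : (∫⁻ x in T, r x ^ a ∂Q) ^ (1/a) * Q T ^ (1/(a/(a-1))) ≠ ⊤ := by
        apply ENNReal.mul_ne_top
        · exact ENNReal.rpow_ne_top_of_nonneg (by positivity) hAfin
        · exact ENNReal.rpow_ne_top_of_nonneg (by positivity) hQTfin
      have hreal : (P T).toReal ≤
          (∫⁻ x in T, r x ^ a ∂Q).toReal ^ (1/a) * (Q T).toReal ^ (1/(a/(a-1))) := by
        have := ENNReal.toReal_mono hRHSfin hH
        rwa [ENNReal.toReal_mul, ← ENNReal.toReal_rpow, ← ENNReal.toReal_rpow] at this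
      have hb : 1/(a/(a-1)) = (a-1)/a := by field_simp
      rw [hb] at hreal
      set Ar : ℝ := (∫⁻ x in T, r x ^ a ∂Q).toReal with hAr
      have hAr0 : 0 ≤ Ar := ENNReal.toReal_nonneg
      have hqT0 : 0 < (Q T).toReal := ENNReal.toReal_pos hQT0 hQTfin
      have hstep : (P T).toReal ^ a ≤ Ar * (Q T).toReal ^ (a-1) := by
        calc (P T).toReal ^ a ≤ (Ar ^ (1/a) * (Q T).toReal ^ ((a-1)/a)) ^ a :=
              Real.rpow_le_rpow ENNReal.toReal_nonneg hreal (by linarith)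
          _ = (Ar ^ (1/a)) ^ a * ((Q T).toReal ^ ((a-1)/a)) ^ a := by
              rw [Real.mul_rpow (by positivity) (by positivity)]
          _ = Ar * (Q T).toReal ^ (a-1) := by
              rw [← Real.rpow_mul hAr0, ← Real.rpow_mul hqT0.le, one_div,
                inv_mul_cancel₀ ha0, Real.rpow_one, div_mul_cancel₀ _ ha0]
      -- multiply by (Q T).toReal ^ (1-a)
      have hfinal : (P T).toReal ^ a * (Q T).toReal ^ (1-a) ≤ Ar := by
        have h1 : (P T).toReal ^ a * (Q T).toReal ^ (1-a) ≤
            Ar * (Q T).toReal ^ (a-1) * (Q T).toReal ^ (1-a) :=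
          mul_le_mul_of_nonneg_right hstep (Real.rpow_nonneg hqT0.le _)
        have h2 : Ar * (Q T).toReal ^ (a-1) * (Q T).toReal ^ (1-a) = Ar := by
          rw [mul_assoc, ← Real.rpow_add hqT0]
          norm_num
        rw [h2] at h1
        exact h1
      exact hfinal
    -- apply to S and Sᶜ
    have hHS := holder S hS hq0
    have hHSc := holder Sᶜ hS.compl hq1
    rw [hpc, hqc] at hHSc
    -- sum of integrals
    have hsum : (∫⁻ x in S, r x ^ a ∂Q).toReal + (∫⁻ x in Sᶜ, r x ^ a ∂Q).toReal =
        (∫⁻ x, r x ^ a ∂Q).toReal := by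
      rw [← ENNReal.toReal_add, lintegral_add_compl _ hS]
      · exact ne_top_of_le_ne_top hIfin (lintegral_mono' Measure.restrict_le_self le_rfl)
      · exact ne_top_of_le_ne_top hIfin (lintegral_mono' Measure.restrict_le_self le_rfl)
    have hBR := binary_renyi hpmem hqmem ha
    have hchain : Real.exp (2*(a-1)*(p-q)^2) ≤ Real.exp ((a-1) * (ρ * a)) := by
      calc Real.exp (2*(a-1)*(p-q)^2) ≤ p ^ a * q ^ (1-a) + (1-p) ^ a * (1-q) ^ (1-a) := hBR
        _ ≤ (∫⁻ x in S, r x ^ a ∂Q).toReal + (∫⁻ x in Sᶜ, r x ^ a ∂Q).toReal :=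
            add_le_add hHS hHSc
        _ = (∫⁻ x, r x ^ a ∂Q).toReal := hsum
        _ ≤ Real.exp ((a-1) * (ρ * a)) := hIle
    have := Real.exp_le_exp.mp hchain
    have h3 : (a-1) * (2*(p-q)^2) ≤ (a-1) * (ρ * a) := by nlinarith [this]
    have h4 := le_of_mul_le_mul_left (by linarith [h3] : (a-1) * (2*(p-q)^2) ≤ (a-1) * (ρ * a)) ha1
    linarith [h4]
  -- limit a → 1
  have hlim : 2 * (p - q)^2 ≤ ρ := by
    by_contra hcon
    push_neg at hcon
    set X : ℝ := 2 * (p - q)^2 with hX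
    have haa : 1 < (ρ + X) / (2 * ρ) := by
      rw [lt_div_iff₀ (by linarith)]
      linarith
    have hk := key _ haa
    have h5 : ρ * ((ρ + X) / (2 * ρ)) = (ρ + X) / 2 := by
      field_simp
    rw [h5] at hk
    linarith
  have hsq : (p - q)^2 ≤ ρ / 2 := by linarith
  calc p - q ≤ |p - q| := le_abs_self _
    _ = Real.sqrt ((p-q)^2) := (Real.sqrt_sq_eq_abs _).symm
    _ ≤ Real.sqrt (ρ / 2) := Real.sqrt_le_sqrt hsq

private lemma group_bound [DecidableEq 𝓧] {n : ℕ} (M : Kernel (Fin n → 𝓧) 𝓨)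
    [IsMarkovKernel M] {ρ : ℝ} (hρ : 0 < ρ) (hzCDP : IsZCDP M ρ) :
    ∀ (d : ℕ) (X₁ X₂ : Fin n → 𝓧), hammingDist X₁ X₂ = d →
      ∀ S : Set 𝓨, MeasurableSet S →
        (M X₁ S).toReal - (M X₂ S).toReal ≤ Real.sqrt (ρ/2) * d := by
  intro d
  induction d with
  | zero =>
    intro X₁ X₂ hd S hS
    have : X₁ = X₂ := eq_of_hammingDist_eq_zero hd
    subst this
    simp
  | succ d ih =>
    intro X₁ X₂ hd S hS
    -- find a differing coordinate
    have hne : X₁ ≠ X₂ := by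
      intro h
      subst h
      rw [hammingDist_self] at hd
      omega
    have hex : ∃ j, X₁ j ≠ X₂ j := by
      by_contra hc
      push_neg at hc
      exact hne (funext hc)
    obtain ⟨j, hj⟩ := hex
    set X' : Fin n → 𝓧 := Function.update X₁ j (X₂ j) with hX'
    have hd1 : hammingDist X₁ X' ≤ 1 := by
      have hsub : ({i | X₁ i ≠ X' i} : Finset (Fin n)) ⊆ {j} := by
        intro i hi
        simp only [Finset.mem_filter, Finset.mem_univ, true_and] at hi
        simp only [Finset.mem_singleton]
        by_contra hij
        apply hi
        rw [hX', Function.update_of_ne hij]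
      calc hammingDist X₁ X' = ({i | X₁ i ≠ X' i} : Finset (Fin n)).card := rfl
        _ ≤ ({j} : Finset (Fin n)).card := Finset.card_le_card hsub
        _ = 1 := Finset.card_singleton j
    have hdd : hammingDist X' X₂ = d := by
      have hset : ({i | X' i ≠ X₂ i} : Finset (Fin n)) =
          ({i | X₁ i ≠ X₂ i} : Finset (Fin n)).erase j := by
        ext i
        simp only [Finset.mem_filter, Finset.mem_univ, true_and, Finset.mem_erase]
        constructor
        · intro hi
          by_cases hij : i = j
          · subst hij
            rw [hX', Function.update_self] at hi
            exact absurd rfl hi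
          · rw [hX', Function.update_of_ne hij] at hi
            exact ⟨hij, hi⟩
        · intro ⟨hij, hi⟩
          rw [hX', Function.update_of_ne hij]
          exact hi
      have hjmem : j ∈ ({i | X₁ i ≠ X₂ i} : Finset (Fin n)) := by
        simp only [Finset.mem_filter, Finset.mem_univ, true_and]
        exact hj
      calc hammingDist X' X₂ = ({i | X' i ≠ X₂ i} : Finset (Fin n)).card := rfl
        _ = (({i | X₁ i ≠ X₂ i} : Finset (Fin n)).erase j).card := by rw [hset]
        _ = ({i | X₁ i ≠ X₂ i} : Finset (Fin n)).card - 1 := Finset.card_erase_of_mem hjmem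
        _ = d := by
          have : ({i | X₁ i ≠ X₂ i} : Finset (Fin n)).card = d + 1 := hd
          omega
    have step : (M X₁ S).toReal - (M X' S).toReal ≤ Real.sqrt (ρ/2) :=
      step_bound hρ (fun a ha => hzCDP X₁ X' hd1 a ha) hS
    have rest := ih X' X₂ hdd S hS
    push_cast
    linarith

/-- **`ρ`-zCDP Le Cam matching**: if `M` is `ρ`-zCDP and `Ψ` is a binary test, then for any
two datasets `X₁, X₂`,
`(1/2)(P(Ψ(M(X₁)) ≠ 1) + P(Ψ(M(X₂)) ≠ 2)) ≥ (1/2)(1 - √(ρ/2) d_H(X₁, X₂))`. -/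
theorem zcdp_lecam_matching [DecidableEq 𝓧] {n : ℕ}
    (M : Kernel (Fin n → 𝓧) 𝓨) [IsMarkovKernel M]
    (ρ : ℝ) (hρ : 0 < ρ) (hzCDP : IsZCDP M ρ)
    (Ψ : 𝓨 → Fin 2) (hΨ : Measurable Ψ) (X₁ X₂ : Fin n → 𝓧) :
    (1 / 2 : ℝ) * (1 - Real.sqrt (ρ / 2) * (hammingDist X₁ X₂ : ℝ))
    ≤ (1 / 2 : ℝ) * ((M X₁ {y | Ψ y ≠ 0}).toReal + (M X₂ {y | Ψ y ≠ 1}).toReal) := by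
  set S : Set 𝓨 := {y | Ψ y ≠ 0} with hSdef
  have hS : MeasurableSet S := (hΨ (MeasurableSet.singleton 0)).compl
  have hcompl : {y | Ψ y ≠ 1} = Sᶜ := by
    ext y
    simp only [Set.mem_setOf_eq, Set.mem_compl_iff, hSdef, not_not]
    constructor
    · intro h
      omega
    · intro h
      rw [h]
      decide
  rw [hcompl]
  have h2 : (M X₂ Sᶜ).toReal = 1 - (M X₂ S).toReal := by
    rw [prob_compl_eq_one_sub hS, ENNReal.toReal_sub_of_le prob_le_one ENNReal.one_ne_top,
      ENNReal.toReal_one]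
  have hgb := group_bound M hρ hzCDP (hammingDist X₂ X₁) X₂ X₁ rfl S hS
  rw [hammingDist_comm X₂ X₁] at hgb
  rw [h2]
  linarith
end

section
/- ρ-zCDP Fano matching: let M : X^n → Y be a ρ-zero-concentrated differentially private mechanism, Ψ : Y → {1,…,N} a test function, and X_1,…,X_N ∈ X^n datasets. Then (1/N) Σ_{i=1}^N P(Ψ(M(X_i)) ≠ i) ≥ 1 − (1 + (ρ/N²) Σ_{i=1}^N Σ_{j=1}^N d_H(X_i,X_j)²) / ln(N). -/
open MeasureTheory ProbabilityTheory Real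
open scoped ENNReal NNReal

variable {𝓧 𝓨 : Type*} [MeasurableSpace 𝓧] [MeasurableSpace 𝓨]

/-! ### Auxiliary real-analysis lemmas -/

/-- Tangent line bound: `t log u + t - u ≤ t log t` for `t ≥ 0`, `u > 0`. -/
lemma fano_tangent {t u : ℝ} (ht : 0 ≤ t) (hu : 0 < u) :
    t * Real.log u + t - u ≤ t * Real.log t := by
  rcases ht.eq_or_lt with h | h
  · rw [← h]; simp; linarith
  · have hlog := Real.log_le_sub_one_of_pos (show 0 < u / t by positivity)
    rw [Real.log_div (ne_of_gt hu) (ne_of_gt h)] at hlog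
    have h2 := mul_le_mul_of_nonneg_left hlog ht
    have hut : t * (u / t - 1) = u - t := by field_simp
    nlinarith

/-- If `x ≤ r * a` for all `a > 1` then `x ≤ r` (for `r ≥ 0`). -/
lemma fano_le_of_forall_mul {x r : ℝ} (hr : 0 ≤ r) (h : ∀ a : ℝ, 1 < a → x ≤ r * a) :
    x ≤ r := by
  by_contra hlt
  push_neg at hlt
  have hd : (0:ℝ) < 2 * (r + 1) := by linarith
  set ε := (x - r) / (2 * (r + 1)) with hε
  have hεpos : 0 < ε := div_pos (by linarith) hd
  have hεeq : ε * (2 * (r + 1)) = x - r := div_mul_cancel₀ _ (ne_of_gt hd)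
  have := h (1 + ε) (by linarith)
  nlinarith [mul_nonneg hr hεpos.le]

/-- Log-sum inequality. -/
lemma fano_log_sum {ι : Type*} (s : Finset ι) (a b : ι → ℝ) (ha : ∀ i ∈ s, 0 ≤ a i)
    (hb : ∀ i ∈ s, 0 ≤ b i) (hab : ∀ i ∈ s, b i = 0 → a i = 0) :
    (∑ i ∈ s, a i) * Real.log ((∑ i ∈ s, a i) / (∑ i ∈ s, b i)) ≤
      ∑ i ∈ s, a i * Real.log (a i / b i) := by
  rcases eq_or_lt_of_le (Finset.sum_nonneg ha) with h0 | hApos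
  · rw [← h0, zero_mul]
    refine Finset.sum_nonneg fun i hi => ?_
    rw [(Finset.sum_eq_zero_iff_of_nonneg ha).1 h0.symm i hi]
    simp
  · classical
    set A := ∑ i ∈ s, a i with hA
    set T := s.filter (fun i => 0 < a i) with hT
    have hTs : T ⊆ s := Finset.filter_subset _ _
    have haT : ∀ i ∈ T, 0 < a i := fun i hi => (Finset.mem_filter.1 hi).2
    have hbT : ∀ i ∈ T, 0 < b i := by
      intro i hi
      rcases (hb i (hTs hi)).eq_or_lt with h | h
      · exact absurd (hab i (hTs hi) h.symm) (ne_of_gt (haT i hi))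
      · exact h
    have hzero : ∀ i ∈ s, i ∉ T → a i = 0 := by
      intro i hi hiT
      by_contra hne
      exact hiT (Finset.mem_filter.2 ⟨hi, (ha i hi).lt_of_ne (Ne.symm hne)⟩)
    have hAT : ∑ i ∈ T, a i = A := Finset.sum_subset hTs (fun i hi hiT => hzero i hi hiT)
    have hRHS : ∑ i ∈ s, a i * Real.log (a i / b i) = ∑ i ∈ T, a i * Real.log (a i / b i) := by
      refine (Finset.sum_subset hTs (fun i hi hiT => ?_)).symm
      rw [hzero i hi hiT]; ring
    set B' := ∑ i ∈ T, b i with hB'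
    have hTne : T.Nonempty := by
      by_contra hne
      rw [Finset.not_nonempty_iff_eq_empty] at hne
      rw [hne, Finset.sum_empty] at hAT
      exact absurd hAT.symm (ne_of_gt hApos)
    have hB'pos : 0 < B' := by
      obtain ⟨i, hi⟩ := hTne
      exact Finset.sum_pos' (fun j hj => (hbT j hj).le) ⟨i, hi, hbT i hi⟩
    have hB'B : B' ≤ ∑ i ∈ s, b i :=
      Finset.sum_le_sum_of_subset_of_nonneg hTs (fun i hi _ => hb i hi)
    have per : ∀ i ∈ T, a i * Real.log (A / B') + a i - b i * (A / B')
        ≤ a i * Real.log (a i / b i) := by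
      intro i hi
      have hai := haT i hi
      have hbi := hbT i hi
      have ht : 0 < b i * A / (a i * B') := by positivity
      have hlog := Real.log_le_sub_one_of_pos ht
      rw [Real.log_div (by positivity) (by positivity),
        Real.log_mul (ne_of_gt hbi) (ne_of_gt hApos),
        Real.log_mul (ne_of_gt hai) (ne_of_gt hB'pos)] at hlog
      have h2 := mul_le_mul_of_nonneg_left hlog hai.le
      have hid : a i * (b i * A / (a i * B')) = b i * (A / B') := by
        field_simp
      rw [Real.log_div (ne_of_gt hai) (ne_of_gt hbi),
        Real.log_div (ne_of_gt hApos) (ne_of_gt hB'pos)]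
      nlinarith
    have hsum := Finset.sum_le_sum per
    have hlhs : ∑ i ∈ T, (a i * Real.log (A / B') + a i - b i * (A / B'))
        = A * Real.log (A / B') := by
      rw [Finset.sum_sub_distrib, Finset.sum_add_distrib, ← Finset.sum_mul, ← Finset.sum_mul,
        hAT, ← hB']
      field_simp
      ring
    rw [hlhs] at hsum
    calc A * Real.log (A / ∑ i ∈ s, b i) ≤ A * Real.log (A / B') := by
          apply mul_le_mul_of_nonneg_left _ hApos.le
          apply Real.log_le_log (div_pos hApos (lt_of_lt_of_le hB'pos hB'B))
          exact div_le_div_of_nonneg_left hApos.le hB'pos hB'B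
      _ ≤ ∑ i ∈ T, a i * Real.log (a i / b i) := hsum
      _ = ∑ i ∈ s, a i * Real.log (a i / b i) := hRHS.symm

/-- Binary KL divergence bound from Rényi-type moment bounds. -/
lemma fano_kl_of_pow {p q r : ℝ} (hp0 : 0 ≤ p) (hp1 : p ≤ 1) (hq0 : 0 ≤ q) (hq1 : q ≤ 1)
    (hr : 0 ≤ r) (hq0p : q = 0 → p = 0) (hq1p : q = 1 → p = 1)
    (hbound : ∀ a : ℝ, 1 < a → ∃ x y : ℝ, 0 ≤ x ∧ 0 ≤ y ∧
      p ^ a ≤ x * q ^ (a - 1) ∧ (1 - p) ^ a ≤ y * (1 - q) ^ (a - 1) ∧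
      x + y ≤ Real.exp ((a - 1) * (r * a))) :
    p * Real.log (p / q) + (1 - p) * Real.log ((1 - p) / (1 - q)) ≤ r := by
  rcases hq0.eq_or_lt with h0 | hqpos
  · have hp := hq0p h0.symm
    rw [hp, ← h0]
    norm_num
    linarith
  rcases hq1.eq_or_lt with h1 | hqlt1
  · have hp := hq1p h1
    rw [hp, h1]
    norm_num
    linarith
  -- main case 0 < q < 1
  apply fano_le_of_forall_mul hr
  intro a ha
  obtain ⟨x, y, hx, hy, hpx, hpy, hxy⟩ := hbound a ha
  have ha1 : 0 < a - 1 := by linarith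
  have hqa : 0 < q ^ (a - 1) := Real.rpow_pos_of_pos hqpos _
  have hqa' : 0 < (1 - q) ^ (a - 1) := Real.rpow_pos_of_pos (by linarith) _
  have h1 : p ^ a / q ^ (a - 1) ≤ x := (div_le_iff₀ hqa).2 hpx
  have h2 : (1 - p) ^ a / (1 - q) ^ (a - 1) ≤ y := (div_le_iff₀ hqa').2 hpy
  have key : ∀ t u : ℝ, 0 < t → 0 < u →
      t * Real.exp ((a - 1) * Real.log (t / u)) = t ^ a / u ^ (a - 1) := by
    intro t u htpos hupos
    rw [mul_comm (a - 1), Real.exp_mul, Real.exp_log (div_pos htpos hupos),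
      Real.div_rpow htpos.le hupos.le, mul_div_assoc']
    congr 1
    calc t * t ^ (a - 1) = t ^ (1:ℝ) * t ^ (a - 1) := by rw [Real.rpow_one]
      _ = t ^ (1 + (a - 1)) := (Real.rpow_add htpos _ _).symm
      _ = t ^ a := by norm_num
  have jensen : Real.exp ((a - 1) * (p * Real.log (p / q) +
      (1 - p) * Real.log ((1 - p) / (1 - q))))
      ≤ p ^ a / q ^ (a - 1) + (1 - p) ^ a / (1 - q) ^ (a - 1) := by
    rcases hp0.eq_or_lt with hp' | hppos
    · rw [← hp']
      simp only [zero_mul, sub_zero, zero_add, one_mul]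
      rw [Real.zero_rpow (by positivity : a ≠ 0), zero_div, zero_add]
      have hk := key 1 (1 - q) one_pos (by linarith)
      rw [one_mul] at hk; rw [Real.one_rpow] at hk ⊢
      exact le_of_eq hk
    rcases hp1.eq_or_lt with hp'' | hplt1
    · rw [hp'']
      simp only [sub_self, zero_mul, add_zero, one_mul]
      rw [Real.zero_rpow (by positivity : a ≠ 0), zero_div, add_zero]
      have hk := key 1 q one_pos hqpos
      rw [one_mul] at hk; rw [Real.one_rpow] at hk ⊢
      exact le_of_eq hk
    · have hconv := convexOn_exp.2 (Set.mem_univ ((a - 1) * Real.log (p / q)))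
        (Set.mem_univ ((a - 1) * Real.log ((1 - p) / (1 - q)))) hp0 (by linarith : (0:ℝ) ≤ 1 - p)
        (by ring)
      simp only [smul_eq_mul] at hconv
      calc Real.exp ((a - 1) * (p * Real.log (p / q) + (1 - p) * Real.log ((1-p) / (1-q))))
          = Real.exp (p * ((a - 1) * Real.log (p / q)) +
            (1 - p) * ((a - 1) * Real.log ((1 - p) / (1 - q)))) := by ring_nf
        _ ≤ p * Real.exp ((a - 1) * Real.log (p / q)) +
            (1 - p) * Real.exp ((a - 1) * Real.log ((1 - p) / (1 - q))) := hconv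
        _ = p ^ a / q ^ (a - 1) + (1 - p) ^ a / (1 - q) ^ (a - 1) := by
            rw [key p q hppos hqpos, key (1 - p) (1 - q) (by linarith) (by linarith)]
  have hle := le_trans jensen (by linarith : p ^ a / q ^ (a - 1) + (1 - p) ^ a / (1 - q) ^ (a - 1)
      ≤ Real.exp ((a - 1) * (r * a)))
  have h3 := Real.exp_le_exp.1 hle
  have h4 := le_of_mul_le_mul_left (by linarith [h3] : (a - 1) * (p * Real.log (p / q) +
      (1 - p) * Real.log ((1 - p) / (1 - q))) ≤ (a - 1) * (r * a)) ha1
  linarith [h4, (by ring : r * a = a * r)]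

/-- Per-column Fano lower bound on the sum of binary KL divergences. -/
lemma fano_sum_lower {N : ℕ} (hN : 2 ≤ N) (p q : Fin N → ℝ)
    (hp0 : ∀ i, 0 ≤ p i) (hp1 : ∀ i, p i ≤ 1) (hq0 : ∀ i, 0 ≤ q i) (hq1 : ∀ i, q i ≤ 1)
    (hqsum : ∑ i, q i = 1) (hq0p : ∀ i, q i = 0 → p i = 0) (hq1p : ∀ i, q i = 1 → p i = 1) :
    (∑ i, p i) * Real.log N - N ≤
      ∑ i, (p i * Real.log (p i / q i) + (1 - p i) * Real.log ((1 - p i) / (1 - q i))) := by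
  have hNR : (2:ℝ) ≤ (N:ℝ) := by exact_mod_cast hN
  set S := ∑ i, p i with hS
  have hS0 : 0 ≤ S := Finset.sum_nonneg fun i _ => hp0 i
  have hSN : S ≤ N := by
    calc S ≤ ∑ _i : Fin N, (1:ℝ) := Finset.sum_le_sum fun i _ => hp1 i
      _ = N := by simp
  have h1 : S * Real.log (S / 1) ≤ ∑ i, p i * Real.log (p i / q i) := by
    have := fano_log_sum Finset.univ p q (fun i _ => hp0 i) (fun i _ => hq0 i)
      (fun i _ => hq0p i)
    rwa [hqsum] at this
  have hsum1q : ∑ i, (1 - q i) = (N:ℝ) - 1 := by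
    rw [Finset.sum_sub_distrib, hqsum]
    simp [Finset.card_univ]
  have h2 : ((N:ℝ) - S) * Real.log (((N:ℝ) - S) / ((N:ℝ) - 1)) ≤
      ∑ i, (1 - p i) * Real.log ((1 - p i) / (1 - q i)) := by
    have := fano_log_sum Finset.univ (fun i => 1 - p i) (fun i => 1 - q i)
      (fun i _ => by show (0:ℝ) ≤ 1 - p i; linarith [hp1 i])
      (fun i _ => by show (0:ℝ) ≤ 1 - q i; linarith [hq1 i])
      (fun i _ hbi => by
        show 1 - p i = 0
        have hbi' : 1 - q i = 0 := hbi
        have := hq1p i (by linarith)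
        linarith)
    rw [hsum1q, Finset.sum_sub_distrib] at this
    simpa [Finset.card_univ, hS] using this
  have t1 : S * Real.log N + S - N ≤ S * Real.log S := fano_tangent hS0 (by linarith)
  have t2 : ((N:ℝ) - S) - ((N:ℝ) - 1) ≤ ((N:ℝ) - S) * Real.log (((N:ℝ) - S) / ((N:ℝ) - 1)) := by
    rcases eq_or_lt_of_le hSN with hSN' | hSN'
    · rw [hSN']
      have h0 : (N:ℝ) - (N:ℝ) = 0 := by ring
      rw [h0, zero_mul]
      linarith
    · have htpos : 0 < (N:ℝ) - S := by linarith
      have := fano_tangent (le_of_lt htpos) (show (0:ℝ) < (N:ℝ) - 1 by linarith)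
      rw [Real.log_div (ne_of_gt htpos) (by linarith : (N:ℝ) - 1 ≠ 0)]
      nlinarith
  rw [Finset.sum_add_distrib]
  rw [div_one] at h1
  nlinarith [h1, h2, t1, t2]

/-! ### Measure-theoretic lemmas -/

/-- Unpacking a Rényi divergence bound. -/
lemma fano_renyi_budget {P Q : Measure 𝓨} {a c : ℝ} (ha : 1 < a) (hc : 0 ≤ c)
    (h : renyiDiv a P Q ≤ ENNReal.ofReal c) :
    P ≪ Q ∧ ∫⁻ t, (P.rnDeriv Q t) ^ a ∂Q ≤ ENNReal.ofReal (Real.exp ((a - 1) * c)) := by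
  rw [renyiDiv] at h
  split_ifs at h with hcond
  · obtain ⟨hac, hfin⟩ := hcond
    refine ⟨hac, ?_⟩
    rw [ENNReal.ofReal_le_ofReal_iff hc] at h
    have ha1 : 0 < a - 1 := by linarith
    have hlog : Real.log (∫⁻ t, (P.rnDeriv Q t) ^ a ∂Q).toReal ≤ (a - 1) * c := by
      have h2 := mul_le_mul_of_nonneg_left h ha1.le
      have h3 : (a - 1) * ((a - 1)⁻¹ * Real.log (∫⁻ t, (P.rnDeriv Q t) ^ a ∂Q).toReal)
          = Real.log (∫⁻ t, (P.rnDeriv Q t) ^ a ∂Q).toReal := by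
        field_simp
      rw [h3] at h2
      exact h2
    have hIR : (∫⁻ t, (P.rnDeriv Q t) ^ a ∂Q).toReal ≤ Real.exp ((a - 1) * c) := by
      rcases le_or_gt (∫⁻ t, (P.rnDeriv Q t) ^ a ∂Q).toReal 0 with h0 | h0
      · exact le_trans h0 (Real.exp_pos _).le
      · calc (∫⁻ t, (P.rnDeriv Q t) ^ a ∂Q).toReal
            = Real.exp (Real.log (∫⁻ t, (P.rnDeriv Q t) ^ a ∂Q).toReal) :=
              (Real.exp_log h0).symm
          _ ≤ Real.exp ((a - 1) * c) := Real.exp_le_exp.2 hlog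
    calc ∫⁻ t, (P.rnDeriv Q t) ^ a ∂Q
        = ENNReal.ofReal (∫⁻ t, (P.rnDeriv Q t) ^ a ∂Q).toReal := (ENNReal.ofReal_toReal hfin).symm
      _ ≤ ENNReal.ofReal (Real.exp ((a - 1) * c)) := ENNReal.ofReal_le_ofReal hIR
  · exact absurd h (by simp)

/-- Hölder chaining step for moment bounds of Radon-Nikodym derivatives. -/
lemma fano_holder_step {P Q R : Measure 𝓨} [SigmaFinite P] [SigmaFinite Q] [SigmaFinite R]
    (hPQ : P ≪ Q) (hQR : Q ≪ R) {a pp qq c₁ c₂ : ℝ} (hpq : pp.HolderConjugate qq) (ha : 1 < a)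
    (h₁ : ∫⁻ t, (P.rnDeriv Q t) ^ (a * pp) ∂Q ≤ ENNReal.ofReal (Real.exp c₁))
    (h₂ : ∫⁻ t, (Q.rnDeriv R t) ^ ((a - 1) * qq + 1) ∂ R ≤ ENNReal.ofReal (Real.exp c₂)) :
    ∫⁻ t, (P.rnDeriv R t) ^ a ∂ R ≤ ENNReal.ofReal (Real.exp (c₁ / pp + c₂ / qq)) := by
  have ha0 : (0:ℝ) ≤ a := by linarith
  have ha1 : (0:ℝ) ≤ a - 1 := by linarith
  set f := P.rnDeriv Q with hf
  set g := Q.rnDeriv R with hg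
  have hfm : Measurable f := Measure.measurable_rnDeriv _ _
  have hgm : Measurable g := Measure.measurable_rnDeriv _ _
  have step1 : ∫⁻ t, (P.rnDeriv R t) ^ a ∂ R = ∫⁻ t, (f t * g t) ^ a ∂ R := by
    apply lintegral_congr_ae
    filter_upwards [Measure.rnDeriv_mul_rnDeriv hPQ] with t ht
    rw [← ht]; rfl
  have step2 : ∀ t, (f t * g t) ^ a = g t * (f t ^ a * g t ^ (a - 1)) := by
    intro t
    rw [ENNReal.mul_rpow_of_nonneg _ _ ha0]
    have : g t ^ a = g t ^ (a - 1) * g t := by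
      calc g t ^ a = g t ^ (a - 1 + 1) := by norm_num
        _ = g t ^ (a-1) * g t ^ (1:ℝ) := ENNReal.rpow_add_of_nonneg _ _ ha1 zero_le_one
        _ = g t ^ (a-1) * g t := by rw [ENNReal.rpow_one]
    rw [this]; ring
  have step3 : ∫⁻ t, (f t * g t) ^ a ∂ R = ∫⁻ t, f t ^ a * g t ^ (a - 1) ∂Q := by
    rw [lintegral_congr fun t => step2 t]
    exact lintegral_rnDeriv_mul hQR
      ((hfm.pow_const _).mul (hgm.pow_const _)).aemeasurable
  have step4 : ∫⁻ t, f t ^ a * g t ^ (a - 1) ∂Q ≤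
      (∫⁻ t, f t ^ (a * pp) ∂Q) ^ (1 / pp) * (∫⁻ t, g t ^ ((a - 1) * qq) ∂Q) ^ (1 / qq) := by
    have hH := ENNReal.lintegral_mul_le_Lp_mul_Lq Q hpq
      ((hfm.pow_const a).aemeasurable) ((hgm.pow_const (a-1)).aemeasurable)
    calc ∫⁻ t, f t ^ a * g t ^ (a - 1) ∂Q
        = ∫⁻ t, ((fun t => f t ^ a) * fun t => g t ^ (a-1)) t ∂Q := by rfl
      _ ≤ (∫⁻ t, (f t ^ a) ^ pp ∂Q) ^ (1 / pp) * (∫⁻ t, (g t ^ (a-1)) ^ qq ∂Q) ^ (1 / qq) := hH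
      _ = (∫⁻ t, f t ^ (a * pp) ∂Q) ^ (1 / pp) * (∫⁻ t, g t ^ ((a - 1) * qq) ∂Q) ^ (1 / qq) := by
          congr 1
          · congr 1; apply lintegral_congr fun t => by rw [← ENNReal.rpow_mul]
          · congr 1; apply lintegral_congr fun t => by rw [← ENNReal.rpow_mul]
  have step5 : ∫⁻ t, g t ^ ((a - 1) * qq) ∂Q = ∫⁻ t, g t ^ ((a - 1) * qq + 1) ∂ R := by
    rw [← lintegral_rnDeriv_mul hQR ((hgm.pow_const _).aemeasurable)]
    apply lintegral_congr fun t => ?_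
    rw [ENNReal.rpow_add_of_nonneg _ _ (mul_nonneg ha1 hpq.symm.nonneg) zero_le_one]
    rw [ENNReal.rpow_one]; ring
  have hp0 : (0:ℝ) ≤ 1 / pp := le_of_lt (one_div_pos.2 hpq.pos)
  have hq0 : (0:ℝ) ≤ 1 / qq := le_of_lt (one_div_pos.2 hpq.symm.pos)
  calc ∫⁻ t, (P.rnDeriv R t) ^ a ∂ R
      = ∫⁻ t, f t ^ a * g t ^ (a - 1) ∂Q := by rw [step1, step3]
    _ ≤ (∫⁻ t, f t ^ (a * pp) ∂Q) ^ (1 / pp) * (∫⁻ t, g t ^ ((a - 1) * qq + 1) ∂ R) ^ (1 / qq) := by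
        rw [← step5]; exact step4
    _ ≤ (ENNReal.ofReal (Real.exp c₁)) ^ (1 / pp) * (ENNReal.ofReal (Real.exp c₂)) ^ (1 / qq) :=
        mul_le_mul' (ENNReal.rpow_le_rpow h₁ hp0) (ENNReal.rpow_le_rpow h₂ hq0)
    _ = ENNReal.ofReal (Real.exp (c₁ / pp + c₂ / qq)) := by
        rw [ENNReal.ofReal_rpow_of_pos (Real.exp_pos _),
          ENNReal.ofReal_rpow_of_pos (Real.exp_pos _),
          ← Real.exp_mul, ← Real.exp_mul,
          ← ENNReal.ofReal_mul (Real.exp_pos _).le, ← Real.exp_add,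
          mul_one_div, mul_one_div]

/-- Splitting off one step of a Hamming path. -/
lemma fano_hamming_split [DecidableEq 𝓧] {n : ℕ} {x y : Fin n → 𝓧} {k : ℕ}
    (h : hammingDist x y = k + 1) :
    ∃ z : Fin n → 𝓧, hammingDist x z ≤ 1 ∧ hammingDist z y ≤ k := by
  classical
  have hne : x ≠ y := by
    intro hxy
    rw [hxy, hammingDist_self] at h
    omega
  obtain ⟨i, hi⟩ : ∃ i, x i ≠ y i := Function.ne_iff.1 hne
  refine ⟨Function.update x i (y i), ?_, ?_⟩
  · unfold hammingDist
    calc Finset.card {j | x j ≠ Function.update x i (y i) j} ≤ Finset.card {i} := by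
          apply Finset.card_le_card
          intro j hj
          simp only [Finset.mem_filter, Finset.mem_univ, true_and] at hj
          simp only [Finset.mem_singleton]
          by_contra hji
          exact hj (by rw [Function.update_of_ne hji])
      _ = 1 := Finset.card_singleton i
  · unfold hammingDist
    have hsub : ({j | Function.update x i (y i) j ≠ y j} : Finset (Fin n))
        ⊆ ({j | x j ≠ y j} : Finset (Fin n)).erase i := by
      intro j hj
      simp only [Finset.mem_filter, Finset.mem_univ, true_and] at hj
      rcases eq_or_ne j i with rfl | hji
      · rw [Function.update_self] at hj
        exact absurd rfl hj
      · rw [Function.update_of_ne hji] at hj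
        exact Finset.mem_erase.2 ⟨hji, by simp [hj]⟩
    calc Finset.card {j | Function.update x i (y i) j ≠ y j}
        ≤ (({j | x j ≠ y j} : Finset (Fin n)).erase i).card := Finset.card_le_card hsub
      _ = Finset.card {j | x j ≠ y j} - 1 := Finset.card_erase_of_mem (by simp [hi])
      _ ≤ k := by
          have : Finset.card {j | x j ≠ y j} = k + 1 := h
          omega

/-- Group privacy: moment bounds along Hamming paths. -/
lemma fano_group [DecidableEq 𝓧] {n : ℕ} (M : Kernel (Fin n → 𝓧) 𝓨) [IsMarkovKernel M]
    {ρ : ℝ} (hρ : 0 < ρ) (hzCDP : IsZCDP M ρ) (k : ℕ) :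
    ∀ (x y : Fin n → 𝓧), hammingDist x y ≤ k → ∀ a : ℝ, 1 < a →
      (M x) ≪ (M y) ∧ ∫⁻ t, ((M x).rnDeriv (M y) t) ^ a ∂(M y)
        ≤ ENNReal.ofReal (Real.exp (ρ * (a - 1) * a * (k:ℝ) ^ 2)) := by
  induction k with
  | zero =>
    intro x y hxy a ha
    have hxy' : x = y := hammingDist_eq_zero.1 (Nat.le_zero.1 hxy)
    subst hxy'
    refine ⟨Measure.AbsolutelyContinuous.rfl, ?_⟩
    have : ∫⁻ t, ((M x).rnDeriv (M x) t) ^ a ∂(M x) = ∫⁻ _t, 1 ∂(M x) := by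
      apply lintegral_congr_ae
      filter_upwards [Measure.rnDeriv_self (M x)] with t ht
      rw [ht, ENNReal.one_rpow]
    rw [this]
    simp [Real.exp_nonneg]
  | succ k ih =>
    intro x y hxy a ha
    have ha1 : 0 < a - 1 := by linarith
    have ha0 : 0 < a := by linarith
    rcases Nat.lt_or_ge (hammingDist x y) (k + 1) with hlt | hge
    · obtain ⟨hac, hint⟩ := ih x y (Nat.lt_succ_iff.1 hlt) a ha
      refine ⟨hac, le_trans hint (ENNReal.ofReal_le_ofReal (Real.exp_le_exp.2 ?_))⟩
      have hkk : ((k:ℝ)) ^ 2 ≤ ((k:ℝ) + 1) ^ 2 := by nlinarith [Nat.cast_nonneg (α := ℝ) k]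
      have : ((k + 1 : ℕ) : ℝ) = (k:ℝ) + 1 := by push_cast; ring
      rw [this]
      have hcoef : 0 ≤ ρ * (a - 1) * a := by positivity
      nlinarith [mul_le_mul_of_nonneg_left hkk hcoef]
    · have hd : hammingDist x y = k + 1 := le_antisymm hxy hge
      rcases Nat.eq_zero_or_pos k with rfl | hk
      · obtain ⟨hac, hint⟩ := fano_renyi_budget ha (by positivity : (0:ℝ) ≤ ρ * a)
          (hzCDP x y (by omega) a ha)
        refine ⟨hac, le_trans hint (le_of_eq ?_)⟩
        congr 1
        push_cast
        ring
      · obtain ⟨z, hxz, hzy⟩ := fano_hamming_split hd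
        have hK1 : (1:ℝ) ≤ (k:ℝ) := by exact_mod_cast hk
        set K := (k:ℝ) with hKdef
        have hKpos : 0 < K := by linarith
        set pp := 1 + K * (a - 1) / a with hpp
        set qq := 1 + a / (K * (a - 1)) with hqq
        have hpp1 : 1 < pp := by
          rw [hpp]
          have : 0 < K * (a - 1) / a := by positivity
          linarith
        have hconj : pp.HolderConjugate qq := by
          rw [Real.holderConjugate_iff]
          constructor
          · exact hpp1
          · rw [hpp, hqq]
            field_simp
            ring
        have happ : 1 < a * pp := by
          calc (1:ℝ) < a := ha
            _ = a * 1 := (mul_one a).symm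
            _ ≤ a * pp := by nlinarith
        have ha2 : 1 < (a - 1) * qq + 1 := by
          have : 0 < (a - 1) * qq := mul_pos ha1 (by positivity : (0:ℝ) < qq)
          linarith
        -- one-step bound at order a * pp
        obtain ⟨hacxz, h₁⟩ := fano_renyi_budget happ
          (by positivity : (0:ℝ) ≤ ρ * (a * pp)) (hzCDP x z hxz (a * pp) happ)
        -- inductive bound at order (a-1)*qq + 1
        obtain ⟨haczy, h₂⟩ := ih z y hzy ((a - 1) * qq + 1) ha2
        refine ⟨hacxz.trans haczy, ?_⟩
        have hmain := fano_holder_step hacxz haczy hconj ha h₁ h₂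
        refine le_trans hmain (le_of_eq ?_)
        congr 1
        have hqqpos : 0 < qq := by positivity
        have hppne : pp ≠ 0 := by positivity
        have hane : a ≠ 0 := by positivity
        have hKane : K * (a - 1) ≠ 0 := by positivity
        have hden : a + a * K - K ≠ 0 := (by nlinarith : 0 < a + a * K - K).ne'
        have hden2 : a + K * (a - 1) ≠ 0 := (by nlinarith : 0 < a + K * (a - 1)).ne'
        rw [hpp, hqq]
        have hcast : ((k + 1 : ℕ) : ℝ) = K + 1 := by rw [hKdef]; push_cast; ring
        rw [hcast]
        congr 1
        field_simp
        ring

/-- Reverse Hölder type event bound. -/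
lemma fano_event {P Q : Measure 𝓨} [IsProbabilityMeasure P] [IsProbabilityMeasure Q]
    (hPQ : P ≪ Q) {a : ℝ} (ha : 1 < a) {S : Set 𝓨} (hS : MeasurableSet S) :
    (P S) ^ a ≤ (∫⁻ t in S, (P.rnDeriv Q t) ^ a ∂Q) * (Q S) ^ (a - 1) := by
  have hane : a ≠ 0 := by positivity
  have ha1ne : a - 1 ≠ 0 := by
    have : 0 < a - 1 := by linarith
    positivity
  have hconj : a.HolderConjugate (a / (a - 1)) := by
    rw [Real.holderConjugate_iff]
    constructor
    · exact ha
    · field_simp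
      ring
  have hH := ENNReal.lintegral_mul_le_Lp_mul_Lq (Q.restrict S) hconj
    (Measure.measurable_rnDeriv P Q).aemeasurable
    (aemeasurable_const : AEMeasurable (fun _ => (1:ℝ≥0∞)) (Q.restrict S))
  simp only [Pi.mul_apply, mul_one, ENNReal.one_rpow, lintegral_one,
    Measure.restrict_apply_univ] at hH
  rw [Measure.setLIntegral_rnDeriv hPQ S] at hH
  have hexp : 1 / (a / (a - 1)) = (a - 1) / a := one_div_div _ _
  rw [hexp] at hH
  have hmono := ENNReal.rpow_le_rpow hH (le_of_lt (by linarith : (0:ℝ) < a))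
  calc (P S) ^ a
      ≤ ((∫⁻ t in S, (P.rnDeriv Q t) ^ a ∂Q) ^ (1 / a) * (Q S) ^ ((a - 1) / a)) ^ a := hmono
    _ = (∫⁻ t in S, (P.rnDeriv Q t) ^ a ∂Q) * (Q S) ^ (a - 1) := by
        rw [ENNReal.mul_rpow_of_nonneg _ _ (by linarith : (0:ℝ) ≤ a),
          ← ENNReal.rpow_mul, ← ENNReal.rpow_mul, one_div_mul_cancel hane,
          div_mul_cancel₀ _ hane, ENNReal.rpow_one]

/-- From moment bounds at every order to a binary KL bound on events. -/
lemma fano_pair {P Q : Measure 𝓨} [IsProbabilityMeasure P] [IsProbabilityMeasure Q]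
    (hPQ : P ≪ Q) {r : ℝ} (hr : 0 ≤ r)
    (hbud : ∀ a : ℝ, 1 < a →
      ∫⁻ t, (P.rnDeriv Q t) ^ a ∂Q ≤ ENNReal.ofReal (Real.exp ((a - 1) * (r * a))))
    {S : Set 𝓨} (hS : MeasurableSet S) :
    (P S).toReal * Real.log ((P S).toReal / (Q S).toReal) +
      (1 - (P S).toReal) * Real.log ((1 - (P S).toReal) / (1 - (Q S).toReal)) ≤ r := by
  have hP1 : P S ≤ 1 := prob_le_one
  have hQ1 : Q S ≤ 1 := prob_le_one
  have hPc : P Sᶜ = 1 - P S := prob_compl_eq_one_sub hS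
  have hQc : Q Sᶜ = 1 - Q S := prob_compl_eq_one_sub hS
  have hPcR : (P Sᶜ).toReal = 1 - (P S).toReal := by
    rw [hPc, ENNReal.toReal_sub_of_le hP1 ENNReal.one_ne_top, ENNReal.toReal_one]
  have hQcR : (Q Sᶜ).toReal = 1 - (Q S).toReal := by
    rw [hQc, ENNReal.toReal_sub_of_le hQ1 ENNReal.one_ne_top, ENNReal.toReal_one]
  apply fano_kl_of_pow ENNReal.toReal_nonneg ?_ ENNReal.toReal_nonneg ?_ hr ?_ ?_ ?_
  · simpa using ENNReal.toReal_mono ENNReal.one_ne_top hP1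
  · simpa using ENNReal.toReal_mono ENNReal.one_ne_top hQ1
  · intro h
    have hq : Q S = 0 := by
      rcases (ENNReal.toReal_eq_zero_iff _).1 h with h' | h'
      · exact h'
      · exact absurd h' (measure_ne_top _ _)
    rw [hPQ hq]
    simp
  · intro h
    have hq : Q S = 1 := (ENNReal.toReal_eq_one_iff _).1 h
    have hqc : Q Sᶜ = 0 := by rw [hQc, hq]; simp
    have hpc : P Sᶜ = 0 := hPQ hqc
    have hps : P S = 1 := by
      have h1 : 1 - P S = 0 := by rw [← hPc, hpc]
      have h2 : (1:ℝ≥0∞) ≤ P S := tsub_eq_zero_iff_le.1 h1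
      exact le_antisymm hP1 h2
    rw [hps]
    simp
  · intro a ha
    have ha1 : (0:ℝ) ≤ a - 1 := by linarith
    set u := ∫⁻ t in S, (P.rnDeriv Q t) ^ a ∂Q with hu
    set v := ∫⁻ t in Sᶜ, (P.rnDeriv Q t) ^ a ∂Q with hv
    have huv : u + v = ∫⁻ t, (P.rnDeriv Q t) ^ a ∂Q :=
      lintegral_add_compl _ hS
    have htot : u + v ≤ ENNReal.ofReal (Real.exp ((a - 1) * (r * a))) := by
      rw [huv]; exact hbud a ha
    have huvfin : u + v ≠ ⊤ := ne_top_of_le_ne_top ENNReal.ofReal_ne_top htot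
    have hufin : u ≠ ⊤ := by
      intro h'
      exact huvfin (by simp [h'])
    have hvfin : v ≠ ⊤ := by
      intro h'
      exact huvfin (by simp [h'])
    refine ⟨u.toReal, v.toReal, ENNReal.toReal_nonneg, ENNReal.toReal_nonneg, ?_, ?_, ?_⟩
    · have hE := fano_event hPQ ha hS
      have hrhs_fin : u * (Q S) ^ (a - 1) ≠ ⊤ :=
        ENNReal.mul_ne_top hufin (ENNReal.rpow_ne_top_of_nonneg ha1 (measure_ne_top _ _))
      have := ENNReal.toReal_mono hrhs_fin hE
      rwa [ENNReal.toReal_mul, ← ENNReal.toReal_rpow, ← ENNReal.toReal_rpow] at this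
    · have hE := fano_event hPQ ha hS.compl
      have hrhs_fin : v * (Q Sᶜ) ^ (a - 1) ≠ ⊤ :=
        ENNReal.mul_ne_top hvfin (ENNReal.rpow_ne_top_of_nonneg ha1 (measure_ne_top _ _))
      have := ENNReal.toReal_mono hrhs_fin hE
      rwa [ENNReal.toReal_mul, ← ENNReal.toReal_rpow, ← ENNReal.toReal_rpow, hPcR, hQcR] at this
    · have h1 : (u + v).toReal ≤ Real.exp ((a - 1) * (r * a)) :=
        ENNReal.toReal_le_of_le_ofReal (Real.exp_pos _).le htot
      rwa [ENNReal.toReal_add hufin hvfin] at h1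

/-- **`ρ`-zCDP Fano matching**: if `M` is `ρ`-zCDP, `Ψ` is a test function with `N` outcomes
and `X 1, …, X N` are datasets, then
`(1/N) ∑ i, P(Ψ(M(X i)) ≠ i) ≥ 1 - (1 + (ρ/N²) ∑ i, ∑ j, d_H(X i, X j)²) / ln N`. -/
theorem zcdp_fano_matching [DecidableEq 𝓧] {n N : ℕ} (hN : 2 ≤ N)
    (M : Kernel (Fin n → 𝓧) 𝓨) [IsMarkovKernel M]
    (ρ : ℝ) (hρ : 0 < ρ) (hzCDP : IsZCDP M ρ)
    (Ψ : 𝓨 → Fin N) (hΨ : Measurable Ψ) (X : Fin N → Fin n → 𝓧) :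
    1 - (1 + ρ / (N : ℝ) ^ 2 *
          ∑ i : Fin N, ∑ j : Fin N, (hammingDist (X i) (X j) : ℝ) ^ 2) / Real.log N
    ≤ (N : ℝ)⁻¹ * ∑ i : Fin N, (M (X i) {y | Ψ y ≠ i}).toReal := by
  classical
  have hN1 : (1:ℝ) < N := by exact_mod_cast Nat.lt_of_lt_of_le one_lt_two hN
  have hNpos : (0:ℝ) < N := by linarith
  have hlogN : 0 < Real.log N := Real.log_pos hN1
  set A : Fin N → Set 𝓨 := fun i => Ψ ⁻¹' {i} with hA
  have hAmeas : ∀ i, MeasurableSet (A i) := fun i => hΨ (measurableSet_singleton i)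
  set p : Fin N → ℝ := fun i => ((M (X i)) (A i)).toReal with hp
  set q : Fin N → Fin N → ℝ := fun i j => ((M (X j)) (A i)).toReal with hq
  set D := ∑ i : Fin N, ∑ j : Fin N, (hammingDist (X i) (X j) : ℝ) ^ 2 with hD
  -- absolute continuity between all pairs
  have hac : ∀ i j : Fin N, (M (X i)) ≪ (M (X j)) := fun i j =>
    (fano_group M hρ hzCDP (hammingDist (X i) (X j)) (X i) (X j) le_rfl 2 one_lt_two).1
  -- KL bounds for each pair
  have hkl : ∀ i j : Fin N,
      p i * Real.log (p i / q i j) + (1 - p i) * Real.log ((1 - p i) / (1 - q i j))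
        ≤ ρ * (hammingDist (X i) (X j) : ℝ) ^ 2 := by
    intro i j
    refine fano_pair (hac i j) (by positivity) ?_ (hAmeas i)
    intro a ha
    refine le_trans
      ((fano_group M hρ hzCDP (hammingDist (X i) (X j)) (X i) (X j) le_rfl a ha).2)
      (le_of_eq ?_)
    congr 1
    ring
  -- ranges
  have hp0 : ∀ i, 0 ≤ p i := fun i => ENNReal.toReal_nonneg
  have hp1 : ∀ i, p i ≤ 1 := fun i => by
    simpa using ENNReal.toReal_mono ENNReal.one_ne_top (prob_le_one (μ := M (X i)) (s := A i))
  have hq0 : ∀ i j, 0 ≤ q i j := fun i j => ENNReal.toReal_nonneg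
  have hq1 : ∀ i j, q i j ≤ 1 := fun i j => by
    simpa using ENNReal.toReal_mono ENNReal.one_ne_top (prob_le_one (μ := M (X j)) (s := A i))
  -- compatibility of zeros and ones
  have hq0p : ∀ j i, q i j = 0 → p i = 0 := by
    intro j i h
    have hq : (M (X j)) (A i) = 0 := by
      rcases (ENNReal.toReal_eq_zero_iff _).1 h with h' | h'
      · exact h'
      · exact absurd h' (measure_ne_top _ _)
    rw [hp]
    simp only [hac i j hq]
    simp
  have hq1p : ∀ j i, q i j = 1 → p i = 1 := by
    intro j i h
    have hq' : (M (X j)) (A i) = 1 := (ENNReal.toReal_eq_one_iff _).1 h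
    have hqc : (M (X j)) (A i)ᶜ = 0 := by
      rw [prob_compl_eq_one_sub (hAmeas i), hq']
      simp
    have hpc : (M (X i)) (A i)ᶜ = 0 := hac i j hqc
    have hps : (M (X i)) (A i) = 1 := by
      have h1 : 1 - (M (X i)) (A i) = 0 := by
        rw [← prob_compl_eq_one_sub (hAmeas i), hpc]
      have h2 : (1:ℝ≥0∞) ≤ (M (X i)) (A i) := tsub_eq_zero_iff_le.1 h1
      exact le_antisymm prob_le_one h2
    rw [hp]
    simp only [hps]
    simp
  -- column sums of q are 1
  have hqsum : ∀ j, ∑ i, q i j = 1 := by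
    intro j
    have h1 : ∑ i : Fin N, (M (X j)) (A i) = 1 := by
      have := sum_measure_preimage_singleton (Finset.univ : Finset (Fin N))
        (μ := M (X j)) (f := Ψ) (fun i _ => hΨ (measurableSet_singleton i))
      rw [Finset.coe_univ, Set.preimage_univ, measure_univ] at this
      exact this
    calc ∑ i, q i j = (∑ i : Fin N, (M (X j)) (A i)).toReal :=
          (ENNReal.toReal_sum (fun i _ => measure_ne_top _ _)).symm
      _ = 1 := by rw [h1]; simp
  set S := ∑ i, p i with hS
  -- per-column Fano bound
  have hcol : ∀ j : Fin N, S * Real.log N - N ≤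
      ∑ i, (p i * Real.log (p i / q i j) +
        (1 - p i) * Real.log ((1 - p i) / (1 - q i j))) := by
    intro j
    exact fano_sum_lower hN p (fun i => q i j) hp0 hp1 (fun i => hq0 i j) (fun i => hq1 i j)
      (hqsum j) (hq0p j) (hq1p j)
  -- summing over columns
  have hkey : (N:ℝ) * (S * Real.log N - N) ≤ ρ * D := by
    calc (N:ℝ) * (S * Real.log N - N)
        = ∑ _j : Fin N, (S * Real.log N - N) := by
          rw [Finset.sum_const, Finset.card_univ, Fintype.card_fin, nsmul_eq_mul]
      _ ≤ ∑ j : Fin N, ∑ i, (p i * Real.log (p i / q i j) +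
            (1 - p i) * Real.log ((1 - p i) / (1 - q i j))) :=
          Finset.sum_le_sum fun j _ => hcol j
      _ ≤ ∑ j : Fin N, ∑ i : Fin N, ρ * (hammingDist (X i) (X j) : ℝ) ^ 2 :=
          Finset.sum_le_sum fun j _ => Finset.sum_le_sum fun i _ => hkl i j
      _ = ρ * D := by
          rw [Finset.sum_comm, hD, Finset.mul_sum]
          congr 1
          ext i
          rw [Finset.mul_sum]
  -- identify the right-hand side
  have hRHS : (N : ℝ)⁻¹ * ∑ i : Fin N, (M (X i) {y | Ψ y ≠ i}).toReal = 1 - S / N := by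
    have hcompl : ∀ i : Fin N, {y | Ψ y ≠ i} = (A i)ᶜ := by
      intro i
      ext y
      simp [hA]
    have hterm : ∀ i : Fin N, ((M (X i)) {y | Ψ y ≠ i}).toReal = 1 - p i := by
      intro i
      rw [hcompl i, prob_compl_eq_one_sub (hAmeas i),
        ENNReal.toReal_sub_of_le prob_le_one ENNReal.one_ne_top, ENNReal.toReal_one]
    rw [Finset.sum_congr rfl (fun i _ => hterm i), Finset.sum_sub_distrib]
    simp only [Finset.sum_const, Finset.card_univ, Fintype.card_fin, nsmul_eq_mul, mul_one]
    rw [← hS]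
    field_simp
  rw [hRHS]
  -- final algebra
  have h2 : S * Real.log N - N ≤ ρ * D / N := by
    rw [le_div_iff₀ hNpos]
    nlinarith [hkey]
  have h3 : ρ * D / N = (ρ / (N:ℝ) ^ 2 * D) * N := by
    field_simp
  suffices h : S / N ≤ (1 + ρ / (N:ℝ) ^ 2 * D) / Real.log N by linarith
  rw [div_le_div_iff₀ hNpos hlogN]
  rw [add_mul, one_mul]
  linarith [h2, h3]
end

section
/- Reduction of private testing to a transport problem: let C be a condition on randomized mechanisms M : X^n → Y and let s_C : (X^n)^N → ℝ be an admissible similarity function for C. Then for every mechanism M satisfying C and all probability distributions P_1,…,P_N on X^n, inf over test functions Ψ : Y → {1,…,N} of max_{i∈{1,…,N}} P_{X∼P_i,M}(Ψ(M(X)) ≠ i) is at least sup over couplings Q ∈ Π(P_1,…,P_N) of ∫ s_C(X_1,…,X_N) dQ(X_1,…,X_N). -/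
open MeasureTheory ProbabilityTheory Real
open scoped ENNReal NNReal

variable {𝓧 𝓨 : Type*} [MeasurableSpace 𝓧] [MeasurableSpace 𝓨]

/-- A similarity function `s : (𝓧^n)^N → ℝ` is admissible for a condition `C` on randomized
mechanisms if for every Markov kernel `M` satisfying `C`, every test function `Ψ` and all
datasets `X 1, …, X N`, one has `(1/N) ∑ i, P(Ψ(M(X i)) ≠ i) ≥ s(X 1, …, X N)`. -/
def Admissible {n N : ℕ} (C : Kernel (Fin n → 𝓧) 𝓨 → Prop)
    (s : (Fin N → Fin n → 𝓧) → ℝ) : Prop :=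
  ∀ M : Kernel (Fin n → 𝓧) 𝓨, IsMarkovKernel M → C M →
    ∀ Ψ : 𝓨 → Fin N, Measurable Ψ → ∀ X : Fin N → Fin n → 𝓧,
      s X ≤ (N : ℝ)⁻¹ * ∑ i : Fin N, (M (X i) {y | Ψ y ≠ i}).toReal

/-- **Reduction of private testing to a transport problem**: if `s` is an admissible
similarity function for the condition `C`, then for every mechanism `M` satisfying `C`, every
test function `Ψ`, all probability distributions `P 1, …, P N` on `𝓧^n` and every coupling
`Q` of `P 1, …, P N`, the maximal error `max_i P_{X ∼ P i, M}(Ψ(M(X)) ≠ i)` is at least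
`∫ s(X 1, …, X N) dQ(X 1, …, X N)`; in particular, the infimum over tests dominates the
supremum over couplings. -/
theorem testing_transport_reduction {n N : ℕ} (hN : 0 < N)
    (C : Kernel (Fin n → 𝓧) 𝓨 → Prop)
    (s : (Fin N → Fin n → 𝓧) → ℝ) (hs : Measurable s) (hadm : Admissible C s)
    (M : Kernel (Fin n → 𝓧) 𝓨) [IsMarkovKernel M] (hC : C M)
    (Ψ : 𝓨 → Fin N) (hΨ : Measurable Ψ)
    (P : Fin N → Measure (Fin n → 𝓧)) (hP : ∀ i, IsProbabilityMeasure (P i))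
    (Q : Measure (Fin N → Fin n → 𝓧)) (hQ : IsProbabilityMeasure Q)
    (hcoupling : ∀ i : Fin N, Q.map (fun X => X i) = P i) :
    ∫ X, s X ∂Q
      ≤ ⨆ i : Fin N, (∫⁻ x, M x {y | Ψ y ≠ i} ∂(P i)).toReal := by
  haveI : NeZero N := ⟨hN.ne'⟩
  set A : Fin N → Set 𝓨 := fun i => {y | Ψ y ≠ i} with hA_def
  have hA : ∀ i, MeasurableSet (A i) := fun i =>
    hΨ (MeasurableSet.compl (measurableSet_singleton i))
  set a : Fin N → ℝ := fun i => (∫⁻ x, M x (A i) ∂(P i)).toReal with ha_def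
  have ha_nonneg : ∀ i, 0 ≤ a i := fun i => ENNReal.toReal_nonneg
  have hsup_nonneg : 0 ≤ ⨆ i, a i := Real.iSup_nonneg ha_nonneg
  by_cases hint : Integrable s Q
  · -- main case
    have hfmeas : ∀ i, Measurable fun x => (M x (A i)).toReal :=
      fun i => (M.measurable_coe (hA i)).ennreal_toReal
    have hfle : ∀ i x, (M x (A i)).toReal ≤ 1 := by
      intro i x
      have h1 : M x (A i) ≤ 1 := prob_le_one
      exact ENNReal.toReal_le_of_le_ofReal zero_le_one (by simpa using h1)
    have hintf : ∀ i, Integrable (fun X : Fin N → Fin n → 𝓧 => (M (X i) (A i)).toReal) Q := by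
      intro i
      refine Integrable.mono' (integrable_const 1)
        (((hfmeas i).comp (measurable_pi_apply i)).aestronglyMeasurable) ?_
      refine ae_of_all _ fun X => ?_
      rw [Real.norm_eq_abs, abs_of_nonneg ENNReal.toReal_nonneg]
      exact hfle i (X i)
    have key : ∀ i, ∫ X, (M (X i) (A i)).toReal ∂Q = a i := by
      intro i
      have h1 : ∫ X, (M (X i) (A i)).toReal ∂Q
          = ∫ x, (M x (A i)).toReal ∂(Q.map (fun X => X i)) := by
        rw [integral_map (measurable_pi_apply i).aemeasurable
          (hfmeas i).aestronglyMeasurable]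
      rw [h1, hcoupling i, ha_def]
      exact integral_toReal (M.measurable_coe (hA i)).aemeasurable
        (ae_of_all _ fun x => lt_of_le_of_lt prob_le_one ENNReal.one_lt_top)
    have step1 : ∫ X, s X ∂Q
        ≤ ∫ X, (N : ℝ)⁻¹ * ∑ i : Fin N, (M (X i) (A i)).toReal ∂Q := by
      refine integral_mono hint ?_ (fun X => hadm M inferInstance hC Ψ hΨ X)
      exact (integrable_finset_sum _ fun i _ => hintf i).const_mul _
    have step2 : ∫ X, (N : ℝ)⁻¹ * ∑ i : Fin N, (M (X i) (A i)).toReal ∂Q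
        = (N : ℝ)⁻¹ * ∑ i : Fin N, a i := by
      rw [integral_const_mul, integral_finset_sum _ fun i _ => hintf i]
      simp_rw [key]
    have step3 : (N : ℝ)⁻¹ * ∑ i : Fin N, a i ≤ ⨆ i, a i := by
      have hbdd : ∀ i, a i ≤ ⨆ j, a j :=
        fun i => le_ciSup (Set.Finite.bddAbove (Set.finite_range a)) i
      have hsum : ∑ i : Fin N, a i ≤ N * ⨆ j, a j := by
        calc ∑ i : Fin N, a i ≤ ∑ _i : Fin N, ⨆ j, a j :=
              Finset.sum_le_sum fun i _ => hbdd i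
          _ = N * ⨆ j, a j := by simp [mul_comm]
      calc (N : ℝ)⁻¹ * ∑ i : Fin N, a i ≤ (N : ℝ)⁻¹ * (N * ⨆ j, a j) := by
            apply mul_le_mul_of_nonneg_left hsum (by positivity)
        _ = ⨆ j, a j := by
            field_simp
      
    exact (step1.trans_eq step2).trans step3
  · rw [integral_undef hint]
    exact hsup_nonneg
end

section
/- Le Cam's lemma for ρ-zCDP: if M : X^n → Y is ρ-zero-concentrated differentially private, then for any test function Ψ : Y → {1,2} and any probability distributions P_1, P_2 on X^n, max_{i∈{1,2}} P_{X∼P_i,M}(Ψ(M(X)) ≠ i) ≥ (1/2)·max{ 1 − TV(P_1,P_2), 1 − n·sqrt(ρ/2)·TV(P_1,P_2) }. Furthermore, when P_1 = p_1^{⊗n} and P_2 = p_2^{⊗n} are product distributions, max_{i∈{1,2}} P_{X∼P_i,M}(Ψ(M(X)) ≠ i) ≥ (1/2)·(1 − n·sqrt(ρ/2)·TV(p_1,p_2)). -/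
open MeasureTheory ProbabilityTheory Real
open scoped ENNReal NNReal

variable {𝓧 𝓨 : Type*} [MeasurableSpace 𝓧] [MeasurableSpace 𝓨]

/-- The total variation distance between two measures:
`TV(P, Q) = sup { P(S) - Q(S) | S measurable }`. -/
noncomputable def tvDist {α : Type*} [MeasurableSpace α] (P Q : Measure α) : ℝ :=
  ⨆ S : {S : Set α // MeasurableSet S}, ((P S.1).toReal - (Q S.1).toReal)

open Set Filter
open scoped Topology

-- binary Pinsker, boundary case p = 1 : 2(1-q)^2 ≤ -log q for 0 < q ≤ 1
lemma pinsker_one {q : ℝ} (hq0 : 0 < q) (hq1 : q ≤ 1) :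
    2 * (1 - q) ^ 2 ≤ - Real.log q := by
  set h : ℝ → ℝ := fun t => - Real.log t - 2 * (1 - t) ^ 2 with hh
  have key : AntitoneOn h (Icc q 1) := by
    apply antitoneOn_of_deriv_nonpos (convex_Icc q 1)
    · apply ContinuousOn.sub
      · exact (Real.continuousOn_log.mono (by
          intro t ht
          simp only [mem_compl_iff, mem_singleton_iff]
          exact ne_of_gt (lt_of_lt_of_le hq0 ht.1))).neg
      · fun_prop
    · intro t ht
      rw [interior_Icc] at ht
      have ht0 : 0 < t := lt_trans hq0 ht.1
      have : HasDerivAt h (-t⁻¹ - 2 * (2 * (1 - t) * (-1))) t := by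
        have h1 : HasDerivAt (fun t : ℝ => - Real.log t) (-t⁻¹) t :=
          (Real.hasDerivAt_log (ne_of_gt ht0)).neg
        have h2 : HasDerivAt (fun t : ℝ => 2 * (1 - t) ^ 2) (2 * (2 * (1 - t) * (-1))) t := by
          have : HasDerivAt (fun t : ℝ => (1 - t) ^ 2) (2 * (1 - t) ^ 1 * (-1)) t :=
            ((hasDerivAt_id t).const_sub 1).pow 2
          simpa using this.const_mul 2
        exact h1.sub h2
      exact (this.differentiableAt).differentiableWithinAt
    · intro t ht
      rw [interior_Icc] at ht
      have ht0 : 0 < t := lt_trans hq0 ht.1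
      have hD : HasDerivAt h (-t⁻¹ - 2 * (2 * (1 - t) * (-1))) t := by
        have h1 : HasDerivAt (fun t : ℝ => - Real.log t) (-t⁻¹) t :=
          (Real.hasDerivAt_log (ne_of_gt ht0)).neg
        have h2 : HasDerivAt (fun t : ℝ => 2 * (1 - t) ^ 2) (2 * (2 * (1 - t) * (-1))) t := by
          have : HasDerivAt (fun t : ℝ => (1 - t) ^ 2) (2 * (1 - t) ^ 1 * (-1)) t :=
            ((hasDerivAt_id t).const_sub 1).pow 2
          simpa using this.const_mul 2
        exact h1.sub h2
      rw [hD.deriv]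
      have : -t⁻¹ - 2 * (2 * (1 - t) * (-1)) = (-(2*t-1)^2) / t := by
        field_simp
        ring
      rw [this]
      apply div_nonpos_of_nonpos_of_nonneg (by nlinarith [sq_nonneg (2*t-1)]) ht0.le
  have := key (left_mem_Icc.mpr hq1) (right_mem_Icc.mpr hq1) hq1
  simp only [hh, Real.log_one] at this
  nlinarith [this]

-- derivative of the binary KL minus 2(t-q)^2
lemma hasDerivAt_G {q t : ℝ} (ht0 : 0 < t) (ht1 : t < 1) :
    HasDerivAt (fun t : ℝ => t * (Real.log t - Real.log q)
        + (1 - t) * (Real.log (1 - t) - Real.log (1 - q)) - 2 * (t - q) ^ 2)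
      (Real.log t - Real.log q - (Real.log (1 - t) - Real.log (1 - q)) - 4 * (t - q)) t := by
  have h1 : HasDerivAt (fun t : ℝ => t * Real.log t) (Real.log t + 1) t :=
    Real.hasDerivAt_mul_log (ne_of_gt ht0)
  have h1' : HasDerivAt (fun t : ℝ => t * Real.log q) (Real.log q) t := by
    simpa using (hasDerivAt_id t).mul_const (Real.log q)
  have hsub : HasDerivAt (fun t : ℝ => 1 - t) (-1) t := (hasDerivAt_id t).const_sub 1
  have h2 : HasDerivAt (fun t : ℝ => (1 - t) * Real.log (1 - t))
      ((Real.log (1 - t) + 1) * (-1)) t :=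
    (Real.hasDerivAt_mul_log (ne_of_gt (by linarith))).comp t hsub
  have h2' : HasDerivAt (fun t : ℝ => (1 - t) * Real.log (1 - q)) ((-1) * Real.log (1 - q)) t :=
    hsub.mul_const (Real.log (1 - q))
  have h3 : HasDerivAt (fun t : ℝ => 2 * (t - q) ^ 2) (2 * (2 * (t - q))) t := by
    have : HasDerivAt (fun t : ℝ => (t - q) ^ 2) (2 * (t - q) ^ 1 * 1) t :=
      ((hasDerivAt_id t).sub_const q).pow 2
    simpa using this.const_mul 2
  have := (((h1.sub h1').add (h2.sub h2')).sub h3)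
  refine (this.congr_deriv (by ring)).congr_of_eventuallyEq (Filter.Eventually.of_forall fun s => ?_)
  simp only [Pi.add_apply, Pi.sub_apply]; ring

lemma pinsker_bin {p q : ℝ} (hq0 : 0 < q) (hqp : q < p) (hp1 : p < 1) :
    2 * (p - q) ^ 2 ≤ p * (Real.log p - Real.log q)
      + (1 - p) * (Real.log (1 - p) - Real.log (1 - q)) := by
  set H : ℝ → ℝ := fun t => Real.log t - Real.log q - (Real.log (1 - t) - Real.log (1 - q))
      - 4 * (t - q) with hHdef
  have hasH : ∀ t, 0 < t → t < 1 →
      HasDerivAt H (t⁻¹ - (-(1:ℝ)) / (1 - t) - 4) t := by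
    intro t ht0 ht1
    have l1 : HasDerivAt (fun t : ℝ => Real.log t) t⁻¹ t := Real.hasDerivAt_log (ne_of_gt ht0)
    have hsub : HasDerivAt (fun t : ℝ => 1 - t) (-1) t := (hasDerivAt_id t).const_sub 1
    have l2 : HasDerivAt (fun t : ℝ => Real.log (1 - t)) ((1 - t)⁻¹ * (-1)) t :=
      (Real.hasDerivAt_log (ne_of_gt (by linarith))).comp t hsub
    have l3 : HasDerivAt (fun t : ℝ => 4 * (t - q)) 4 t := by
      simpa using ((hasDerivAt_id t).sub_const q).const_mul 4
    have := ((l1.sub_const (Real.log q)).sub (l2.sub_const (Real.log (1 - q)))).sub l3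
    exact this.congr_deriv (by ring)
  -- H is nonneg on [q, p]
  have hHmono : MonotoneOn H (Icc q p) := by
    apply monotoneOn_of_deriv_nonneg (convex_Icc q p)
    · intro t ht
      exact ((hasH t (lt_of_lt_of_le hq0 ht.1) (lt_of_le_of_lt ht.2 hp1)).continuousAt).continuousWithinAt
    · intro t ht
      rw [interior_Icc] at ht
      exact ((hasH t (lt_trans hq0 ht.1) (lt_trans ht.2 hp1)).differentiableAt).differentiableWithinAt
    · intro t ht
      rw [interior_Icc] at ht
      have ht0 : 0 < t := lt_trans hq0 ht.1
      have ht1 : t < 1 := lt_trans ht.2 hp1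
      rw [(hasH t ht0 ht1).deriv]
      have ht1' : (0:ℝ) < 1 - t := by linarith
      have h4 : 4 ≤ t⁻¹ + 1/(1-t) := by
        have key : t⁻¹ + 1/(1-t) - 4 = (2*t-1)^2 * (t⁻¹ * (1-t)⁻¹) := by
          field_simp
          ring
        nlinarith [mul_nonneg (sq_nonneg (2*t-1)) (mul_pos (inv_pos.mpr ht0) (inv_pos.mpr ht1')).le]
      have : t⁻¹ - (-(1:ℝ)) / (1 - t) - 4 = t⁻¹ + 1/(1-t) - 4 := by ring_nf
      rw [this]
      linarith
  have hHnonneg : ∀ t ∈ Icc q p, 0 ≤ H t := by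
    intro t ht
    have := hHmono (left_mem_Icc.mpr (le_of_lt hqp)) ht ht.1
    have hHq : H q = 0 := by simp [hHdef]
    linarith [hHq ▸ this]
  -- G is monotone on [q, p]
  set G : ℝ → ℝ := fun t => t * (Real.log t - Real.log q)
      + (1 - t) * (Real.log (1 - t) - Real.log (1 - q)) - 2 * (t - q) ^ 2 with hGdef
  have hGmono : MonotoneOn G (Icc q p) := by
    apply monotoneOn_of_deriv_nonneg (convex_Icc q p)
    · intro t ht
      exact ((hasDerivAt_G (lt_of_lt_of_le hq0 ht.1) (lt_of_le_of_lt ht.2 hp1)).continuousAt).continuousWithinAt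
    · intro t ht
      rw [interior_Icc] at ht
      exact ((hasDerivAt_G (lt_trans hq0 ht.1) (lt_trans ht.2 hp1)).differentiableAt).differentiableWithinAt
    · intro t ht
      rw [interior_Icc] at ht
      rw [(hasDerivAt_G (lt_trans hq0 ht.1) (lt_trans ht.2 hp1)).deriv]
      exact hHnonneg t (Ioo_subset_Icc_self ht)
  have := hGmono (left_mem_Icc.mpr (le_of_lt hqp)) (right_mem_Icc.mpr (le_of_lt hqp)) (le_of_lt hqp)
  have hGq : G q = 0 := by simp [hGdef]
  rw [hGq] at this
  simp only [hGdef] at this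
  linarith

lemma klbin_le_of_renyi {p q ρ : ℝ} (hρ : 0 < ρ) (hp0 : 0 < p) (hp1 : p < 1)
    (hq0 : 0 < q) (hq1 : q < 1)
    (hF : ∀ a : ℝ, 1 < a →
      p ^ a * q ^ (1 - a) + (1 - p) ^ a * (1 - q) ^ (1 - a) ≤ Real.exp (ρ * a * (a - 1))) :
    p * (Real.log p - Real.log q) + (1 - p) * (Real.log (1 - p) - Real.log (1 - q)) ≤ ρ := by
  have h1p : (0:ℝ) < 1 - p := by linarith
  have h1q : (0:ℝ) < 1 - q := by linarith
  set F : ℝ → ℝ := fun a => Real.exp (Real.log p * a + Real.log q * (1 - a))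
      + Real.exp (Real.log (1 - p) * a + Real.log (1 - q) * (1 - a))
      - Real.exp (ρ * (a * a - a)) with hFdef
  have hFeq : ∀ a : ℝ, F a = p ^ a * q ^ (1 - a) + (1 - p) ^ a * (1 - q) ^ (1 - a)
      - Real.exp (ρ * a * (a - 1)) := by
    intro a
    rw [hFdef]
    simp only
    rw [Real.rpow_def_of_pos hp0, Real.rpow_def_of_pos hq0, Real.rpow_def_of_pos h1p,
      Real.rpow_def_of_pos h1q, ← Real.exp_add, ← Real.exp_add]
    ring_nf
  have hF1 : F 1 = 0 := by
    rw [hFeq]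
    simp [Real.rpow_one, Real.rpow_zero]
  have hFle : ∀ a : ℝ, 1 < a → F a ≤ 0 := by
    intro a ha
    rw [hFeq]
    linarith [hF a ha]
  -- derivative of F at 1
  set D : ℝ → ℝ := fun x => x  -- dummy
  have hD : HasDerivAt F (p * (Real.log p - Real.log q)
      + (1 - p) * (Real.log (1 - p) - Real.log (1 - q)) - ρ) 1 := by
    have t1 : HasDerivAt (fun a : ℝ => Real.log p * a + Real.log q * (1 - a))
        (Real.log p * 1 + Real.log q * (-1)) 1 :=
      ((hasDerivAt_id 1).const_mul (Real.log p)).add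
        ((((hasDerivAt_id 1).const_sub 1)).const_mul (Real.log q))
    have t2 : HasDerivAt (fun a : ℝ => Real.log (1-p) * a + Real.log (1-q) * (1 - a))
        (Real.log (1-p) * 1 + Real.log (1-q) * (-1)) 1 :=
      ((hasDerivAt_id 1).const_mul (Real.log (1-p))).add
        ((((hasDerivAt_id 1).const_sub 1)).const_mul (Real.log (1-q)))
    have t3 : HasDerivAt (fun a : ℝ => ρ * (a * a - a)) (ρ * (1 * 1 + 1 * 1 - 1)) 1 :=
      (((hasDerivAt_id 1).mul (hasDerivAt_id 1)).sub (hasDerivAt_id 1)).const_mul ρ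
    have := (t1.exp.add t2.exp).sub t3.exp
    refine this.congr_deriv ?_
    simp [Real.exp_log hp0, Real.exp_log h1p]
    ring
  -- slope argument
  have hslope := hasDerivAt_iff_tendsto_slope.mp hD
  have hmono : 𝓝[>] (1:ℝ) ≤ 𝓝[≠] (1:ℝ) :=
    nhdsWithin_mono 1 (fun a ha => ne_of_gt ha)
  have hslope' := hslope.mono_left hmono
  have hle : ∀ᶠ a in 𝓝[>] (1:ℝ), slope F 1 a ≤ 0 := by
    filter_upwards [self_mem_nhdsWithin] with a (ha : 1 < a)
    rw [slope_def_field, hF1, sub_zero]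
    exact div_nonpos_of_nonpos_of_nonneg (hFle a ha) (by linarith)
  have := le_of_tendsto hslope' hle
  linarith

-- Hölder-based data processing: for prob measures with bounded Rényi info,
-- p^a q^(1-a) ≤ (set integral of rnDeriv^a)
lemma holder_piece {𝓨 : Type*} [MeasurableSpace 𝓨] (P Q : Measure 𝓨)
    [IsProbabilityMeasure P] [IsProbabilityMeasure Q]
    (hAC : P ≪ Q) {a : ℝ} (ha : 1 < a) {T : Set 𝓨} (hT : MeasurableSet T)
    (hfin : ∫⁻ x, (P.rnDeriv Q x) ^ a ∂Q ≠ ⊤) (hqT : (Q T).toReal ≠ 0) :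
    ((P T).toReal) ^ a * ((Q T).toReal) ^ (1 - a)
      ≤ (∫⁻ x in T, (P.rnDeriv Q x) ^ a ∂Q).toReal := by
  have ha0 : (0:ℝ) < a := by linarith
  have hconj : a.HolderConjugate (a / (a - 1)) := by
    exact Real.HolderConjugate.conjExponent ha
  have hH := ENNReal.lintegral_mul_le_Lp_mul_Lq (Q.restrict T) hconj
    (Measure.measurable_rnDeriv P Q).aemeasurable (aemeasurable_const (b := (1:ℝ≥0∞)))
  simp only [Pi.mul_apply, mul_one, one_mul, ENNReal.one_rpow, lintegral_const,
    Measure.restrict_apply MeasurableSet.univ, Set.univ_inter] at hH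
  rw [Measure.setLIntegral_rnDeriv hAC] at hH
  -- hH : P T ≤ (∫⁻ in T, f^a)^(1/a) * (Q T)^(1/(a/(a-1)))
  have hAfin : (∫⁻ x in T, (P.rnDeriv Q x) ^ a ∂Q) ≠ ⊤ :=
    fun h => hfin (top_le_iff.mp (h ▸ setLIntegral_le_lintegral T _))
  set A := (∫⁻ x in T, (P.rnDeriv Q x) ^ a ∂Q) with hA
  have hrhs_fin : A ^ (1/a) * (Q T) ^ (1/(a/(a-1))) ≠ ⊤ := by
    apply ENNReal.mul_ne_top
    · exact ENNReal.rpow_ne_top_of_nonneg (by positivity) hAfin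
    · exact ENNReal.rpow_ne_top_of_nonneg (div_nonneg zero_le_one (div_nonneg ha0.le (by linarith))) (measure_ne_top Q T)
  have hreal : (P T).toReal ≤ A.toReal ^ (1/a) * (Q T).toReal ^ (1/(a/(a-1))) := by
    have := ENNReal.toReal_mono hrhs_fin hH
    rwa [ENNReal.toReal_mul, ← ENNReal.toReal_rpow, ← ENNReal.toReal_rpow] at this
  -- raise to power a
  have hp_nonneg : (0:ℝ) ≤ (P T).toReal := ENNReal.toReal_nonneg
  have hq_pos : (0:ℝ) < (Q T).toReal := lt_of_le_of_ne ENNReal.toReal_nonneg (Ne.symm hqT)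
  have hpow := Real.rpow_le_rpow hp_nonneg hreal (le_of_lt ha0)
  rw [Real.mul_rpow (by positivity) (by positivity)] at hpow
  -- simplify exponents
  rw [← Real.rpow_mul (by positivity), ← Real.rpow_mul hq_pos.le] at hpow
  have e1 : 1/a * a = 1 := by field_simp
  have e2 : 1/(a/(a-1)) * a = a - 1 := by field_simp
  rw [e1, e2, Real.rpow_one] at hpow
  -- hpow : (P T).toReal ^ a ≤ A.toReal * (Q T).toReal ^ (a-1)   (with ^ a as rpow natCast?)
  calc ((P T).toReal) ^ a * ((Q T).toReal) ^ (1 - a)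
      ≤ (A.toReal * ((Q T).toReal) ^ (a-1)) * ((Q T).toReal) ^ (1 - a) := by
        exact mul_le_mul_of_nonneg_right hpow (Real.rpow_nonneg hq_pos.le _)
    _ = A.toReal := by
        rw [mul_assoc, ← Real.rpow_add hq_pos]
        norm_num

lemma step_tv {𝓨 : Type*} [MeasurableSpace 𝓨] {P Q : Measure 𝓨}
    [IsProbabilityMeasure P] [IsProbabilityMeasure Q] {ρ : ℝ} (hρ : 0 < ρ)
    (hren : ∀ a : ℝ, 1 < a → renyiDiv a P Q ≤ ENNReal.ofReal (ρ * a))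
    {S : Set 𝓨} (hS : MeasurableSet S) :
    (P S).toReal - (Q S).toReal ≤ Real.sqrt (ρ / 2) := by
  have hsq : 0 ≤ Real.sqrt (ρ / 2) := Real.sqrt_nonneg _
  by_cases hpq : (P S).toReal ≤ (Q S).toReal
  · linarith
  push_neg at hpq
  -- extract info from the Rényi hypothesis
  have hcond : ∀ a : ℝ, 1 < a → (P ≪ Q ∧ ∫⁻ x, (P.rnDeriv Q x) ^ a ∂Q ≠ ⊤) ∧
      (∫⁻ x, (P.rnDeriv Q x) ^ a ∂Q).toReal ≤ Real.exp (ρ * a * (a - 1)) := by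
    intro a ha
    have h := hren a ha
    rw [renyiDiv] at h
    split_ifs at h with hc
    · refine ⟨hc, ?_⟩
      have hra : (0:ℝ) ≤ ρ * a := (mul_pos hρ (by linarith)).le
      have h' : (a - 1)⁻¹ * Real.log (∫⁻ x, (P.rnDeriv Q x) ^ a ∂Q).toReal ≤ ρ * a :=
        (ENNReal.ofReal_le_ofReal_iff hra).mp h
      rw [inv_mul_le_iff₀ (by linarith : (0:ℝ) < a - 1)] at h'
      rcases le_or_gt (∫⁻ x, (P.rnDeriv Q x) ^ a ∂Q).toReal 0 with hI | hI
      · exact le_trans hI (Real.exp_pos _).le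
      · calc (∫⁻ x, (P.rnDeriv Q x) ^ a ∂Q).toReal
            = Real.exp (Real.log (∫⁻ x, (P.rnDeriv Q x) ^ a ∂Q).toReal) :=
              (Real.exp_log hI).symm
          _ ≤ Real.exp (ρ * a * (a - 1)) := by
              apply Real.exp_le_exp.mpr
              nlinarith
    · exact absurd (top_le_iff.mp h) ENNReal.ofReal_ne_top
  have hAC : P ≪ Q := (hcond 2 one_lt_two).1.1
  set p := (P S).toReal with hp
  set q := (Q S).toReal with hq
  have hQS0 : Q S ≠ 0 := by
    intro h0
    have : P S = 0 := hAC h0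
    rw [hp, hq, this, h0] at hpq
    simp at hpq
  have hq0 : 0 < q := ENNReal.toReal_pos hQS0 (measure_ne_top Q S)
  have hp1 : p ≤ 1 := by
    rw [hp]
    calc (P S).toReal ≤ (P Set.univ).toReal :=
          ENNReal.toReal_mono (measure_ne_top P _) (measure_mono (Set.subset_univ S))
      _ = 1 := by simp
  have hq1 : q < 1 := lt_of_lt_of_le hpq hp1
  have hp0 : 0 < p := lt_trans hq0 hpq
  -- complement values
  have hPc : (P Sᶜ).toReal = 1 - p := by
    rw [measure_compl hS (measure_ne_top P S), measure_univ,
      ENNReal.toReal_sub_of_le prob_le_one ENNReal.one_ne_top]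
    simp [hp]
  have hQc : (Q Sᶜ).toReal = 1 - q := by
    rw [measure_compl hS (measure_ne_top Q S), measure_univ,
      ENNReal.toReal_sub_of_le prob_le_one ENNReal.one_ne_top]
    simp [hq]
  -- the family of inequalities
  have hFa : ∀ a : ℝ, 1 < a →
      p ^ a * q ^ (1 - a) + (1 - p) ^ a * (1 - q) ^ (1 - a) ≤ Real.exp (ρ * a * (a - 1)) := by
    intro a ha
    obtain ⟨⟨_, hfin⟩, hI⟩ := hcond a ha
    have hA := holder_piece P Q hAC ha hS hfin (ne_of_gt hq0)
    have hB := holder_piece P Q hAC ha hS.compl hfin (by rw [hQc]; linarith)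
    have hsplit : (∫⁻ x in S, (P.rnDeriv Q x) ^ a ∂Q) + (∫⁻ x in Sᶜ, (P.rnDeriv Q x) ^ a ∂Q)
        = ∫⁻ x, (P.rnDeriv Q x) ^ a ∂Q := lintegral_add_compl _ hS
    have hAfin : (∫⁻ x in S, (P.rnDeriv Q x) ^ a ∂Q) ≠ ⊤ :=
      fun h => hfin (top_le_iff.mp (h ▸ setLIntegral_le_lintegral S _))
    have hBfin : (∫⁻ x in Sᶜ, (P.rnDeriv Q x) ^ a ∂Q) ≠ ⊤ :=
      fun h => hfin (top_le_iff.mp (h ▸ setLIntegral_le_lintegral Sᶜ _))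
    have hsum : (∫⁻ x in S, (P.rnDeriv Q x) ^ a ∂Q).toReal
        + (∫⁻ x in Sᶜ, (P.rnDeriv Q x) ^ a ∂Q).toReal
        = (∫⁻ x, (P.rnDeriv Q x) ^ a ∂Q).toReal := by
      rw [← ENNReal.toReal_add hAfin hBfin, hsplit]
    rw [hPc, hQc] at hB
    linarith
  -- case split on p = 1
  rcases eq_or_lt_of_le hp1 with hp1' | hp1'
  · -- p = 1
    have key : ∀ a : ℝ, 1 < a → - Real.log q ≤ ρ * a := by
      intro a ha
      have h := hFa a ha
      rw [hp1'] at h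
      have ha0 : a ≠ 0 := by linarith
      rw [Real.one_rpow, sub_self, Real.zero_rpow ha0, one_mul, zero_mul, add_zero] at h
      have hlog := Real.log_le_log (Real.rpow_pos_of_pos hq0 _) h
      rw [Real.log_exp, Real.log_rpow hq0] at hlog
      nlinarith [sub_pos.mpr ha]
    have ht : Filter.Tendsto (fun a : ℝ => ρ * a) (𝓝[>] (1:ℝ)) (𝓝 (ρ * 1)) :=
      ((continuous_const.mul continuous_id).tendsto 1).mono_left nhdsWithin_le_nhds
    have hlim : - Real.log q ≤ ρ * 1 := ge_of_tendsto ht (by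
      filter_upwards [self_mem_nhdsWithin] with a ha
      exact key a ha)
    have hpo := pinsker_one hq0 hq1.le
    have hsq2 : (p - q) ^ 2 ≤ ρ / 2 := by nlinarith
    calc p - q = Real.sqrt ((p - q) ^ 2) := (Real.sqrt_sq (by linarith)).symm
      _ ≤ Real.sqrt (ρ / 2) := Real.sqrt_le_sqrt hsq2
  · -- p < 1
    have hkl := klbin_le_of_renyi hρ hp0 hp1' hq0 hq1 hFa
    have hpb := pinsker_bin hq0 hpq hp1'
    have hsq2 : (p - q) ^ 2 ≤ ρ / 2 := by nlinarith
    calc p - q = Real.sqrt ((p - q) ^ 2) := (Real.sqrt_sq (by linarith)).symm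
      _ ≤ Real.sqrt (ρ / 2) := Real.sqrt_le_sqrt hsq2

lemma lintegral_le_of_tv {α : Type*} [MeasurableSpace α] (P Q : Measure α)
    [IsProbabilityMeasure P] [IsProbabilityMeasure Q] (g : α → ℝ≥0∞) (hg : Measurable g)
    (hg1 : ∀ x, g x ≤ 1) {K δ : ℝ} (hK : 0 ≤ K) (hδ : 0 ≤ δ)
    (hosc : ∀ x y, (g x).toReal - (g y).toReal ≤ K)
    (htv : ∀ S : Set α, MeasurableSet S → (P S).toReal - (Q S).toReal ≤ δ) :
    ∫⁻ x, g x ∂P ≤ ∫⁻ x, g x ∂Q + ENNReal.ofReal (K * δ) := by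
  have hne : Nonempty α := by
    by_contra h
    rw [not_nonempty_iff] at h
    have h1 : P (univ : Set α) = 1 := measure_univ
    rw [Set.univ_eq_empty_iff.mpr h, measure_empty] at h1
    exact zero_ne_one h1
  set f : α → ℝ := fun x => (g x).toReal with hfdef
  have hf : Measurable f := hg.ennreal_toReal
  have hf0 : ∀ x, 0 ≤ f x := fun x => ENNReal.toReal_nonneg
  have hgne : ∀ x, g x ≠ ⊤ := fun x => ne_top_of_le_ne_top ENNReal.one_ne_top (hg1 x)
  set m : ℝ := ⨅ x, f x with hmdef
  have hbdd : BddBelow (Set.range f) := ⟨0, by rintro _ ⟨x, rfl⟩; exact hf0 x⟩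
  have hm0 : 0 ≤ m := le_ciInf fun x => hf0 x
  have hmle : ∀ x, m ≤ f x := fun x => ciInf_le hbdd x
  have hfm : ∀ x, f x - m ≤ K := by
    intro x
    have : f x - K ≤ m := le_ciInf fun y => by linarith [hosc x y]
    linarith
  have hgeq : ∀ x, g x = ENNReal.ofReal (f x - m) + ENNReal.ofReal m := by
    intro x
    rw [← ENNReal.ofReal_add (by linarith [hmle x]) hm0, sub_add_cancel,
      hfdef, ENNReal.ofReal_toReal (hgne x)]
  have hf'meas : Measurable fun x => f x - m := hf.sub measurable_const
  have layer : ∀ (μ : Measure α), ∫⁻ x, ENNReal.ofReal (f x - m) ∂μ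
      = ∫⁻ t in Ioi (0:ℝ), μ {a | t < f a - m} := fun μ =>
    lintegral_eq_lintegral_meas_lt μ (Filter.Eventually.of_forall fun x => by
      simp only [Pi.zero_apply]; linarith [hmle x]) hf'meas.aemeasurable
  have hsetmeas : ∀ t : ℝ, MeasurableSet {a | t < f a - m} := fun t =>
    measurableSet_lt measurable_const hf'meas
  have key : ∫⁻ x, ENNReal.ofReal (f x - m) ∂P
      ≤ ∫⁻ x, ENNReal.ofReal (f x - m) ∂Q + ENNReal.ofReal (K * δ) := by
    rw [layer P, layer Q]
    have hsplit : (Ioi (0:ℝ)) = Ioc 0 K ∪ Ioi K := (Ioc_union_Ioi_eq_Ioi hK).symm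
    have hdisj : Disjoint (Ioc (0:ℝ) K) (Ioi K) := Ioc_disjoint_Ioi le_rfl
    have hzero : ∀ (μ : Measure α), ∫⁻ t in Ioi K, μ {a | t < f a - m} = 0 := by
      intro μ
      have : ∀ t ∈ Ioi K, μ {a | t < f a - m} = 0 := by
        intro t ht
        have : {a | t < f a - m} = ∅ := by
          ext a
          simp only [mem_setOf_eq, mem_empty_iff_false, iff_false, not_lt]
          linarith [hfm a, ht.out]
        rw [this, measure_empty]
      calc ∫⁻ t in Ioi K, μ {a | t < f a - m}
          = ∫⁻ _ in Ioi K, 0 := setLIntegral_congr_fun measurableSet_Ioi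
            (fun t ht => this t ht)
        _ = 0 := lintegral_zero
    have hPsplit : ∫⁻ t in Ioi (0:ℝ), P {a | t < f a - m}
        = ∫⁻ t in Ioc 0 K, P {a | t < f a - m} := by
      rw [hsplit, lintegral_union measurableSet_Ioi hdisj, hzero P, add_zero]
    have hQsplit : ∫⁻ t in Ioi (0:ℝ), Q {a | t < f a - m}
        = ∫⁻ t in Ioc 0 K, Q {a | t < f a - m} := by
      rw [hsplit, lintegral_union measurableSet_Ioi hdisj, hzero Q, add_zero]
    rw [hPsplit, hQsplit]
    calc (∫⁻ t in Ioc 0 K, P {a | t < f a - m})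
        ≤ ∫⁻ t in Ioc 0 K, (Q {a | t < f a - m} + ENNReal.ofReal δ) := by
          apply lintegral_mono
          intro t
          have h1 := htv _ (hsetmeas t)
          calc P {a | t < f a - m} = ENNReal.ofReal ((P {a | t < f a - m}).toReal) :=
                (ENNReal.ofReal_toReal (measure_ne_top _ _)).symm
            _ ≤ ENNReal.ofReal ((Q {a | t < f a - m}).toReal + δ) :=
                ENNReal.ofReal_le_ofReal (by linarith)
            _ = ENNReal.ofReal ((Q {a | t < f a - m}).toReal) + ENNReal.ofReal δ :=
                ENNReal.ofReal_add ENNReal.toReal_nonneg hδ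
            _ = Q {a | t < f a - m} + ENNReal.ofReal δ := by
                rw [ENNReal.ofReal_toReal (measure_ne_top _ _)]
      _ = (∫⁻ t in Ioc 0 K, Q {a | t < f a - m}) + ENNReal.ofReal δ * volume (Ioc (0:ℝ) K) := by
          rw [lintegral_add_right _ measurable_const, setLIntegral_const]
      _ ≤ (∫⁻ t in Ioc 0 K, Q {a | t < f a - m}) + ENNReal.ofReal (K * δ) := by
          apply add_le_add_right
          rw [Real.volume_Ioc, sub_zero, ← ENNReal.ofReal_mul hδ, mul_comm]
  -- reassemble
  have expand : ∀ (μ : Measure α) [IsProbabilityMeasure μ],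
      ∫⁻ x, g x ∂μ = ∫⁻ x, ENNReal.ofReal (f x - m) ∂μ + ENNReal.ofReal m := by
    intro μ _
    calc ∫⁻ x, g x ∂μ = ∫⁻ x, (ENNReal.ofReal (f x - m) + ENNReal.ofReal m) ∂μ :=
          lintegral_congr fun x => hgeq x
      _ = ∫⁻ x, ENNReal.ofReal (f x - m) ∂μ + ENNReal.ofReal m * μ univ :=
          by rw [lintegral_add_right _ measurable_const, lintegral_const]
      _ = ∫⁻ x, ENNReal.ofReal (f x - m) ∂μ + ENNReal.ofReal m := by
          rw [measure_univ, mul_one]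
  rw [expand P, expand Q]
  calc ∫⁻ x, ENNReal.ofReal (f x - m) ∂P + ENNReal.ofReal m
      ≤ (∫⁻ x, ENNReal.ofReal (f x - m) ∂Q + ENNReal.ofReal (K * δ)) + ENNReal.ofReal m :=
        add_le_add_left key _
    _ = ∫⁻ x, ENNReal.ofReal (f x - m) ∂Q + ENNReal.ofReal m + ENNReal.ofReal (K * δ) := by
        ring

section helpers

lemma prob_toReal_le_one {α : Type*} [MeasurableSpace α] (P : Measure α)
    [IsProbabilityMeasure P] (S : Set α) : (P S).toReal ≤ 1 := by
  calc (P S).toReal ≤ (P Set.univ).toReal :=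
        ENNReal.toReal_mono (measure_ne_top P _) (measure_mono (Set.subset_univ S))
    _ = 1 := by simp

lemma tv_bddAbove {α : Type*} [MeasurableSpace α] (P Q : Measure α)
    [IsProbabilityMeasure P] [IsProbabilityMeasure Q] :
    BddAbove (Set.range fun S : {S : Set α // MeasurableSet S} =>
      ((P S.1).toReal - (Q S.1).toReal)) := by
  refine ⟨1, ?_⟩
  rintro _ ⟨S, rfl⟩
  have h1 : (P S.1).toReal ≤ 1 := prob_toReal_le_one P S.1
  have h2 : 0 ≤ (Q S.1).toReal := ENNReal.toReal_nonneg
  show (P S.1).toReal - (Q S.1).toReal ≤ 1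
  linarith

lemma tv_bound {α : Type*} [MeasurableSpace α] (P Q : Measure α)
    [IsProbabilityMeasure P] [IsProbabilityMeasure Q] {S : Set α} (hS : MeasurableSet S) :
    (P S).toReal - (Q S).toReal ≤ tvDist P Q :=
  le_ciSup (tv_bddAbove P Q) (⟨S, hS⟩ : {S : Set α // MeasurableSet S})

lemma tvDist_nonneg {α : Type*} [MeasurableSpace α] (P Q : Measure α)
    [IsProbabilityMeasure P] [IsProbabilityMeasure Q] : 0 ≤ tvDist P Q := by
  have := tv_bound P Q MeasurableSet.empty
  simpa using this

lemma tv_bound' {α : Type*} [MeasurableSpace α] (P Q : Measure α)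
    [IsProbabilityMeasure P] [IsProbabilityMeasure Q] {S : Set α} (hS : MeasurableSet S) :
    (Q S).toReal - (P S).toReal ≤ tvDist P Q := by
  have hPc : (P Sᶜ).toReal = 1 - (P S).toReal := by
    rw [measure_compl hS (measure_ne_top P S), measure_univ,
      ENNReal.toReal_sub_of_le prob_le_one ENNReal.one_ne_top]
    simp
  have hQc : (Q Sᶜ).toReal = 1 - (Q S).toReal := by
    rw [measure_compl hS (measure_ne_top Q S), measure_univ,
      ENNReal.toReal_sub_of_le prob_le_one ENNReal.one_ne_top]
    simp
  have := tv_bound P Q hS.compl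
  rw [hPc, hQc] at this
  linarith

lemma meas_le_add {A B : ℝ≥0∞} (hA : A ≠ ⊤) (hB : B ≠ ⊤) {c : ℝ}
    (h : A.toReal - B.toReal ≤ c) : A ≤ B + ENNReal.ofReal c := by
  calc A = ENNReal.ofReal A.toReal := (ENNReal.ofReal_toReal hA).symm
    _ ≤ ENNReal.ofReal (B.toReal + c) := ENNReal.ofReal_le_ofReal (by linarith)
    _ ≤ ENNReal.ofReal B.toReal + ENNReal.ofReal c := ENNReal.ofReal_add_le
    _ = B + ENNReal.ofReal c := by rw [ENNReal.ofReal_toReal hB]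

end helpers

section chain

variable [DecidableEq 𝓧] {n : ℕ} (M : Kernel (Fin n → 𝓧) 𝓨) [IsMarkovKernel M]
  {ρ : ℝ}

lemma single_step (hρ : 0 < ρ) (hzCDP : IsZCDP M ρ) {S : Set 𝓨} (hS : MeasurableSet S)
    {x y : Fin n → 𝓧} (hxy : hammingDist x y ≤ 1) :
    (M x S).toReal - (M y S).toReal ≤ Real.sqrt (ρ / 2) :=
  step_tv hρ (fun a ha => hzCDP x y hxy a ha) hS

lemma chain_bound (hρ : 0 < ρ) (hzCDP : IsZCDP M ρ) {S : Set 𝓨} (hS : MeasurableSet S)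
    (x y : Fin n → 𝓧) :
    (M x S).toReal - (M y S).toReal ≤ n * Real.sqrt (ρ / 2) := by
  set z : ℕ → (Fin n → 𝓧) := fun k i => if (i : ℕ) < k then y i else x i with hz
  have hz0 : z 0 = x := by funext i; simp [hz]
  have hzn : z n = y := by funext i; simp [hz, i.isLt]
  have hham : ∀ k : ℕ, hammingDist (z k) (z (k + 1)) ≤ 1 := by
    intro k
    rw [hammingDist]
    apply Finset.card_le_one.mpr
    intro i hi j hj
    simp only [Finset.mem_filter, Finset.mem_univ, true_and, hz] at hi hj
    have hik : (i : ℕ) = k := by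
      by_contra h
      apply hi
      have : ((i : ℕ) < k) ↔ ((i : ℕ) < k + 1) := by omega
      simp only [this]
    have hjk : (j : ℕ) = k := by
      by_contra h
      apply hj
      have : ((j : ℕ) < k) ↔ ((j : ℕ) < k + 1) := by omega
      simp only [this]
    exact Fin.ext (hik.trans hjk.symm)
  have hstep : ∀ k : ℕ, (M (z k) S).toReal - (M (z (k + 1)) S).toReal ≤ Real.sqrt (ρ / 2) :=
    fun k => single_step M hρ hzCDP hS (hham k)
  have htel : ∑ k ∈ Finset.range n,
      ((M (z k) S).toReal - (M (z (k + 1)) S).toReal)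
      = (M (z 0) S).toReal - (M (z n) S).toReal :=
    Finset.sum_range_sub' (fun k => (M (z k) S).toReal) n
  rw [hz0, hzn] at htel
  calc (M x S).toReal - (M y S).toReal
      = ∑ k ∈ Finset.range n, ((M (z k) S).toReal - (M (z (k + 1)) S).toReal) := htel.symm
    _ ≤ ∑ _k ∈ Finset.range n, Real.sqrt (ρ / 2) :=
        Finset.sum_le_sum fun k _ => hstep k
    _ = n * Real.sqrt (ρ / 2) := by
        rw [Finset.sum_const, Finset.card_range, nsmul_eq_mul]

end chain

section errb

lemma ne_one_iff_eq_zero (v : Fin 2) : (v ≠ 1) ↔ ¬ (v ≠ 0) := by omega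

lemma err_bound {n : ℕ} (M : Kernel (Fin n → 𝓧) 𝓨) [IsMarkovKernel M]
    (Ψ : 𝓨 → Fin 2) (hΨ : Measurable Ψ)
    (P0 P1 : Measure (Fin n → 𝓧)) [IsProbabilityMeasure P0] [IsProbabilityMeasure P1]
    {δ : ℝ}
    (hdiff : (∫⁻ x, M x {y | Ψ y ≠ 0} ∂P1).toReal
      - (∫⁻ x, M x {y | Ψ y ≠ 0} ∂P0).toReal ≤ δ) :
    (1 / 2 : ℝ) * (1 - δ) ≤ max ((∫⁻ x, M x {y | Ψ y ≠ 0} ∂P0).toReal)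
      ((∫⁻ x, M x {y | Ψ y ≠ 1} ∂P1).toReal) := by
  have hSm : MeasurableSet {v : Fin 2 | v ≠ 0} := trivial
  have hS : MeasurableSet {y | Ψ y ≠ 0} := hΨ hSm
  have hcompl : {y | Ψ y ≠ 1} = {y | Ψ y ≠ 0}ᶜ := by
    ext y
    simp only [Set.mem_setOf_eq, Set.mem_compl_iff]
    exact ne_one_iff_eq_zero (Ψ y)
  have hfin : ∀ (P : Measure (Fin n → 𝓧)) [IsProbabilityMeasure P],
      ∫⁻ x, M x {y | Ψ y ≠ 0} ∂P ≤ 1 := by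
    intro P _
    calc ∫⁻ x, M x {y | Ψ y ≠ 0} ∂P ≤ ∫⁻ _, 1 ∂P := lintegral_mono fun x => prob_le_one
      _ = 1 := by simp
  have hint : (∫⁻ x, M x {y | Ψ y ≠ 1} ∂P1) = 1 - ∫⁻ x, M x {y | Ψ y ≠ 0} ∂P1 := by
    have h1 : (∫⁻ x, M x {y | Ψ y ≠ 1} ∂P1)
        = ∫⁻ x, (1 - M x {y | Ψ y ≠ 0}) ∂P1 := by
      apply lintegral_congr
      intro x
      rw [hcompl, measure_compl hS (measure_ne_top _ _), measure_univ]
    rw [h1, lintegral_sub (Kernel.measurable_coe M hS)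
      (lt_of_le_of_lt (hfin P1) ENNReal.one_lt_top).ne
      (Filter.Eventually.of_forall fun x => prob_le_one)]
    simp
  have e1eq : (∫⁻ x, M x {y | Ψ y ≠ 1} ∂P1).toReal
      = 1 - (∫⁻ x, M x {y | Ψ y ≠ 0} ∂P1).toReal := by
    rw [hint, ENNReal.toReal_sub_of_le (hfin P1) ENNReal.one_ne_top]
    simp
  set u0 := (∫⁻ x, M x {y | Ψ y ≠ 0} ∂P0).toReal
  set u1 := (∫⁻ x, M x {y | Ψ y ≠ 0} ∂P1).toReal
  rw [e1eq]
  rcases le_total u0 (1 - u1) with h | h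
  · rw [max_eq_right h]; linarith
  · rw [max_eq_left h]; linarith

end errb

lemma toReal_diff_le {A B : ℝ≥0∞} (hB : B ≠ ⊤) {c : ℝ} (hc : 0 ≤ c)
    (h : A ≤ B + ENNReal.ofReal c) : A.toReal - B.toReal ≤ c := by
  have hBc : B + ENNReal.ofReal c ≠ ⊤ := by
    simp [hB, ENNReal.ofReal_ne_top]
  have := ENNReal.toReal_mono hBc h
  rw [ENNReal.toReal_add hB ENNReal.ofReal_ne_top, ENNReal.toReal_ofReal hc] at this
  linarith

/-- **Le Cam's lemma for `ρ`-zCDP**: if `M` is `ρ`-zCDP, then for any binary test `Ψ` and any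
probability distributions `P 0, P 1` on `𝓧^n`,
`max_i P_{X ∼ P i, M}(Ψ(M(X)) ≠ i)
  ≥ (1/2) max { 1 - TV(P 0, P 1), 1 - n √(ρ/2) TV(P 0, P 1) }`;
moreover, when `P i = (p i)^{⊗n}` are product distributions,
`max_i P_{X ∼ P i, M}(Ψ(M(X)) ≠ i) ≥ (1/2) (1 - n √(ρ/2) TV(p 0, p 1))`. -/
theorem lecam_zcdp [DecidableEq 𝓧] {n : ℕ}
    (M : Kernel (Fin n → 𝓧) 𝓨) [IsMarkovKernel M]
    (ρ : ℝ) (hρ : 0 < ρ) (hzCDP : IsZCDP M ρ)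
    (Ψ : 𝓨 → Fin 2) (hΨ : Measurable Ψ) :
    (∀ P : Fin 2 → Measure (Fin n → 𝓧), (∀ i, IsProbabilityMeasure (P i)) →
      (1 / 2 : ℝ) * max (1 - tvDist (P 0) (P 1))
          (1 - n * Real.sqrt (ρ / 2) * tvDist (P 0) (P 1))
      ≤ max ((∫⁻ x, M x {y | Ψ y ≠ 0} ∂(P 0)).toReal)
            ((∫⁻ x, M x {y | Ψ y ≠ 1} ∂(P 1)).toReal)) ∧
    (∀ p : Fin 2 → Measure 𝓧, (∀ i, IsProbabilityMeasure (p i)) →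
      (1 / 2 : ℝ) * (1 - n * Real.sqrt (ρ / 2) * tvDist (p 0) (p 1))
      ≤ max ((∫⁻ x, M x {y | Ψ y ≠ 0} ∂(Measure.pi fun _ : Fin n => p 0)).toReal)
            ((∫⁻ x, M x {y | Ψ y ≠ 1} ∂(Measure.pi fun _ : Fin n => p 1)).toReal)) := by
  have hSm : MeasurableSet {v : Fin 2 | v ≠ 0} := trivial
  have hS : MeasurableSet {y | Ψ y ≠ 0} := hΨ hSm
  set g : (Fin n → 𝓧) → ℝ≥0∞ := fun x => M x {y | Ψ y ≠ 0} with hgdef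
  have hgmeas : Measurable g := Kernel.measurable_coe M hS
  have hg1 : ∀ x, g x ≤ 1 := fun x => prob_le_one
  have hgfin : ∀ (P : Measure (Fin n → 𝓧)) [IsProbabilityMeasure P], ∫⁻ x, g x ∂P ≤ 1 := by
    intro P _
    calc ∫⁻ x, g x ∂P ≤ ∫⁻ _, 1 ∂P := lintegral_mono fun x => hg1 x
      _ = 1 := by simp
  have hsq : (0:ℝ) ≤ Real.sqrt (ρ / 2) := Real.sqrt_nonneg _
  constructor
  · -- general part
    intro P hP
    haveI := hP 0
    haveI := hP 1
    have tvnn := tvDist_nonneg (P 0) (P 1)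
    have htv : ∀ T : Set (Fin n → 𝓧), MeasurableSet T →
        ((P 1) T).toReal - ((P 0) T).toReal ≤ tvDist (P 0) (P 1) :=
      fun T hT => tv_bound' (P 0) (P 1) hT
    have case1 : (1 / 2 : ℝ) * (1 - tvDist (P 0) (P 1))
        ≤ max ((∫⁻ x, M x {y | Ψ y ≠ 0} ∂(P 0)).toReal)
          ((∫⁻ x, M x {y | Ψ y ≠ 1} ∂(P 1)).toReal) := by
      apply err_bound M Ψ hΨ
      have h := lintegral_le_of_tv (P 1) (P 0) g hgmeas hg1 zero_le_one tvnn
        (fun x y => by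
          have h1 : (g x).toReal ≤ 1 := prob_toReal_le_one (M x) _
          have h2 : (0:ℝ) ≤ (g y).toReal := ENNReal.toReal_nonneg
          linarith) htv
      have := toReal_diff_le (lt_of_le_of_lt (hgfin (P 0)) ENNReal.one_lt_top).ne
        (by positivity) h
      rw [one_mul] at this
      exact this
    have case2 : (1 / 2 : ℝ) * (1 - n * Real.sqrt (ρ / 2) * tvDist (P 0) (P 1))
        ≤ max ((∫⁻ x, M x {y | Ψ y ≠ 0} ∂(P 0)).toReal)
          ((∫⁻ x, M x {y | Ψ y ≠ 1} ∂(P 1)).toReal) := by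
      apply err_bound M Ψ hΨ
      have h := lintegral_le_of_tv (P 1) (P 0) g hgmeas hg1 (by positivity) tvnn
        (fun x y => chain_bound M hρ hzCDP hS x y) htv
      have := toReal_diff_le (lt_of_le_of_lt (hgfin (P 0)) ENNReal.one_lt_top).ne
        (by positivity) h
      linarith [this]
    rcases le_total (1 - tvDist (P 0) (P 1))
        (1 - (n:ℝ) * Real.sqrt (ρ / 2) * tvDist (P 0) (P 1)) with h | h
    · rw [max_eq_right h]; exact case2
    · rw [max_eq_left h]; exact case1
  · -- product part
    intro p hp
    haveI := hp 0
    haveI := hp 1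
    have tvnn := tvDist_nonneg (p 0) (p 1)
    have htv : ∀ T : Set 𝓧, MeasurableSet T →
        ((p 1) T).toReal - ((p 0) T).toReal ≤ tvDist (p 0) (p 1) :=
      fun T hT => tv_bound' (p 0) (p 1) hT
    set ν : ℕ → Fin n → Measure 𝓧 := fun k i => if (i : ℕ) < k then p 1 else p 0 with hν
    have hνprob : ∀ k i, IsProbabilityMeasure (ν k i) := by
      intro k i
      show IsProbabilityMeasure (if (i : ℕ) < k then p 1 else p 0)
      split_ifs
      · exact hp 1
      · exact hp 0
    have hQprob : ∀ k, IsProbabilityMeasure (Measure.pi (ν k)) := by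
      intro k
      haveI := hνprob k
      infer_instance
    have hν0 : ν 0 = (fun _ : Fin n => p 0) := funext fun i => by
      show (if (i : ℕ) < 0 then p 1 else p 0) = p 0
      simp
    have hνn : ν n = (fun _ : Fin n => p 1) := funext fun i => by
      show (if (i : ℕ) < n then p 1 else p 0) = p 1
      simp [i.isLt]
    have hr0 : Measure.pi (ν 0) = Measure.pi (fun _ : Fin n => p 0) := by rw [hν0]
    have hrn : Measure.pi (ν n) = Measure.pi (fun _ : Fin n => p 1) := by rw [hνn]
    set r : ℕ → ℝ := fun k => (∫⁻ x, g x ∂Measure.pi (ν k)).toReal with hrdef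
    have hintfin : ∀ k, ∫⁻ x, g x ∂Measure.pi (ν k) ≤ 1 := by
      intro k
      haveI := hQprob k
      exact hgfin _
    have hstep : ∀ k, k < n → r (k + 1) - r k ≤ Real.sqrt (ρ / 2) * tvDist (p 0) (p 1) := by
      intro k hk
      obtain ⟨m, rfl⟩ : ∃ m, n = m + 1 := ⟨n - 1, by omega⟩
      set i : Fin (m + 1) := ⟨k, hk⟩ with hi
      set e := MeasurableEquiv.piFinSuccAbove (fun _ : Fin (m + 1) => 𝓧) i with he
      have hside : (fun l => ν (k + 1) (i.succAbove l)) = fun l => ν k (i.succAbove l) := by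
        funext l
        have hne : ((i.succAbove l : Fin (m + 1)) : ℕ) ≠ k := by
          intro h
          exact Fin.succAbove_ne i l (Fin.ext h)
        show (if ((i.succAbove l : Fin (m + 1)) : ℕ) < k + 1 then p 1 else p 0)
          = (if ((i.succAbove l : Fin (m + 1)) : ℕ) < k then p 1 else p 0)
        have hiff : ((i.succAbove l : Fin (m + 1)) : ℕ) < k + 1
            ↔ ((i.succAbove l : Fin (m + 1)) : ℕ) < k := by omega
        rw [if_congr hiff rfl rfl]
      have hνk1i : ν (k + 1) i = p 1 := by
        show (if ((i : Fin (m + 1)) : ℕ) < k + 1 then p 1 else p 0) = p 1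
        rw [if_pos]
        show k < k + 1
        omega
      have hνki : ν k i = p 0 := by
        show (if ((i : Fin (m + 1)) : ℕ) < k then p 1 else p 0) = p 0
        rw [if_neg]
        show ¬ k < k
        omega
      set R : Measure (Fin m → 𝓧) := Measure.pi (fun l => ν k (i.succAbove l)) with hR
      haveI : ∀ l, IsProbabilityMeasure (ν k (i.succAbove l)) := fun l => hνprob k _
      haveI : IsProbabilityMeasure R := by rw [hR]; infer_instance
      have hgem : Measurable fun z : 𝓧 × (Fin m → 𝓧) => g (e.symm z) :=
        hgmeas.comp e.symm.measurable
      have hdecomp : ∀ j : ℕ, ∫⁻ x, g x ∂Measure.pi (ν j)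
          = ∫⁻ t, ∫⁻ w, g (e.symm (t, w)) ∂(Measure.pi fun l => ν j (i.succAbove l)) ∂(ν j i) := by
        intro j
        haveI : ∀ l, IsProbabilityMeasure (ν j l) := hνprob j
        have hMP := measurePreserving_piFinSuccAbove (ν j) i
        calc ∫⁻ x, g x ∂Measure.pi (ν j)
            = ∫⁻ x, (fun z => g (e.symm z)) (e x) ∂Measure.pi (ν j) := by
              apply lintegral_congr
              intro x
              exact congrArg g (e.symm_apply_apply x).symm
          _ = ∫⁻ z, g (e.symm z)
              ∂((ν j i).prod (Measure.pi fun l => ν j (i.succAbove l))) :=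
              hMP.lintegral_comp hgem
          _ = ∫⁻ t, ∫⁻ w, g (e.symm (t, w))
              ∂(Measure.pi fun l => ν j (i.succAbove l)) ∂(ν j i) :=
              lintegral_prod _ hgem.aemeasurable
      set φ : 𝓧 → ℝ≥0∞ := fun t => ∫⁻ w, g (e.symm (t, w)) ∂(R) with hφ
      have hφmeas : Measurable φ := Measurable.lintegral_prod_right' hgem
      have hφ1 : ∀ t, φ t ≤ 1 := by
        intro t
        calc φ t ≤ ∫⁻ _, 1 ∂(R) := lintegral_mono fun w => hg1 _
          _ = 1 := by simp
      have hosc : ∀ t t', (φ t).toReal - (φ t').toReal ≤ Real.sqrt (ρ / 2) := by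
        intro t t'
        have hpt : ∀ w : Fin m → 𝓧, g (e.symm (t, w)) ≤ g (e.symm (t', w))
            + ENNReal.ofReal (Real.sqrt (ρ / 2)) := by
          intro w
          have hham : hammingDist (e.symm (t, w)) (e.symm (t', w)) ≤ 1 := by
            have h1 : e.symm (t, w) = i.insertNth t w := rfl
            have h2 : e.symm (t', w) = i.insertNth t' w := rfl
            rw [h1, h2, hammingDist]
            apply Finset.card_le_one.mpr
            intro a ha b hb
            simp only [Finset.mem_filter, Finset.mem_univ, true_and] at ha hb
            have hai : a = i := by
              by_contra hcon
              obtain ⟨l, rfl⟩ := Fin.exists_succAbove_eq hcon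
              exact ha (by rw [Fin.insertNth_apply_succAbove, Fin.insertNth_apply_succAbove])
            have hbi : b = i := by
              by_contra hcon
              obtain ⟨l, rfl⟩ := Fin.exists_succAbove_eq hcon
              exact hb (by rw [Fin.insertNth_apply_succAbove, Fin.insertNth_apply_succAbove])
            rw [hai, hbi]
          exact meas_le_add (measure_ne_top _ _) (measure_ne_top _ _)
            (single_step M hρ hzCDP hS hham)
        have hle : φ t ≤ φ t' + ENNReal.ofReal (Real.sqrt (ρ / 2)) := by
          calc φ t ≤ ∫⁻ w, (g (e.symm (t', w)) + ENNReal.ofReal (Real.sqrt (ρ / 2))) ∂(R) :=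
              lintegral_mono fun w => hpt w
            _ = φ t' + ENNReal.ofReal (Real.sqrt (ρ / 2)) * R Set.univ := by
              rw [lintegral_add_right _ measurable_const, lintegral_const]
            _ = φ t' + ENNReal.ofReal (Real.sqrt (ρ / 2)) := by
              rw [measure_univ, mul_one]
        exact toReal_diff_le (lt_of_le_of_lt (hφ1 t') ENNReal.one_lt_top).ne hsq hle
      have hkey := lintegral_le_of_tv (p 1) (p 0) φ hφmeas hφ1 hsq tvnn hosc htv
      have heq1 : ∫⁻ x, g x ∂Measure.pi (ν (k + 1)) = ∫⁻ t, φ t ∂(p 1) := by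
        rw [hdecomp (k + 1), hside, hνk1i]
      have heq0 : ∫⁻ x, g x ∂Measure.pi (ν k) = ∫⁻ t, φ t ∂(p 0) := by
        rw [hdecomp k, hνki]
      have hfin0 : ∫⁻ t, φ t ∂(p 0) ≠ ⊤ := by
        rw [← heq0]
        exact (lt_of_le_of_lt (hintfin k) ENNReal.one_lt_top).ne
      have := toReal_diff_le hfin0 (by positivity) hkey
      show (∫⁻ x, g x ∂Measure.pi (ν (k+1))).toReal - (∫⁻ x, g x ∂Measure.pi (ν k)).toReal
        ≤ Real.sqrt (ρ / 2) * tvDist (p 0) (p 1)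
      rw [heq1, heq0]
      exact this
    -- telescope
    have htel : ∑ k ∈ Finset.range n, (r (k + 1) - r k) = r n - r 0 :=
      Finset.sum_range_sub r n
    have hsum : r n - r 0 ≤ n * (Real.sqrt (ρ / 2) * tvDist (p 0) (p 1)) := by
      rw [← htel]
      calc ∑ k ∈ Finset.range n, (r (k + 1) - r k)
          ≤ ∑ _k ∈ Finset.range n, Real.sqrt (ρ / 2) * tvDist (p 0) (p 1) :=
            Finset.sum_le_sum fun k hk => hstep k (Finset.mem_range.mp hk)
        _ = n * (Real.sqrt (ρ / 2) * tvDist (p 0) (p 1)) := by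
            rw [Finset.sum_const, Finset.card_range, nsmul_eq_mul]
    haveI := hQprob 0
    haveI := hQprob n
    apply err_bound M Ψ hΨ
    have hu1 : (∫⁻ x, M x {y | Ψ y ≠ 0} ∂(Measure.pi fun _ : Fin n => p 1)).toReal = r n := by
      rw [hrdef]
      simp only [hgdef]
      rw [hrn]
    have hu0 : (∫⁻ x, M x {y | Ψ y ≠ 0} ∂(Measure.pi fun _ : Fin n => p 0)).toReal = r 0 := by
      rw [hrdef]
      simp only [hgdef]
      rw [hr0]
    rw [hu1, hu0]
    calc r n - r 0 ≤ n * (Real.sqrt (ρ / 2) * tvDist (p 0) (p 1)) := hsum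
      _ = n * Real.sqrt (ρ / 2) * tvDist (p 0) (p 1) := by ring
end

section
/- KL control for smooth concave log-likelihood models: let Θ ⊆ ℝ^d, let μ be a σ-finite reference measure, and let (p_θ)_{θ∈Θ} be a family of probability distributions with densities dp_θ/dμ(X) = e^{f(X,θ)}, where f is concave and β-smooth in its second argument. Assume the model is non-degenerate in the sense that ∫ ∇_θ f(X,θ) dp_θ(X) = 0 for all θ ∈ Θ. Then for all θ_1, θ_2 ∈ Θ, KL(p_{θ_1}‖p_{θ_2}) ≤ (β/2)·‖θ_2 − θ_1‖². -/
open MeasureTheory ProbabilityTheory Real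
open scoped ENNReal NNReal

section AuxLemmas
open scoped RealInnerProductSpace

lemma my_lintegral_withDensity_le {α : Type*} [MeasurableSpace α] (μ : Measure α) (h : α → ℝ≥0∞)
    {w : α → ℝ≥0∞} (hw : Measurable w) :
    ∫⁻ x, w x ∂(μ.withDensity h) ≤ ∫⁻ x, w x * h x ∂μ := by
  have hsimple : ∀ φ : SimpleFunc α ℝ≥0∞,
      ∫⁻ x, φ x ∂(μ.withDensity h) ≤ ∫⁻ x, φ x * h x ∂μ := by
    intro φ
    induction φ using SimpleFunc.induction with
    | @const c s hs =>
      have hcoe : ∀ x, (SimpleFunc.piecewise s hs (SimpleFunc.const α c)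
          (SimpleFunc.const α 0)) x = s.indicator (fun _ => c) x := by
        intro x
        by_cases hx : x ∈ s <;> simp [SimpleFunc.piecewise_apply, hx]
      have h1 : ∫⁻ x, (SimpleFunc.piecewise s hs (SimpleFunc.const α c)
          (SimpleFunc.const α 0)) x ∂(μ.withDensity h) = c * ∫⁻ x in s, h x ∂μ := by
        simp_rw [hcoe]
        rw [lintegral_indicator hs, setLIntegral_const, withDensity_apply _ hs]
      have h2 : ∫⁻ x, (SimpleFunc.piecewise s hs (SimpleFunc.const α c)
          (SimpleFunc.const α 0)) x * h x ∂μ = ∫⁻ x in s, c * h x ∂μ := by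
        rw [← lintegral_indicator hs]
        congr 1; ext x
        by_cases hx : x ∈ s <;> simp [hcoe, hx]
      rw [h1, h2]
      rcases eq_or_ne c ⊤ with hc | hc
      · rcases eq_or_ne (∫⁻ x in s, h x ∂μ) 0 with hI | hI
        · simp [hI]
        · have hn : ∀ n : ℕ, (n : ℝ≥0∞) * ∫⁻ x in s, h x ∂μ ≤ ∫⁻ x in s, c * h x ∂μ := by
            intro n
            rw [← lintegral_const_mul' (n : ℝ≥0∞) _ (by simp)]
            exact lintegral_mono fun x => mul_le_mul_left (hc ▸ le_top) _
          have htop : (⊤ : ℝ≥0∞) * ∫⁻ x in s, h x ∂μ ≤ ∫⁻ x in s, c * h x ∂μ := by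
            rw [← ENNReal.iSup_natCast, ENNReal.iSup_mul]
            exact iSup_le hn
          exact hc ▸ htop
      · rw [lintegral_const_mul' c _ hc]
    | @add φ ψ hdisj hφ hψ =>
      have := le_lintegral_add (μ := μ) (fun x => φ x * h x) (fun x => ψ x * h x)
      calc ∫⁻ x, (φ + ψ) x ∂(μ.withDensity h)
          = ∫⁻ x, φ x ∂(μ.withDensity h) + ∫⁻ x, ψ x ∂(μ.withDensity h) := by
            simp_rw [SimpleFunc.coe_add, Pi.add_apply]
            exact lintegral_add_left φ.measurable _
        _ ≤ (∫⁻ x, φ x * h x ∂μ) + ∫⁻ x, ψ x * h x ∂μ := add_le_add hφ hψ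
        _ ≤ ∫⁻ x, φ x * h x + ψ x * h x ∂μ := this
        _ = ∫⁻ x, (φ + ψ) x * h x ∂μ := by
            congr 1; ext x; simp [add_mul]
  calc ∫⁻ x, w x ∂(μ.withDensity h)
      = ⨆ n, ∫⁻ x, (SimpleFunc.eapprox w n) x ∂(μ.withDensity h) := by
        rw [← lintegral_iSup (fun n => (SimpleFunc.eapprox w n).measurable)
          (fun i j hij x => SimpleFunc.monotone_eapprox w hij x)]
        congr 1; ext x; rw [SimpleFunc.iSup_eapprox_apply hw]
    _ ≤ ∫⁻ x, w x * h x ∂μ := by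
        refine iSup_le fun n => (hsimple _).trans (lintegral_mono fun x => ?_)
        refine mul_le_mul_left ?_ _
        rw [← SimpleFunc.iSup_eapprox_apply hw]
        exact le_iSup (fun n => (SimpleFunc.eapprox w n) x) n

lemma my_setLIntegral_mono {α : Type*} [MeasurableSpace α] {μ : Measure α} {s : Set α}
    (hs : MeasurableSet s) {u v : α → ℝ≥0∞} (h : ∀ x ∈ s, u x ≤ v x) :
    ∫⁻ x in s, u x ∂μ ≤ ∫⁻ x in s, v x ∂μ := by
  rw [← lintegral_indicator hs, ← lintegral_indicator hs]
  refine lintegral_mono fun x => ?_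
  by_cases hx : x ∈ s <;> simp [hx]
  exact h x hx

lemma my_descent {E : Type*} [NormedAddCommGroup E] [InnerProductSpace ℝ E] [CompleteSpace E]
    {φ : E → ℝ} {β : ℝ≥0} (hd : Differentiable ℝ φ) (hl : LipschitzWith β (gradient φ))
    (x y : E) :
    |φ y - φ x - ⟪gradient φ x, y - x⟫| ≤ (β : ℝ) / 2 * ‖y - x‖ ^ 2 := by
  set v := y - x with hv
  have hline : ∀ t : ℝ, HasDerivAt (fun t : ℝ => x + t • v) v t := by
    intro t
    simpa using ((hasDerivAt_id t).smul_const v).const_add x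
  set D : ℝ → ℝ := fun t => ⟪gradient φ (x + t • v), v⟫ with hD
  have hψ : ∀ t : ℝ, HasDerivAt (fun t : ℝ => φ (x + t • v)) (D t) t := by
    intro t
    have h1 : HasFDerivAt φ (InnerProductSpace.toDual ℝ E (gradient φ (x + t • v)))
        (x + t • v) := (hd _).hasGradientAt.hasFDerivAt
    exact h1.comp_hasDerivAt t (hline t)
  have hgradcont : Continuous (gradient φ) := hl.continuous
  have hDcont : Continuous D := by
    exact Continuous.inner (hgradcont.comp (by continuity)) continuous_const
  have hFTC : ∫ t in (0:ℝ)..1, D t = φ (x + (1:ℝ) • v) - φ (x + (0:ℝ) • v) :=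
    intervalIntegral.integral_eq_sub_of_hasDerivAt (fun t _ => hψ t)
      (hDcont.intervalIntegrable 0 1)
  have h0 : x + (0:ℝ) • v = x := by simp
  have h1 : x + (1:ℝ) • v = y := by simp [hv]
  have hD0 : D 0 = ⟪gradient φ x, v⟫ := by rw [hD]; simp
  have hsub : φ y - φ x - ⟪gradient φ x, v⟫ = ∫ t in (0:ℝ)..1, (D t - D 0) := by
    rw [intervalIntegral.integral_sub (hDcont.intervalIntegrable 0 1)
      (intervalIntegrable_const)]
    rw [hFTC, h0, h1, intervalIntegral.integral_const, hD0]
    simp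
  have hbnd : ∀ t ∈ Set.Icc (0:ℝ) 1, |D t - D 0| ≤ (β : ℝ) * ‖v‖ ^ 2 * t := by
    intro t ht
    have : D t - D 0 = ⟪gradient φ (x + t • v) - gradient φ (x + (0:ℝ) • v), v⟫ := by
      rw [hD]; rw [inner_sub_left]
    rw [this]
    calc |⟪gradient φ (x + t • v) - gradient φ (x + (0:ℝ) • v), v⟫|
        ≤ ‖gradient φ (x + t • v) - gradient φ (x + (0:ℝ) • v)‖ * ‖v‖ :=
          abs_real_inner_le_norm _ _
      _ ≤ (β : ℝ) * ‖(x + t • v) - (x + (0:ℝ) • v)‖ * ‖v‖ := by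
          refine mul_le_mul_of_nonneg_right ?_ (norm_nonneg _)
          have := hl.dist_le_mul (x + t • v) (x + (0:ℝ) • v)
          rwa [dist_eq_norm, dist_eq_norm] at this
      _ = (β : ℝ) * ‖v‖ ^ 2 * t := by
          have : (x + t • v) - (x + (0:ℝ) • v) = t • v := by
            simp
          rw [this, norm_smul]
          simp [abs_of_nonneg ht.1]
          ring
  have habs : |∫ t in (0:ℝ)..1, (D t - D 0)| ≤ (β : ℝ) * ‖v‖ ^ 2 * (1 / 2) := by
    have hInt1 : IntervalIntegrable (fun t => D t - D 0) MeasureTheory.volume 0 1 :=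
      (hDcont.sub continuous_const).intervalIntegrable 0 1
    have hInt2 : IntervalIntegrable (fun t => (β : ℝ) * ‖v‖ ^ 2 * t) MeasureTheory.volume 0 1 :=
      (continuous_const.mul continuous_id).intervalIntegrable 0 1
    calc |∫ t in (0:ℝ)..1, (D t - D 0)|
        ≤ ∫ t in (0:ℝ)..1, |D t - D 0| :=
          intervalIntegral.abs_integral_le_integral_abs zero_le_one
      _ ≤ ∫ t in (0:ℝ)..1, (β : ℝ) * ‖v‖ ^ 2 * t := by
          refine intervalIntegral.integral_mono_on zero_le_one hInt1.abs hInt2 ?_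
          exact hbnd
      _ = (β : ℝ) * ‖v‖ ^ 2 * (1 / 2) := by
          rw [intervalIntegral.integral_const_mul, integral_id]
          norm_num
  rw [hsub]
  calc |∫ t in (0:ℝ)..1, (D t - D 0)| ≤ (β : ℝ) * ‖v‖ ^ 2 * (1 / 2) := habs
    _ = (β : ℝ) / 2 * ‖v‖ ^ 2 := by ring

end AuxLemmas

open scoped RealInnerProductSpace

open scoped Classical in
/-- The Kullback-Leibler divergence `KL(P ‖ Q) = ∫ log (dP/dQ) dP`. -/
noncomputable def klDiv' {α : Type*} [MeasurableSpace α] (P Q : Measure α) : ℝ≥0∞ :=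
  if P ≪ Q ∧ Integrable (llr P Q) P then ENNReal.ofReal (∫ x, llr P Q x ∂P) else ⊤

/-- **KL control for smooth concave log-likelihood models**: let `Θ ⊆ ℝ^d`, `μ` a σ-finite
reference measure and `(p θ)_{θ ∈ Θ}` a family of probability distributions with densities
`dp_θ/dμ(X) = e^{f(X, θ)}`, where for every `X` the log-likelihood `f(X, ·)` is concave on `Θ`
and `β`-smooth (differentiable with `β`-Lipschitz gradient). If the model is non-degenerate,
i.e. `∫ ∇_θ f(X, θ) d(p θ)(X) = 0` for all `θ ∈ Θ` (with the gradient integrable), then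
`KL(p θ₁ ‖ p θ₂) ≤ (β/2) ‖θ₂ - θ₁‖²` for all `θ₁, θ₂ ∈ Θ`. -/
theorem kl_bound_of_concave_smooth_loglik {𝓧 : Type*} [MeasurableSpace 𝓧] {d : ℕ}
    (Θ : Set (EuclideanSpace ℝ (Fin d)))
    (μ : Measure 𝓧) [SigmaFinite μ]
    (f : 𝓧 → EuclideanSpace ℝ (Fin d) → ℝ)
    (p : EuclideanSpace ℝ (Fin d) → Measure 𝓧)
    (hdens : ∀ θ ∈ Θ, p θ = μ.withDensity fun X => ENNReal.ofReal (Real.exp (f X θ)))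
    (hprob : ∀ θ ∈ Θ, IsProbabilityMeasure (p θ))
    (β : ℝ≥0)
    (hconc : ∀ X, ConcaveOn ℝ Θ (f X))
    (hdiff : ∀ X, Differentiable ℝ (f X))
    (hsmooth : ∀ X, LipschitzWith β (gradient (f X)))
    (hgrad_int : ∀ θ ∈ Θ, Integrable (fun X => gradient (f X) θ) (p θ))
    (hcentered : ∀ θ ∈ Θ, ∫ X, gradient (f X) θ ∂(p θ) = 0) :
    ∀ θ₁ ∈ Θ, ∀ θ₂ ∈ Θ,
      klDiv' (p θ₁) (p θ₂) ≤ ENNReal.ofReal ((β : ℝ) / 2 * dist θ₂ θ₁ ^ 2) := by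
  intro θ₁ hθ₁ θ₂ hθ₂
  have hP1 : IsProbabilityMeasure (p θ₁) := hprob θ₁ hθ₁
  have hP2 : IsProbabilityMeasure (p θ₂) := hprob θ₂ hθ₂
  set v : EuclideanSpace ℝ (Fin d) := θ₂ - θ₁ with hv
  set c : ℝ := (β : ℝ) / 2 * ‖v‖ ^ 2 with hc
  have hc0 : 0 ≤ c := by positivity
  have key : ∀ X, |f X θ₂ - f X θ₁ - ⟪gradient (f X) θ₁, v⟫| ≤ c :=
    fun X => my_descent (hdiff X) (hsmooth X) θ₁ θ₂
  set h₁ : 𝓧 → ℝ≥0∞ := fun X => ENNReal.ofReal (Real.exp (f X θ₁)) with hh₁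
  set h₂ : 𝓧 → ℝ≥0∞ := fun X => ENNReal.ofReal (Real.exp (f X θ₂)) with hh₂
  have hp₁ : p θ₁ = μ.withDensity h₁ := hdens θ₁ hθ₁
  have hp₂ : p θ₂ = μ.withDensity h₂ := hdens θ₂ hθ₂
  obtain ⟨g', hg'sm, hg'ae⟩ := (hgrad_int θ₁ hθ₁).aestronglyMeasurable
  obtain ⟨B, hBsub, hBmeas, hB0⟩ := exists_measurable_superset_of_null (ae_iff.mp hg'ae)
  have hBc : ∀ X ∉ B, gradient (f X) θ₁ = g' X := by
    intro X hX
    by_contra hne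
    exact hX (hBsub hne)
  set G : 𝓧 → ℝ := fun X => ⟪g' X, v⟫ with hG
  have hGmeas : Measurable G := (hg'sm.measurable.inner measurable_const)
  have e1 : ∀ X ∉ B, f X θ₁ ≤ c - G X + f X θ₂ := by
    intro X hX
    have hk := abs_le.mp (key X)
    have h1 := hk.1
    rw [hBc X hX] at h1
    have : G X = ⟪g' X, v⟫ := rfl
    linarith
  have e2 : ∀ X ∉ B, f X θ₂ ≤ c + G X + f X θ₁ := by
    intro X hX
    have hk := abs_le.mp (key X)
    have h2 := hk.2
    rw [hBc X hX] at h2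
    have : G X = ⟪g' X, v⟫ := rfl
    linarith
  have d1 : ∀ X ∉ B, h₁ X ≤ ENNReal.ofReal (Real.exp (c - G X)) * h₂ X := by
    intro X hX
    calc h₁ X = ENNReal.ofReal (Real.exp (f X θ₁)) := rfl
      _ ≤ ENNReal.ofReal (Real.exp (c - G X) * Real.exp (f X θ₂)) := by
          refine ENNReal.ofReal_le_ofReal ?_
          rw [← Real.exp_add]
          exact Real.exp_le_exp.mpr (by linarith [e1 X hX])
      _ = ENNReal.ofReal (Real.exp (c - G X)) * h₂ X :=
          ENNReal.ofReal_mul (Real.exp_nonneg _)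
  have d2 : ∀ X ∉ B, h₂ X ≤ ENNReal.ofReal (Real.exp (c + G X)) * h₁ X := by
    intro X hX
    calc h₂ X = ENNReal.ofReal (Real.exp (f X θ₂)) := rfl
      _ ≤ ENNReal.ofReal (Real.exp (c + G X) * Real.exp (f X θ₁)) := by
          refine ENNReal.ofReal_le_ofReal ?_
          rw [← Real.exp_add]
          exact Real.exp_le_exp.mpr (by linarith [e2 X hX])
      _ = ENNReal.ofReal (Real.exp (c + G X)) * h₁ X :=
          ENNReal.ofReal_mul (Real.exp_nonneg _)
  have hm₁ : ∀ {s : Set 𝓧}, MeasurableSet s → p θ₁ s = ∫⁻ X in s, h₁ X ∂μ := by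
    intro s hs; rw [hp₁, withDensity_apply _ hs]
  have hm₂ : ∀ {s : Set 𝓧}, MeasurableSet s → p θ₂ s = ∫⁻ X in s, h₂ X ∂μ := by
    intro s hs; rw [hp₂, withDensity_apply _ hs]
  -- absolute continuity p θ₁ ≪ p θ₂
  have hac : p θ₁ ≪ p θ₂ := by
    refine Measure.AbsolutelyContinuous.mk fun s hs hs0 => ?_
    have hs0' : ∫⁻ X in s, h₂ X ∂μ = 0 := by rw [← hm₂ hs]; exact hs0
    have hsB : p θ₁ (s ∩ B) = 0 := measure_mono_null Set.inter_subset_right hB0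
    set t : ℕ → Set 𝓧 := fun n => (s ∩ Bᶜ) ∩ {X | -(n : ℝ) ≤ G X} with ht
    have htm : ∀ n, MeasurableSet (t n) := fun n =>
      (hs.inter hBmeas.compl).inter (measurableSet_le measurable_const hGmeas)
    have htn : ∀ n, p θ₁ (t n) = 0 := by
      intro n
      rw [hm₁ (htm n)]
      have hle : ∫⁻ X in t n, h₁ X ∂μ
          ≤ ∫⁻ X in t n, ENNReal.ofReal (Real.exp (c + n)) * h₂ X ∂μ := by
        refine my_setLIntegral_mono (htm n) fun X hX => ?_
        obtain ⟨⟨hXs, hXB⟩, hXn⟩ := hX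
        calc h₁ X ≤ ENNReal.ofReal (Real.exp (c - G X)) * h₂ X := d1 X hXB
          _ ≤ ENNReal.ofReal (Real.exp (c + n)) * h₂ X := by
              refine mul_le_mul_left (ENNReal.ofReal_le_ofReal (Real.exp_le_exp.mpr ?_)) _
              have hXn' : -(n : ℝ) ≤ G X := hXn
              linarith
      refine le_antisymm (hle.trans ?_) (zero_le)
      rw [lintegral_const_mul' _ _ ENNReal.ofReal_ne_top]
      calc ENNReal.ofReal (Real.exp (c + n)) * ∫⁻ X in t n, h₂ X ∂μ
          ≤ ENNReal.ofReal (Real.exp (c + n)) * ∫⁻ X in s, h₂ X ∂μ :=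
            mul_le_mul_right (lintegral_mono_set fun X hX => hX.1.1) _
        _ = 0 := by rw [hs0', mul_zero]
    have hsBc : p θ₁ (s ∩ Bᶜ) = 0 := by
      have hsub : s ∩ Bᶜ ⊆ ⋃ n, t n := by
        intro X hX
        obtain ⟨n, hn⟩ := exists_nat_ge (-G X)
        exact Set.mem_iUnion.mpr ⟨n, hX, by simp only [Set.mem_setOf_eq]; linarith⟩
      refine measure_mono_null hsub (le_antisymm ((measure_iUnion_le _).trans ?_) (zero_le))
      simp [htn]
    refine le_antisymm ?_ (zero_le)
    calc p θ₁ s ≤ p θ₁ ((s ∩ B) ∪ (s ∩ Bᶜ)) := by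
          refine measure_mono fun X hX => ?_
          by_cases hB : X ∈ B
          · exact Or.inl ⟨hX, hB⟩
          · exact Or.inr ⟨hX, hB⟩
      _ ≤ p θ₁ (s ∩ B) + p θ₁ (s ∩ Bᶜ) := measure_union_le _ _
      _ = 0 := by rw [hsB, hsBc, add_zero]
  -- partial absolute continuity the other way
  have hac2 : ∀ u : Set 𝓧, MeasurableSet u → p θ₁ u = 0 → p θ₂ (u ∩ Bᶜ) = 0 := by
    intro u hu hu0
    have hu0' : ∫⁻ X in u, h₁ X ∂μ = 0 := by rw [← hm₁ hu]; exact hu0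
    set t : ℕ → Set 𝓧 := fun n => (u ∩ Bᶜ) ∩ {X | G X ≤ (n : ℝ)} with ht
    have htm : ∀ n, MeasurableSet (t n) := fun n =>
      (hu.inter hBmeas.compl).inter (measurableSet_le hGmeas measurable_const)
    have htn : ∀ n, p θ₂ (t n) = 0 := by
      intro n
      rw [hm₂ (htm n)]
      have hle : ∫⁻ X in t n, h₂ X ∂μ
          ≤ ∫⁻ X in t n, ENNReal.ofReal (Real.exp (c + n)) * h₁ X ∂μ := by
        refine my_setLIntegral_mono (htm n) fun X hX => ?_
        obtain ⟨⟨hXu, hXB⟩, hXn⟩ := hX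
        calc h₂ X ≤ ENNReal.ofReal (Real.exp (c + G X)) * h₁ X := d2 X hXB
          _ ≤ ENNReal.ofReal (Real.exp (c + n)) * h₁ X := by
              refine mul_le_mul_left (ENNReal.ofReal_le_ofReal (Real.exp_le_exp.mpr ?_)) _
              have hXn' : G X ≤ (n : ℝ) := hXn
              linarith
      refine le_antisymm (hle.trans ?_) (zero_le)
      rw [lintegral_const_mul' _ _ ENNReal.ofReal_ne_top]
      calc ENNReal.ofReal (Real.exp (c + n)) * ∫⁻ X in t n, h₁ X ∂μ
          ≤ ENNReal.ofReal (Real.exp (c + n)) * ∫⁻ X in u, h₁ X ∂μ :=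
            mul_le_mul_right (lintegral_mono_set fun X hX => hX.1.1) _
        _ = 0 := by rw [hu0', mul_zero]
    have hsub : u ∩ Bᶜ ⊆ ⋃ n, t n := by
      intro X hX
      obtain ⟨n, hn⟩ := exists_nat_ge (G X)
      exact Set.mem_iUnion.mpr ⟨n, hX, hn⟩
    refine measure_mono_null hsub (le_antisymm ((measure_iUnion_le _).trans ?_) (zero_le))
    simp [htn]
  -- lintegral over p θ₂ of a measurable function bounded by density product
  have hwd₂ : ∀ {t : Set 𝓧}, MeasurableSet t → ∀ {w : 𝓧 → ℝ≥0∞}, Measurable w →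
      ∫⁻ X in t, w X ∂(p θ₂) ≤ ∫⁻ X in t, w X * h₂ X ∂μ := by
    intro t htmeas w hw
    rw [hp₂, restrict_withDensity htmeas]
    exact my_lintegral_withDensity_le _ _ hw
  have hwd₁ : ∀ {t : Set 𝓧}, MeasurableSet t → ∀ {w : 𝓧 → ℝ≥0∞}, Measurable w →
      ∫⁻ X in t, w X ∂(p θ₁) ≤ ∫⁻ X in t, w X * h₁ X ∂μ := by
    intro t htmeas w hw
    rw [hp₁, restrict_withDensity htmeas]
    exact my_lintegral_withDensity_le _ _ hw
  -- lower bound on rnDeriv (p θ₁) (p θ₂)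
  have hmw1 : Measurable fun X => ENNReal.ofReal (Real.exp (-c - G X)) :=
    ((measurable_const.sub hGmeas).exp).ennreal_ofReal
  have hmw2 : Measurable fun X => ENNReal.ofReal (Real.exp (-c + G X)) :=
    ((measurable_const.add hGmeas).exp).ennreal_ofReal
  have hLcrit : (Bᶜ.indicator fun X => ENNReal.ofReal (Real.exp (-c - G X)))
      ≤ᵐ[p θ₂] (p θ₁).rnDeriv (p θ₂) := by
    refine ae_le_of_forall_setLIntegral_le_of_sigmaFinite (hmw1.indicator hBmeas.compl)
      fun s hs _ => ?_
    rw [setLIntegral_indicator hBmeas.compl, Measure.setLIntegral_rnDeriv' hac hs]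
    calc ∫⁻ X in Bᶜ ∩ s, ENNReal.ofReal (Real.exp (-c - G X)) ∂(p θ₂)
        ≤ ∫⁻ X in Bᶜ ∩ s, ENNReal.ofReal (Real.exp (-c - G X)) * h₂ X ∂μ :=
          hwd₂ (hBmeas.compl.inter hs) hmw1
      _ ≤ ∫⁻ X in Bᶜ ∩ s, h₁ X ∂μ := by
          refine my_setLIntegral_mono (hBmeas.compl.inter hs) fun X hX => ?_
          calc ENNReal.ofReal (Real.exp (-c - G X)) * h₂ X
              = ENNReal.ofReal (Real.exp (-c - G X) * Real.exp (f X θ₂)) :=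
                (ENNReal.ofReal_mul (Real.exp_nonneg _)).symm
            _ ≤ h₁ X := by
                refine ENNReal.ofReal_le_ofReal ?_
                rw [← Real.exp_add]
                exact Real.exp_le_exp.mpr (by linarith [e2 X hX.1])
      _ = p θ₁ (Bᶜ ∩ s) := (hm₁ (hBmeas.compl.inter hs)).symm
      _ ≤ p θ₁ s := measure_mono Set.inter_subset_right
  -- lower bound on rnDeriv (p θ₂) (p θ₁)
  have hUcrit : (Bᶜ.indicator fun X => ENNReal.ofReal (Real.exp (-c + G X)))
      ≤ᵐ[p θ₁] (p θ₂).rnDeriv (p θ₁) := by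
    refine ae_le_of_forall_setLIntegral_le_of_sigmaFinite (hmw2.indicator hBmeas.compl)
      fun s hs _ => ?_
    rw [setLIntegral_indicator hBmeas.compl]
    obtain ⟨t, htm, ht1, ht2⟩ := Measure.mutuallySingular_singularPart (p θ₂) (p θ₁)
    have step1 : ∫⁻ X in Bᶜ ∩ s, ENNReal.ofReal (Real.exp (-c + G X)) ∂(p θ₁)
        ≤ p θ₂ (Bᶜ ∩ s) := by
      calc ∫⁻ X in Bᶜ ∩ s, ENNReal.ofReal (Real.exp (-c + G X)) ∂(p θ₁)
          ≤ ∫⁻ X in Bᶜ ∩ s, ENNReal.ofReal (Real.exp (-c + G X)) * h₁ X ∂μ :=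
            hwd₁ (hBmeas.compl.inter hs) hmw2
        _ ≤ ∫⁻ X in Bᶜ ∩ s, h₂ X ∂μ := by
            refine my_setLIntegral_mono (hBmeas.compl.inter hs) fun X hX => ?_
            calc ENNReal.ofReal (Real.exp (-c + G X)) * h₁ X
                = ENNReal.ofReal (Real.exp (-c + G X) * Real.exp (f X θ₁)) :=
                  (ENNReal.ofReal_mul (Real.exp_nonneg _)).symm
              _ ≤ h₂ X := by
                  refine ENNReal.ofReal_le_ofReal ?_
                  rw [← Real.exp_add]
                  exact Real.exp_le_exp.mpr (by linarith [e1 X hX.1])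
        _ = p θ₂ (Bᶜ ∩ s) := (hm₂ (hBmeas.compl.inter hs)).symm
    have step2 : p θ₂ (Bᶜ ∩ s) ≤ ∫⁻ X in s, (p θ₂).rnDeriv (p θ₁) X ∂(p θ₁) := by
      have hsub : Bᶜ ∩ s ⊆ ((Bᶜ ∩ s) ∩ t) ∪ (tᶜ ∩ Bᶜ) := by
        intro X hX
        by_cases hXt : X ∈ t
        · exact Or.inl ⟨hX, hXt⟩
        · exact Or.inr ⟨hXt, hX.1⟩
      calc p θ₂ (Bᶜ ∩ s)
          ≤ p θ₂ (((Bᶜ ∩ s) ∩ t) ∪ (tᶜ ∩ Bᶜ)) := measure_mono hsub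
        _ ≤ p θ₂ ((Bᶜ ∩ s) ∩ t) + p θ₂ (tᶜ ∩ Bᶜ) := measure_union_le _ _
        _ = p θ₂ ((Bᶜ ∩ s) ∩ t) := by
            rw [hac2 tᶜ htm.compl ht2, add_zero]
        _ ≤ ∫⁻ X in s, (p θ₂).rnDeriv (p θ₁) X ∂(p θ₁) := by
            conv_lhs => rw [(p θ₂).haveLebesgueDecomposition_add (p θ₁)]
            rw [Measure.add_apply]
            have hz : (p θ₂).singularPart (p θ₁) ((Bᶜ ∩ s) ∩ t) = 0 :=
              measure_mono_null Set.inter_subset_right ht1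
            rw [hz, zero_add]
            calc ((p θ₁).withDensity ((p θ₂).rnDeriv (p θ₁))) ((Bᶜ ∩ s) ∩ t)
                ≤ ((p θ₁).withDensity ((p θ₂).rnDeriv (p θ₁))) s :=
                  measure_mono fun X hX => hX.1.2
              _ = ∫⁻ X in s, (p θ₂).rnDeriv (p θ₁) X ∂(p θ₁) :=
                  withDensity_apply _ hs
    exact step1.trans step2
  have hBae : ∀ᵐ X ∂(p θ₁), X ∈ Bᶜ := compl_mem_ae_iff.mpr hB0
  have hL : ∀ᵐ X ∂(p θ₁),
      ENNReal.ofReal (Real.exp (-c - G X)) ≤ (p θ₁).rnDeriv (p θ₂) X := by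
    filter_upwards [hac.ae_le hLcrit, hBae] with X h1 h2
    rwa [Set.indicator_of_mem h2] at h1
  have hU : ∀ᵐ X ∂(p θ₁),
      (p θ₁).rnDeriv (p θ₂) X ≤ ENNReal.ofReal (Real.exp (c - G X)) := by
    filter_upwards [hUcrit, Measure.inv_rnDeriv hac, hBae] with X h1 h2 h3
    rw [Set.indicator_of_mem h3] at h1
    have h4 : ENNReal.ofReal (Real.exp (-c + G X)) ≤ ((p θ₁).rnDeriv (p θ₂) X)⁻¹ := by
      rw [show ((p θ₁).rnDeriv (p θ₂) X)⁻¹ = ((p θ₁).rnDeriv (p θ₂))⁻¹ X from rfl, h2]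
      exact h1
    have h5 : (p θ₁).rnDeriv (p θ₂) X ≤ (ENNReal.ofReal (Real.exp (-c + G X)))⁻¹ := by
      rw [← inv_inv ((p θ₁).rnDeriv (p θ₂) X)]
      exact ENNReal.inv_le_inv' h4
    refine h5.trans_eq ?_
    rw [← ENNReal.ofReal_inv_of_pos (Real.exp_pos _), ← Real.exp_neg]
    congr 1
    ring
  -- sandwich for llr
  have hsand : ∀ᵐ X ∂(p θ₁), -c - G X ≤ llr (p θ₁) (p θ₂) X
      ∧ llr (p θ₁) (p θ₂) X ≤ c - G X := by
    filter_upwards [hL, hU] with X h1 h2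
    have hne : (p θ₁).rnDeriv (p θ₂) X ≠ ⊤ := (h2.trans_lt ENNReal.ofReal_lt_top).ne
    have hlow : Real.exp (-c - G X) ≤ ((p θ₁).rnDeriv (p θ₂) X).toReal :=
      (ENNReal.ofReal_le_iff_le_toReal hne).mp h1
    have hup : ((p θ₁).rnDeriv (p θ₂) X).toReal ≤ Real.exp (c - G X) :=
      ENNReal.toReal_le_of_le_ofReal (Real.exp_nonneg _) h2
    have hpos : 0 < ((p θ₁).rnDeriv (p θ₂) X).toReal :=
      lt_of_lt_of_le (Real.exp_pos _) hlow
    constructor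
    · calc -c - G X = Real.log (Real.exp (-c - G X)) := (Real.log_exp _).symm
        _ ≤ llr (p θ₁) (p θ₂) X :=
            (Real.log_le_log_iff (Real.exp_pos _) hpos).mpr hlow
    · calc llr (p θ₁) (p θ₂) X
          ≤ Real.log (Real.exp (c - G X)) :=
            (Real.log_le_log_iff hpos (Real.exp_pos _)).mpr hup
        _ = c - G X := Real.log_exp _
  -- integrability
  have hGint : Integrable G (p θ₁) := by
    have h0 : Integrable (fun X => ⟪gradient (f X) θ₁, v⟫) (p θ₁) :=
      (hgrad_int θ₁ hθ₁).inner_const v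
    refine h0.congr ?_
    filter_upwards [hg'ae] with X hX
    rw [hX]
  have hllrint : Integrable (llr (p θ₁) (p θ₂)) (p θ₁) := by
    have hmaj : Integrable (fun X => c + |G X|) (p θ₁) := (integrable_const c).add hGint.abs
    refine hmaj.mono ((measurable_llr _ _).aestronglyMeasurable) ?_
    filter_upwards [hsand] with X hX
    obtain ⟨hX1, hX2⟩ := hX
    have ha1 : -(c + |G X|) ≤ llr (p θ₁) (p θ₂) X := by
      have hq := neg_abs_le (G X); have hq2 := le_abs_self (G X); linarith
    have ha2 : llr (p θ₁) (p θ₂) X ≤ c + |G X| := by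
      have hq := neg_abs_le (G X); have hq2 := le_abs_self (G X); linarith
    have : |llr (p θ₁) (p θ₂) X| ≤ c + |G X| := abs_le.mpr ⟨ha1, ha2⟩
    calc ‖llr (p θ₁) (p θ₂) X‖ = |llr (p θ₁) (p θ₂) X| := Real.norm_eq_abs _
      _ ≤ c + |G X| := this
      _ ≤ abs (c + abs (G X)) := le_abs_self _
      _ = ‖c + ‖G X‖‖ := by rw [Real.norm_eq_abs, Real.norm_eq_abs]
  -- bounding the integral
  have hGzero : ∫ X, G X ∂(p θ₁) = 0 := by
    have h1 : ∫ X, G X ∂(p θ₁) = ∫ X, ⟪v, g' X⟫ ∂(p θ₁) := by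
      refine integral_congr_ae (Filter.Eventually.of_forall fun X => ?_)
      exact real_inner_comm _ _
    have h2 : Integrable g' (p θ₁) := (hgrad_int θ₁ hθ₁).congr hg'ae
    rw [h1, integral_inner h2 v]
    have h3 : ∫ X, g' X ∂(p θ₁) = 0 := by
      rw [← integral_congr_ae hg'ae]
      exact hcentered θ₁ hθ₁
    rw [h3, inner_zero_right]
  have hub : Integrable (fun X => c - G X) (p θ₁) := (integrable_const c).sub hGint
  have hint_val : ∫ X, llr (p θ₁) (p θ₂) X ∂(p θ₁) ≤ c := by
    have hmono : ∫ X, llr (p θ₁) (p θ₂) X ∂(p θ₁) ≤ ∫ X, (c - G X) ∂(p θ₁) := by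
      refine integral_mono_ae hllrint hub ?_
      filter_upwards [hsand] with X hX
      exact hX.2
    calc ∫ X, llr (p θ₁) (p θ₂) X ∂(p θ₁) ≤ ∫ X, (c - G X) ∂(p θ₁) := hmono
      _ = c := by
          rw [integral_sub (integrable_const c) hGint, hGzero, sub_zero, integral_const,
            probReal_univ]
          simp
  -- conclusion
  have hdist : dist θ₂ θ₁ = ‖v‖ := dist_eq_norm _ _
  rw [klDiv', if_pos ⟨hac, hllrint⟩, hdist]
  exact ENNReal.ofReal_le_ofReal hint_val
end
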